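/- arXiv:1710.11330 — 5 statements merged into one kernel-verified Lean document; each statement's English description precedes it below -/
import Mathlib

section
/- Let W be a finite subset of Z_+^d, and for each u in W let n(u) ≥ 1 be an integer. Then there exists a subset W' ⊆ W such that the translated cubes {u + S_{n(u)} : u ∈ W'} are pairwise disjoint, and 3^d · Σ_{u ∈ W'} |S_{n(u)}| ≥ |W|. -/
/-- The discrete hypercube `S_n = {0,...,n-1}^d` in `ℤ₊^d` (modeled as `Fin d → ℕ`). -/
def cubeN (d n : ℕ) : Finset (Fin d → ℕ) := Fintype.piFinset fun _ => Finset.range n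

/-- The translate `u + S_n` of the cube. -/
def transCube {d : ℕ} (u : Fin d → ℕ) (n : ℕ) : Finset (Fin d → ℕ) :=
  (cubeN d n).image fun x => u + x

lemma cubeN_card (d m : ℕ) : (cubeN d m).card = m ^ d := by
  simp [cubeN, Fintype.card_piFinset]

lemma cubeN_nonempty (d : ℕ) {m : ℕ} (hm : 1 ≤ m) : (cubeN d m).Nonempty :=
  ⟨0, by simp [cubeN, Fintype.mem_piFinset]; omega⟩

lemma transCube_nonempty {d : ℕ} (u : Fin d → ℕ) {m : ℕ} (hm : 1 ≤ m) :
    (transCube u m).Nonempty :=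
  ((cubeN_nonempty d hm).image _)

lemma not_disjoint_bounds {d : ℕ} {u v : Fin d → ℕ} {a b : ℕ}
    (hab : a ≤ b) (h : ¬ Disjoint (transCube v a) (transCube u b)) :
    ∀ i, u i ≤ v i + (b - 1) ∧ v i ≤ u i + (b - 1) := by
  obtain ⟨p, hp1, hp2⟩ := Finset.not_disjoint_iff.mp h
  simp only [transCube, Finset.mem_image, cubeN, Fintype.mem_piFinset, Finset.mem_range]
    at hp1 hp2
  obtain ⟨x, hx, rfl⟩ := hp1
  obtain ⟨y, hy, hvy⟩ := hp2
  intro i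
  have h1 := hx i
  have h2 := hy i
  have h3 := congrFun hvy i
  simp only [Pi.add_apply] at h3
  omega

lemma card_bad {d m : ℕ} (hm : 1 ≤ m) (u : Fin d → ℕ) (B : Finset (Fin d → ℕ))
    (hB : ∀ v ∈ B, ∀ i, u i ≤ v i + (m - 1) ∧ v i ≤ u i + (m - 1)) :
    B.card ≤ 3 ^ d * m ^ d := by
  have key : B.card ≤ (2 * m - 1) ^ d := by
    have h : B.card ≤ (Fintype.piFinset fun _ : Fin d => Finset.range (2 * m - 1)).card := by
      apply Finset.card_le_card_of_injOn (fun v i => v i + (m - 1) - u i)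
      · intro v hv
        simp only [Finset.mem_coe, Fintype.mem_piFinset, Finset.mem_range]
        intro i
        have := hB v hv i
        omega
      · intro v hv w hw hvw
        funext i
        have h1 := (hB v hv i).1
        have h2 := (hB w hw i).1
        have h3 := congrFun hvw i
        simp only at h3
        omega
    simpa [Fintype.card_piFinset] using h
  calc B.card ≤ (2 * m - 1) ^ d := key
    _ ≤ (3 * m) ^ d := Nat.pow_le_pow_left (by omega) d
    _ = 3 ^ d * m ^ d := by rw [Nat.mul_pow]

lemma covering_aux (d : ℕ) (n : (Fin d → ℕ) → ℕ) :
    ∀ N (W : Finset (Fin d → ℕ)), W.card ≤ N → (∀ u ∈ W, 1 ≤ n u) →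
    ∃ W' ⊆ W,
      (∀ u ∈ W', ∀ v ∈ W', u ≠ v → Disjoint (transCube u (n u)) (transCube v (n v))) ∧
      W.card ≤ 3 ^ d * ∑ u ∈ W', (cubeN d (n u)).card := by
  intro N
  induction N with
  | zero =>
    intro W hW _
    have : W = ∅ := Finset.card_eq_zero.mp (Nat.le_zero.mp hW)
    subst this
    exact ⟨∅, Finset.Subset.refl _, by simp, by simp⟩
  | succ N ih =>
    intro W hW hn
    rcases W.eq_empty_or_nonempty with rfl | hne
    · exact ⟨∅, Finset.Subset.refl _, by simp, by simp⟩
    obtain ⟨u, hu, hmax⟩ := W.exists_max_image n hne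
    have hnu : 1 ≤ n u := hn u hu
    set B := W.filter (fun v => ¬ Disjoint (transCube v (n v)) (transCube u (n u))) with hBdef
    have huB : u ∈ B := by
      refine Finset.mem_filter.mpr ⟨hu, ?_⟩
      rw [Finset.disjoint_self_iff_empty]
      exact (transCube_nonempty u hnu).ne_empty
    have hBsub : B ⊆ W := Finset.filter_subset _ _
    have hsd : (W \ B).card ≤ N := by
      have := Finset.card_sdiff_add_card_eq_card hBsub
      have hBpos : 1 ≤ B.card := Finset.card_pos.mpr ⟨u, huB⟩
      omega
    obtain ⟨W'', hW''sub, hdisj, hcard⟩ := ih (W \ B) hsd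
      (fun v hv => hn v (Finset.mem_sdiff.mp hv).1)
    have hW''W : W'' ⊆ W := hW''sub.trans (Finset.sdiff_subset)
    have huW'' : u ∉ W'' := fun h => (Finset.mem_sdiff.mp (hW''sub h)).2 huB
    have hdisjU : ∀ v ∈ W'', Disjoint (transCube v (n v)) (transCube u (n u)) := by
      intro v hv
      have hvB : v ∉ B := (Finset.mem_sdiff.mp (hW''sub hv)).2
      by_contra hc
      exact hvB (Finset.mem_filter.mpr ⟨hW''W hv, hc⟩)
    refine ⟨insert u W'', Finset.insert_subset hu hW''W, ?_, ?_⟩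
    · intro a ha b hb hab
      rcases Finset.mem_insert.mp ha with rfl | ha'
      · rcases Finset.mem_insert.mp hb with rfl | hb'
        · exact absurd rfl hab
        · exact (hdisjU b hb').symm
      · rcases Finset.mem_insert.mp hb with rfl | hb'
        · exact hdisjU a ha'
        · exact hdisj a ha' b hb' hab
    · have hBcard : B.card ≤ 3 ^ d * (n u) ^ d := by
        apply card_bad hnu u
        intro v hv i
        have hvW := hBsub hv
        have hle : n v ≤ n u := hmax v hvW
        have hnd : ¬ Disjoint (transCube v (n v)) (transCube u (n u)) :=
          (Finset.mem_filter.mp hv).2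
        exact not_disjoint_bounds hle hnd i
      have hsum : ∑ v ∈ insert u W'', (cubeN d (n v)).card
          = (n u) ^ d + ∑ v ∈ W'', (cubeN d (n v)).card := by
        rw [Finset.sum_insert huW'', cubeN_card]
      have h1 := Finset.card_sdiff_add_card_eq_card hBsub
      rw [hsum, Nat.mul_add]
      omega

/-- **Covering lemma** (Lemma 3.1 of Akcoglu–Krengel): given a finite set `W ⊆ ℤ₊^d`
and integers `n(u) ≥ 1` for `u ∈ W`, there is `W' ⊆ W` such that the translated cubes
`u + S_{n(u)}`, `u ∈ W'`, are pairwise disjoint and `3^d · Σ_{u∈W'} |S_{n(u)}| ≥ |W|`. -/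
theorem covering_lemma (d : ℕ) (W : Finset (Fin d → ℕ)) (n : (Fin d → ℕ) → ℕ)
    (hn : ∀ u ∈ W, 1 ≤ n u) :
    ∃ W' ⊆ W,
      (∀ u ∈ W', ∀ v ∈ W', u ≠ v → Disjoint (transCube u (n u)) (transCube v (n v))) ∧
      W.card ≤ 3 ^ d * ∑ u ∈ W', (cubeN d (n u)).card :=
  covering_aux d n W.card W le_rfl hn
end

section
/- Let F be a nonnegative almost superadditive random process relative to a measure-preserving semigroup (τ_u)_{u∈Z_+^d} on a probability space, with almost-superadditivity defect controlled by an integrable random variable A, and set γ̃(F) = limsup_{n→∞} (1/|S_n|) E[F_{S_n}]. Then for any α > 0, the probability of the event {ω : limsup_n (1/|S_n|) F_{S_n}(ω) > α} is at most 3^d · γ̃(F) / α. -/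
open MeasureTheory Filter

open Topology

/-- Adjacency in `ℤ₊^d`: `x ∼ y` iff their `l¹`-distance is 1. -/
def adjN {d : ℕ} (x y : Fin d → ℕ) : Prop := (∑ i, ((x i : ℤ) - (y i : ℤ)).natAbs) = 1

/-- A box in `ℤ₊^d`: a product of intervals `[aᵢ, bᵢ)` with `aᵢ < bᵢ`. -/
def IsBoxN {d : ℕ} (B : Finset (Fin d → ℕ)) : Prop :=
  ∃ a b : Fin d → ℕ, (∀ i, a i < b i) ∧ B = Fintype.piFinset fun i => Finset.Ico (a i) (b i)

/-- The inner boundary `∂B = {x ∈ B : ∃ y ∉ B, x ∼ y}`. -/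
noncomputable def ibdN {d : ℕ} (B : Finset (Fin d → ℕ)) : Finset (Fin d → ℕ) :=
  @Finset.filter _ (fun x => ∃ y, y ∉ B ∧ adjN x y) (Classical.decPred _) B

/-- An almost superadditive random process `F = (F_B)` indexed by boxes of `ℤ₊^d`,
relative to a measure-preserving semigroup `(τ_u)` and with defect random variable `A`. -/
structure AlmostSuperadditive {d : ℕ} {Ω : Type*} [MeasurableSpace Ω] (μ : Measure Ω)
    (τ : (Fin d → ℕ) → Ω → Ω) (F : Finset (Fin d → ℕ) → Ω → ℝ) (A : Ω → ℝ) : Prop where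
  meas : ∀ u, MeasurePreserving (τ u) μ μ
  semigroup : ∀ u v, τ (u + v) = τ u ∘ τ v
  int : ∀ B, IsBoxN B → Integrable (F B) μ
  shift : ∀ (u : Fin d → ℕ) (B : Finset (Fin d → ℕ)), IsBoxN B →
    F (B.image fun x => u + x) = (F B) ∘ (τ u)
  Anonneg : ∀ ω, 0 ≤ A ω
  Aint : Integrable A μ
  superadd : ∀ (k : ℕ) (Bs : Fin k → Finset (Fin d → ℕ)),
    (∀ i, IsBoxN (Bs i)) →
    (∀ i j, i ≠ j → Disjoint (Bs i) (Bs j)) →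
    IsBoxN (Finset.univ.biUnion Bs) →
    ∀ ω, (∑ i, F (Bs i) ω) - A ω * (∑ i, ((ibdN (Bs i)).card : ℝ))
      ≤ F (Finset.univ.biUnion Bs) ω


/-! ### Auxiliary machinery -/
section Aux


def boxNN {d : ℕ} (a b : Fin d → ℕ) : Finset (Fin d → ℕ) :=
  Fintype.piFinset fun i => Finset.Ico (a i) (b i)

lemma mem_boxNN {d : ℕ} {a b y : Fin d → ℕ} :
    y ∈ boxNN a b ↔ ∀ i, a i ≤ y i ∧ y i < b i := by
  simp [boxNN, Fintype.mem_piFinset, Finset.mem_Ico]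

lemma boxNN_isBox {d : ℕ} {a b : Fin d → ℕ} (h : ∀ i, a i < b i) : IsBoxN (boxNN a b) :=
  ⟨a, b, h, rfl⟩

lemma card_boxNN {d : ℕ} (a b : Fin d → ℕ) : (boxNN a b).card = ∏ i, (b i - a i) := by
  simp [boxNN, Fintype.card_piFinset, Nat.card_Ico]

lemma cubeN_eq {d n : ℕ} : cubeN d n = boxNN (fun _ => 0) (fun _ => n) := by
  ext y; simp [cubeN, boxNN, Fintype.mem_piFinset]

lemma card_cubeN {d n : ℕ} : (cubeN d n).card = n ^ d := by
  rw [cubeN_eq, card_boxNN]; simp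

lemma cubeN_isBox {d n : ℕ} (hn : 1 ≤ n) : IsBoxN (cubeN d n) := by
  rw [cubeN_eq]; exact boxNN_isBox fun i => hn

lemma boxNN_nonempty {d : ℕ} {a b : Fin d → ℕ} (h : ∀ i, a i < b i) : (boxNN a b).Nonempty := by
  rw [← Finset.card_pos, card_boxNN]
  exact Finset.prod_pos fun i _ => Nat.sub_pos_of_lt (h i)

lemma nonempty_boxNN_iff {d : ℕ} {a b : Fin d → ℕ} :
    (boxNN a b).Nonempty ↔ ∀ i, a i < b i := by
  constructor
  · rintro ⟨y, hy⟩ i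
    rw [mem_boxNN] at hy
    exact lt_of_le_of_lt (hy i).1 (hy i).2
  · exact boxNN_nonempty

lemma image_add_boxNN {d : ℕ} (u a b : Fin d → ℕ) :
    (boxNN a b).image (fun x => u + x) = boxNN (u + a) (u + b) := by
  ext y
  simp only [Finset.mem_image, mem_boxNN]
  constructor
  · rintro ⟨z, hz, rfl⟩ i
    exact ⟨Nat.add_le_add_left (hz i).1 _, Nat.add_lt_add_left (hz i).2 _⟩
  · intro hy
    refine ⟨fun i => y i - u i, fun i => ?_, ?_⟩
    · have h1 := (hy i).1; have h2 := (hy i).2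
      simp only [Pi.add_apply] at h1 h2
      show a i ≤ y i - u i ∧ y i - u i < b i
      omega
    · funext i
      have h1 := (hy i).1
      simp only [Pi.add_apply] at h1
      show u i + (y i - u i) = y i
      omega

lemma image_add_cubeN {d n : ℕ} (u : Fin d → ℕ) :
    (cubeN d n).image (fun x => u + x) = boxNN u (fun i => u i + n) := by
  rw [cubeN_eq, image_add_boxNN]
  ext y; simp [mem_boxNN]

lemma mem_ibdN {d : ℕ} {B : Finset (Fin d → ℕ)} {x : Fin d → ℕ} :
    x ∈ ibdN B ↔ x ∈ B ∧ ∃ y, y ∉ B ∧ adjN x y := by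
  unfold ibdN; exact @Finset.mem_filter _ _ (Classical.decPred _) _ _

lemma ibdN_subset {d : ℕ} (B : Finset (Fin d → ℕ)) : ibdN B ⊆ B :=
  fun _ hx => (mem_ibdN.mp hx).1

lemma ibdN_card_le {d : ℕ} (B : Finset (Fin d → ℕ)) : (ibdN B).card ≤ B.card :=
  Finset.card_le_card (ibdN_subset B)



lemma adjN_structure {x y : Fin d → ℕ} (h : adjN x y) :
    ∃ i, (∀ j, j ≠ i → x j = y j) ∧ (y i = x i + 1 ∨ x i = y i + 1) := by
  classical
  unfold adjN at h
  set f : Fin d → ℕ := fun j => ((x j : ℤ) - (y j : ℤ)).natAbs with hf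
  have hex : ∃ i, f i ≠ 0 := by
    by_contra hc
    push_neg at hc
    rw [Finset.sum_eq_zero (fun i _ => hc i)] at h
    exact one_ne_zero h.symm
  obtain ⟨i, hi⟩ := hex
  have hle : f i ≤ 1 := h ▸ Finset.single_le_sum (fun j _ => Nat.zero_le _) (Finset.mem_univ i)
  have hfi : f i = 1 := le_antisymm hle (Nat.one_le_iff_ne_zero.mpr hi)
  have hrest : ∑ j ∈ Finset.univ.erase i, f j = 0 := by
    rw [← Finset.sum_erase_add Finset.univ f (Finset.mem_univ i)] at h
    omega
  refine ⟨i, fun j hj => ?_, ?_⟩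
  · have : f j = 0 := by
      have := Finset.sum_eq_zero_iff.mp hrest j (Finset.mem_erase.mpr ⟨hj, Finset.mem_univ j⟩)
      exact this
    simp only [hf] at this
    omega
  · simp only [hf] at hfi
    omega

lemma ibdN_boxNN_card_mul_le {k : ℕ} (hk : 0 < k) (a b : Fin d → ℕ)
    (hab : ∀ i, a i + k ≤ b i) :
    (ibdN (boxNN a b)).card * k ≤ 2 * d * (boxNN a b).card := by
  classical
  set B := boxNN a b with hB
  set lo : Fin d → Finset (Fin d → ℕ) := fun i => B.filter (fun x => x i = a i) with hlo
  set hi : Fin d → Finset (Fin d → ℕ) := fun i => B.filter (fun x => x i + 1 = b i) with hhi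
  have hsub : ibdN B ⊆ Finset.univ.biUnion (fun i => lo i ∪ hi i) := by
    intro x hx
    obtain ⟨hxB, y, hyB, hadj⟩ := mem_ibdN.mp hx
    obtain ⟨i, hagree, hstep⟩ := adjN_structure hadj
    have hxm := mem_boxNN.mp hxB
    have hyi : ¬ (a i ≤ y i ∧ y i < b i) := by
      intro hyi
      apply hyB
      rw [mem_boxNN]
      intro j
      by_cases hj : j = i
      · subst hj; exact hyi
      · rw [← hagree j hj]; exact hxm j
    rw [Finset.mem_biUnion]
    refine ⟨i, Finset.mem_univ i, ?_⟩
    rw [Finset.mem_union]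
    rcases hstep with h1 | h1
    · right
      rw [hhi]
      refine Finset.mem_filter.mpr ⟨hxB, ?_⟩
      have := hxm i
      omega
    · left
      rw [hlo]
      refine Finset.mem_filter.mpr ⟨hxB, ?_⟩
      have := hxm i
      omega
  -- card of each face
  have face_card : ∀ i : Fin d, (lo i).card * k ≤ B.card ∧ (hi i).card * k ≤ B.card := by
    intro i
    have hgi : k ≤ b i - a i := by have := hab i; omega
    have hbi1 : 1 ≤ b i := by have := hab i; omega
    set g : Fin d → ℕ := fun j => b j - a j with hg
    have hprod : (∏ j ∈ Finset.univ.erase i, g j) * g i = B.card := by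
      rw [hB, card_boxNN]
      rw [mul_comm, Finset.mul_prod_erase Finset.univ g (Finset.mem_univ i)]
    have key : ∀ s : Finset (Fin d → ℕ), s.card ≤ ∏ j ∈ Finset.univ.erase i, g j →
        s.card * k ≤ B.card := by
      intro s hs
      calc s.card * k ≤ (∏ j ∈ Finset.univ.erase i, g j) * k := Nat.mul_le_mul_right _ hs
        _ ≤ (∏ j ∈ Finset.univ.erase i, g j) * g i := Nat.mul_le_mul_left _ hgi
        _ = B.card := hprod
    constructor
    · apply key
      have hsub2 : lo i ⊆ boxNN a (Function.update b i (a i + 1)) := by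
        intro x hx
        obtain ⟨hxB, hxi⟩ := Finset.mem_filter.mp hx
        have hxm := mem_boxNN.mp hxB
        rw [mem_boxNN]
        intro j
        by_cases hj : j = i
        · subst hj; simp [Function.update_self]; omega
        · rw [Function.update_of_ne hj]; exact hxm j
      calc (lo i).card ≤ (boxNN a (Function.update b i (a i + 1))).card :=
            Finset.card_le_card hsub2
        _ = ∏ j ∈ Finset.univ.erase i, g j := by
            rw [card_boxNN]
            have : (fun j => Function.update b i (a i + 1) j - a j) = Function.update g i 1 := by
              funext j
              by_cases hj : j = i
              · subst hj; simp [Function.update_self]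
              · simp [Function.update_of_ne hj, hg]
            rw [this, Finset.prod_update_of_mem (Finset.mem_univ i), one_mul, ← Finset.erase_eq]
    · apply key
      have hsub2 : hi i ⊆ boxNN (Function.update a i (b i - 1)) b := by
        intro x hx
        obtain ⟨hxB, hxi⟩ := Finset.mem_filter.mp hx
        have hxm := mem_boxNN.mp hxB
        rw [mem_boxNN]
        intro j
        by_cases hj : j = i
        · subst hj; simp [Function.update_self]; omega
        · rw [Function.update_of_ne hj]; exact hxm j
      calc (hi i).card ≤ (boxNN (Function.update a i (b i - 1)) b).card :=
            Finset.card_le_card hsub2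
        _ = ∏ j ∈ Finset.univ.erase i, g j := by
            rw [card_boxNN]
            have : (fun j => b j - Function.update a i (b i - 1) j) = Function.update g i 1 := by
              funext j
              by_cases hj : j = i
              · subst hj; simp [Function.update_self]; omega
              · simp [Function.update_of_ne hj, hg]
            rw [this, Finset.prod_update_of_mem (Finset.mem_univ i), one_mul, ← Finset.erase_eq]
  calc (ibdN B).card * k ≤ (Finset.univ.biUnion (fun i => lo i ∪ hi i)).card * k :=
        Nat.mul_le_mul_right _ (Finset.card_le_card hsub)
    _ ≤ (∑ i : Fin d, (lo i ∪ hi i).card) * k :=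
        Nat.mul_le_mul_right _ (Finset.card_biUnion_le)
    _ ≤ (∑ i : Fin d, ((lo i).card + (hi i).card)) * k :=
        Nat.mul_le_mul_right _ (Finset.sum_le_sum fun i _ => Finset.card_union_le _ _)
    _ = ∑ i : Fin d, ((lo i).card * k + (hi i).card * k) := by
        rw [Finset.sum_mul]; congr 1; funext i; ring
    _ ≤ ∑ i : Fin d, (B.card + B.card) :=
        Finset.sum_le_sum fun i _ => Nat.add_le_add (face_card i).1 (face_card i).2
    _ = 2 * d * B.card := by
        rw [Finset.sum_const, Finset.card_univ, Fintype.card_fin]; ring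


lemma isBoxN_of_nonempty {d : ℕ} {a b : Fin d → ℕ} (h : (boxNN a b).Nonempty) :
    IsBoxN (boxNN a b) := boxNN_isBox (nonempty_boxNN_iff.mp h)

variable {d : ℕ} {Ω : Type*} [MeasurableSpace Ω] {μ : Measure Ω}
  {τ : (Fin d → ℕ) → Ω → Ω} {F : Finset (Fin d → ℕ) → Ω → ℝ} {A : Ω → ℝ}

lemma superadd_finset (hF : AlmostSuperadditive μ τ F A) {ι : Type*} [DecidableEq ι]
    (s : Finset ι) (Bs : ι → Finset (Fin d → ℕ))
    (hbox : ∀ i ∈ s, IsBoxN (Bs i))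
    (hdisj : ∀ i ∈ s, ∀ j ∈ s, i ≠ j → Disjoint (Bs i) (Bs j))
    (hun : IsBoxN (s.biUnion Bs)) (ω : Ω) :
    (∑ i ∈ s, F (Bs i) ω) - A ω * (∑ i ∈ s, ((ibdN (Bs i)).card : ℝ))
      ≤ F (s.biUnion Bs) ω := by
  classical
  set e := s.equivFin with he
  set Bs' : Fin s.card → Finset (Fin d → ℕ) := fun i => Bs (e.symm i) with hBs'
  have hsum : ∀ f : ι → ℝ, ∑ i : Fin s.card, f ((e.symm i : ι)) = ∑ i ∈ s, f i := by
    intro f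
    rw [← Finset.sum_coe_sort s f]
    exact Equiv.sum_comp e.symm (fun x : ↥s => f (x : ι))
  have h1 : ∀ i, IsBoxN (Bs' i) := fun i => hbox _ (e.symm i).2
  have h2 : ∀ i j, i ≠ j → Disjoint (Bs' i) (Bs' j) := by
    intro i j hij
    refine hdisj _ (e.symm i).2 _ (e.symm j).2 ?_
    intro hc
    exact hij (by simpa using congrArg e (Subtype.ext hc : e.symm i = e.symm j))
  have h3 : Finset.univ.biUnion Bs' = s.biUnion Bs := by
    ext z
    simp only [Finset.mem_biUnion, Finset.mem_univ, true_and, hBs']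
    constructor
    · rintro ⟨i, hi⟩; exact ⟨e.symm i, (e.symm i).2, hi⟩
    · rintro ⟨i, hi, hz⟩
      exact ⟨e ⟨i, hi⟩, by simpa using hz⟩
  have h4 := hF.superadd s.card Bs' h1 h2 (h3 ▸ hun) ω
  rw [h3] at h4
  calc (∑ i ∈ s, F (Bs i) ω) - A ω * (∑ i ∈ s, ((ibdN (Bs i)).card : ℝ))
      = (∑ i, F (Bs' i) ω) - A ω * (∑ i, ((ibdN (Bs' i)).card : ℝ)) := by
        rw [hsum (fun i => F (Bs i) ω), hsum (fun i => ((ibdN (Bs i)).card : ℝ))]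
    _ ≤ _ := h4

end Aux

/-- lower slab pieces -/
def loB {d : ℕ} (a b x y : Fin d → ℕ) (i : Fin d) : Finset (Fin d → ℕ) :=
  boxNN (fun j => if j < i then x j else a j)
    (fun j => if j < i then y j else if j = i then x j else b j)

/-- upper slab pieces -/
def hiB {d : ℕ} (a b x y : Fin d → ℕ) (i : Fin d) : Finset (Fin d → ℕ) :=
  boxNN (fun j => if j < i then x j else if j = i then y j else a j)
    (fun j => if j < i then y j else b j)

lemma mem_loB {d : ℕ} {a b x y : Fin d → ℕ} {i : Fin d} {z : Fin d → ℕ} :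
    z ∈ loB a b x y i ↔ ∀ j,
      (j < i → x j ≤ z j ∧ z j < y j) ∧ (j = i → a j ≤ z j ∧ z j < x j) ∧
      (i < j → a j ≤ z j ∧ z j < b j) := by
  rw [loB, mem_boxNN]
  apply forall_congr'
  intro j
  rcases lt_trichotomy j i with h | h | h
  · rw [if_pos h, if_pos h]
    simp [h, h.ne, asymm h]
  · subst h
    rw [if_neg (lt_irrefl _), if_neg (lt_irrefl _), if_pos rfl]
    simp [lt_irrefl]
  · rw [if_neg (asymm h), if_neg (asymm h), if_neg h.ne']
    simp [asymm h, h, h.ne']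

lemma mem_hiB {d : ℕ} {a b x y : Fin d → ℕ} {i : Fin d} {z : Fin d → ℕ} :
    z ∈ hiB a b x y i ↔ ∀ j,
      (j < i → x j ≤ z j ∧ z j < y j) ∧ (j = i → y j ≤ z j ∧ z j < b j) ∧
      (i < j → a j ≤ z j ∧ z j < b j) := by
  rw [hiB, mem_boxNN]
  apply forall_congr'
  intro j
  rcases lt_trichotomy j i with h | h | h
  · rw [if_pos h, if_pos h]
    simp [h, h.ne, asymm h]
  · subst h
    rw [if_neg (lt_irrefl _), if_neg (lt_irrefl _), if_pos rfl]
    simp [lt_irrefl]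
  · rw [if_neg (asymm h), if_neg (asymm h), if_neg h.ne']
    simp [asymm h, h, h.ne']

/-- the pieces of the decomposition of `boxNN a b` around the inner box `boxNN x y` -/
def pieceB {d : ℕ} (a b x y : Fin d → ℕ) : Option (Fin d × Bool) → Finset (Fin d → ℕ)
  | none => boxNN x y
  | some (i, false) => loB a b x y i
  | some (i, true) => hiB a b x y i

lemma pieceB_disj {d : ℕ} {a b x y : Fin d → ℕ} (hxy : ∀ i, x i < y i) :
    ∀ o₁ o₂, o₁ ≠ o₂ → Disjoint (pieceB a b x y o₁) (pieceB a b x y o₂) := by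
  have key : ∀ (i i' : Fin d) (σ σ' : Bool), (i, σ) ≠ (i', σ') → i ≤ i' →
      Disjoint (pieceB a b x y (some (i, σ))) (pieceB a b x y (some (i', σ'))) := by
    intro i i' σ σ' hne hle
    rw [Finset.disjoint_left]
    intro z hz hz'
    rcases lt_or_eq_of_le hle with hlt | rfl
    · have h2 : x i ≤ z i ∧ z i < y i := by
        cases σ' with
        | false => exact (mem_loB.mp hz' i).1 hlt
        | true => exact (mem_hiB.mp hz' i).1 hlt
      cases σ with
      | false => have := (mem_loB.mp hz i).2.1 rfl; omega
      | true => have := (mem_hiB.mp hz i).2.1 rfl; omega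
    · have hσ : σ ≠ σ' := by
        intro h; exact hne (by rw [h])
      cases σ with
      | false =>
        cases σ' with
        | false => exact hσ rfl
        | true =>
          have h1 := (mem_loB.mp hz i).2.1 rfl
          have h2 := (mem_hiB.mp hz' i).2.1 rfl
          have := hxy i; omega
      | true =>
        cases σ' with
        | false =>
          have h1 := (mem_hiB.mp hz i).2.1 rfl
          have h2 := (mem_loB.mp hz' i).2.1 rfl
          have := hxy i; omega
        | true => exact hσ rfl
  have keyc : ∀ (i : Fin d) (σ : Bool),
      Disjoint (pieceB a b x y none) (pieceB a b x y (some (i, σ))) := by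
    intro i σ
    rw [Finset.disjoint_left]
    intro z hz hz'
    have h1 := (mem_boxNN.mp hz) i
    cases σ with
    | false => have := (mem_loB.mp hz' i).2.1 rfl; omega
    | true => have := (mem_hiB.mp hz' i).2.1 rfl; omega
  rintro (_ | ⟨i, σ⟩) (_ | ⟨i', σ'⟩) hne
  · exact absurd rfl hne
  · exact keyc i' σ'
  · exact (keyc i σ).symm
  · rcases le_total i i' with hle | hle
    · exact key i i' σ σ' (fun h => hne (by rw [h])) hle
    · exact (key i' i σ' σ (fun h => hne (by rw [h])) hle).symm

lemma pieceB_subset {d : ℕ} {a b x y : Fin d → ℕ}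
    (hax : ∀ i, a i ≤ x i) (hxy : ∀ i, x i < y i) (hyb : ∀ i, y i ≤ b i) :
    ∀ o, pieceB a b x y o ⊆ boxNN a b := by
  rintro (_ | ⟨i, σ⟩) z hz
  · replace hz : z ∈ boxNN x y := hz
    rw [mem_boxNN] at hz ⊢
    intro j
    have h := hz j
    have := hax j; have := hxy j; have := hyb j
    omega
  · rw [mem_boxNN]
    intro j
    cases σ with
    | false =>
      have h := mem_loB.mp hz j
      rcases lt_trichotomy j i with hj | hj | hj
      · have := (h.1 hj); have := hax j; have := hyb j; omega
      · subst hj; have := h.2.1 rfl; have := hax j; have := hxy j; have := hyb j; omega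
      · exact h.2.2 hj
    | true =>
      have h := mem_hiB.mp hz j
      rcases lt_trichotomy j i with hj | hj | hj
      · have := (h.1 hj); have := hax j; have := hyb j; omega
      · subst hj; have := h.2.1 rfl; have := hax j; have := hxy j; have := hyb j; omega
      · exact h.2.2 hj

lemma pieceB_cover {d : ℕ} {a b x y : Fin d → ℕ} {z : Fin d → ℕ}
    (hz : z ∈ boxNN a b) :
    z ∈ boxNN x y ∨ ∃ i σ, z ∈ pieceB a b x y (some (i, σ)) := by
  classical
  have hzm := mem_boxNN.mp hz
  set t := Finset.univ.filter fun j : Fin d => ¬(x j ≤ z j ∧ z j < y j) with ht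
  by_cases hte : t = ∅
  · left
    rw [mem_boxNN]
    intro j
    by_contra hc
    exact absurd hte (Finset.ne_empty_of_mem (Finset.mem_filter.mpr ⟨Finset.mem_univ j, hc⟩))
  · right
    have htne : t.Nonempty := Finset.nonempty_of_ne_empty hte
    set i := t.min' htne with hi
    have hit : i ∈ t := t.min'_mem htne
    have hgood : ∀ j, j < i → x j ≤ z j ∧ z j < y j := by
      intro j hj
      by_contra hc
      exact absurd (t.min'_le j (Finset.mem_filter.mpr ⟨Finset.mem_univ j, hc⟩)) (not_le.mpr hj)
    have hbad : ¬(x i ≤ z i ∧ z i < y i) := (Finset.mem_filter.mp hit).2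
    by_cases hlo : z i < x i
    · refine ⟨i, false, ?_⟩
      rw [pieceB, mem_loB]
      intro j
      refine ⟨fun hj => hgood j hj, fun hj => ?_, fun hj => hzm j⟩
      subst hj
      exact ⟨(hzm i).1, hlo⟩
    · refine ⟨i, true, ?_⟩
      rw [pieceB, mem_hiB]
      intro j
      refine ⟨fun hj => hgood j hj, fun hj => ?_, fun hj => hzm j⟩
      subst hj
      have := hzm i
      omega

/-- Key decomposition estimate: `F` of an outer box dominates `F` of an inner box
up to boundary defects. -/
lemma nested_lower {d : ℕ} {Ω : Type*} [MeasurableSpace Ω] {μ : Measure Ω}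
    {τ : (Fin d → ℕ) → Ω → Ω} {F : Finset (Fin d → ℕ) → Ω → ℝ} {A : Ω → ℝ}
    (hF : AlmostSuperadditive μ τ F A)
    (hpos : ∀ B, IsBoxN B → ∀ ω, 0 ≤ F B ω)
    (a b x y : Fin d → ℕ) (hax : ∀ i, a i ≤ x i) (hxy : ∀ i, x i < y i)
    (hyb : ∀ i, y i ≤ b i) (ω : Ω) :
    F (boxNN x y) ω - A ω * (((ibdN (boxNN x y)).card : ℝ) +
        (((boxNN a b).card : ℝ) - ((boxNN x y).card : ℝ)))
      ≤ F (boxNN a b) ω := by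
  classical
  have hab : ∀ i, a i < b i := fun i =>
    lt_of_le_of_lt (hax i) (lt_of_lt_of_le (hxy i) (hyb i))
  set P := pieceB a b x y with hP
  set t := (Finset.univ : Finset (Fin d × Bool)).filter (fun p => (P (some p)).Nonempty) with htd
  set s := insert none (t.image some) with hs
  have hnone : (none : Option (Fin d × Bool)) ∉ t.image some := by
    simp
  have hBsbox : ∀ o ∈ s, IsBoxN (P o) := by
    intro o ho
    rw [hs, Finset.mem_insert] at ho
    rcases ho with rfl | ho
    · exact boxNN_isBox hxy
    · obtain ⟨p, hp, rfl⟩ := Finset.mem_image.mp ho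
      have hne := (Finset.mem_filter.mp hp).2
      obtain ⟨i, σ⟩ := p
      cases σ with
      | false => exact isBoxN_of_nonempty hne
      | true => exact isBoxN_of_nonempty hne
  have hdisj : ∀ o₁ ∈ s, ∀ o₂ ∈ s, o₁ ≠ o₂ → Disjoint (P o₁) (P o₂) :=
    fun o₁ _ o₂ _ h => pieceB_disj hxy o₁ o₂ h
  have hunion : s.biUnion P = boxNN a b := by
    ext z
    rw [Finset.mem_biUnion]
    constructor
    · rintro ⟨o, ho, hz⟩
      exact pieceB_subset hax hxy hyb o hz
    · intro hz
      rcases pieceB_cover (x := x) (y := y) hz with hc | ⟨i, σ, hc⟩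
      · exact ⟨none, Finset.mem_insert_self _ _, hc⟩
      · refine ⟨some (i, σ), ?_, hc⟩
        rw [hs, Finset.mem_insert]
        right
        exact Finset.mem_image.mpr ⟨(i, σ),
          Finset.mem_filter.mpr ⟨Finset.mem_univ _, ⟨z, hc⟩⟩, rfl⟩
  have hunbox : IsBoxN (s.biUnion P) := hunion ▸ boxNN_isBox hab
  have hsup := superadd_finset hF s P hBsbox hdisj hunbox ω
  rw [hunion] at hsup
  -- split sums over s = insert none (t.image some)
  have hsumF : ∑ o ∈ s, F (P o) ω = F (boxNN x y) ω + ∑ p ∈ t, F (P (some p)) ω := by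
    rw [hs, Finset.sum_insert hnone, Finset.sum_image (fun _ _ _ _ h => Option.some_injective _ h)]
    rfl
  have hsumC : ∑ o ∈ s, ((ibdN (P o)).card : ℝ)
      = ((ibdN (boxNN x y)).card : ℝ) + ∑ p ∈ t, ((ibdN (P (some p))).card : ℝ) := by
    rw [hs, Finset.sum_insert hnone, Finset.sum_image (fun _ _ _ _ h => Option.some_injective _ h)]
    rfl
  have hcards : (boxNN x y).card + ∑ p ∈ t, (P (some p)).card = (boxNN a b).card := by
    rw [← hunion, hs, Finset.card_biUnion]
    · rw [Finset.sum_insert hnone,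
        Finset.sum_image (fun _ _ _ _ h => Option.some_injective _ h)]
      rfl
    · intro o₁ h₁ o₂ h₂ h; exact hdisj o₁ h₁ o₂ h₂ h
  have hA := hF.Anonneg ω
  have hFpos : ∀ p ∈ t, 0 ≤ F (P (some p)) ω := by
    intro p hp
    have hmem : some p ∈ s := by
      rw [hs, Finset.mem_insert]
      exact Or.inr (Finset.mem_image.mpr ⟨p, hp, rfl⟩)
    exact hpos _ (hBsbox (some p) hmem) ω
  have hib : ∀ p ∈ t, ((ibdN (P (some p))).card : ℝ) ≤ ((P (some p)).card : ℝ) := by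
    intro p _
    exact_mod_cast Nat.cast_le.mpr (Finset.card_le_card (ibdN_subset _))
  have est1 : F (boxNN x y) ω ≤ ∑ o ∈ s, F (P o) ω := by
    rw [hsumF]
    have : 0 ≤ ∑ p ∈ t, F (P (some p)) ω := Finset.sum_nonneg hFpos
    linarith
  have est2 : ∑ o ∈ s, ((ibdN (P o)).card : ℝ)
      ≤ ((ibdN (boxNN x y)).card : ℝ) + (((boxNN a b).card : ℝ) - ((boxNN x y).card : ℝ)) := by
    rw [hsumC]
    have h1 : ∑ p ∈ t, ((ibdN (P (some p))).card : ℝ) ≤ ∑ p ∈ t, ((P (some p)).card : ℝ) :=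
      Finset.sum_le_sum hib
    have h2 : ∑ p ∈ t, ((P (some p)).card : ℝ)
        = ((boxNN a b).card : ℝ) - ((boxNN x y).card : ℝ) := by
      have := congrArg (fun n : ℕ => (n : ℝ)) hcards
      push_cast at this
      linarith
    linarith
  have := mul_le_mul_of_nonneg_left est2 hA
  linarith


/-! ### Vitali selection and counting -/

lemma vitali_select {ι : Type*} [DecidableEq ι] {β : Type*} [DecidableEq β]
    (Q : ι → Finset β) (sd : ι → ℕ) (hne : ∀ i, (Q i).Nonempty) (X : Finset ι) :
    ∃ T ⊆ X, (∀ t₁ ∈ T, ∀ t₂ ∈ T, t₁ ≠ t₂ → Disjoint (Q t₁) (Q t₂)) ∧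
      ∀ x ∈ X, ∃ t ∈ T, ¬ Disjoint (Q x) (Q t) ∧ sd x ≤ sd t := by
  induction X using Finset.strongInduction with
  | _ X ih =>
    rcases X.eq_empty_or_nonempty with rfl | hX
    · exact ⟨∅, Finset.Subset.refl _, by simp, by simp⟩
    · obtain ⟨t₀, ht₀X, ht₀max⟩ := Finset.exists_max_image X sd hX
      set X' := X.filter (fun x => Disjoint (Q x) (Q t₀)) with hX'
      have hX'ss : X' ⊂ X := by
        refine ⟨Finset.filter_subset _ _, fun hsub => ?_⟩
        have h := (Finset.mem_filter.mp (hsub ht₀X)).2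
        exact (hne t₀).ne_empty (disjoint_self.mp h)
      obtain ⟨T', hT'sub, hT'disj, hT'cov⟩ := ih X' hX'ss
      refine ⟨insert t₀ T', ?_, ?_, ?_⟩
      · intro z hz
        rcases Finset.mem_insert.mp hz with rfl | hz
        · exact ht₀X
        · exact Finset.filter_subset _ _ (hT'sub hz)
      · intro t₁ h₁ t₂ h₂ hne12
        have key : ∀ u ∈ T', Disjoint (Q u) (Q t₀) :=
          fun u hu => (Finset.mem_filter.mp (hT'sub hu)).2
        rcases Finset.mem_insert.mp h₁ with e₁ | h₁
        · rcases Finset.mem_insert.mp h₂ with e₂ | h₂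
          · exact absurd (e₁.trans e₂.symm) hne12
          · rw [e₁]; exact (key t₂ h₂).symm
        · rcases Finset.mem_insert.mp h₂ with e₂ | h₂
          · rw [e₂]; exact key t₁ h₁
          · exact hT'disj t₁ h₁ t₂ h₂ hne12
      · intro x hx
        by_cases hd : Disjoint (Q x) (Q t₀)
        · obtain ⟨t, ht, h1, h2⟩ := hT'cov x (Finset.mem_filter.mpr ⟨hx, hd⟩)
          exact ⟨t, Finset.mem_insert_of_mem ht, h1, h2⟩
        · exact ⟨t₀, Finset.mem_insert_self _ _, hd, ht₀max x hx⟩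

lemma count_overlap {d : ℕ} {ax at' : Fin d → ℕ} {sx st : ℕ} {x : Fin d → ℕ}
    (hx : x ∈ boxNN ax (fun i => ax i + sx))
    (hmeet : ¬ Disjoint (boxNN ax (fun i => ax i + sx)) (boxNN at' (fun i => at' i + st)))
    (hs : sx ≤ st) :
    x ∈ boxNN (fun i => at' i - st) (fun i => at' i + 2 * st) := by
  obtain ⟨z, hz1, hz2⟩ := Finset.not_disjoint_iff.mp hmeet
  rw [mem_boxNN] at hx hz1 hz2 ⊢
  intro i
  have h1 := hx i; have h2 := hz1 i; have h3 := hz2 i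
  constructor <;> omega

lemma card_tripled {d : ℕ} (at' : Fin d → ℕ) (st : ℕ) :
    (boxNN (fun i => at' i - st) (fun i => at' i + 2 * st)).card ≤ (3 * st) ^ d := by
  rw [card_boxNN]
  calc ∏ i, (at' i + 2 * st - (at' i - st)) ≤ ∏ _i : Fin d, 3 * st :=
        Finset.prod_le_prod' fun i _ => by omega
    _ = (3 * st) ^ d := by rw [Finset.prod_const, Finset.card_univ, Fintype.card_fin]

lemma interval_align {k z c q q2 : ℕ} (h1 : k * q ≤ z) (h2 : z < k * q2)
    (hc1 : k * c ≤ z) (hc2 : z < k * c + k) : k * q ≤ k * c ∧ k * c + k ≤ k * q2 := by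
  constructor
  · rcases le_or_gt q c with h | h
    · exact Nat.mul_le_mul_left k h
    · have h4 : k * (c + 1) ≤ k * q := Nat.mul_le_mul_left k h
      have h5 : k * (c + 1) = k * c + k := by ring
      omega
  · rcases le_or_gt (c + 1) q2 with h | h
    · calc k * c + k = k * (c + 1) := by ring
        _ ≤ k * q2 := Nat.mul_le_mul_left k h
    · have h4 : q2 ≤ c := by omega
      have h5 : k * q2 ≤ k * c := Nat.mul_le_mul_left k h4
      omega


lemma mem_cubeN {d n : ℕ} {y : Fin d → ℕ} : y ∈ cubeN d n ↔ ∀ i, y i < n := by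
  simp [cubeN, Fintype.mem_piFinset, Finset.mem_range]

lemma cell_coord_eq {k z u v : ℕ} (hk : 0 < k) (h1 : k * u ≤ z) (h2 : z < k * u + k)
    (h3 : k * v ≤ z) (h4 : z < k * v + k) : u = v := by
  have h5 : z < k * (v + 1) := by rw [Nat.mul_add, Nat.mul_one]; exact h4
  have h6 := interval_align h3 h5 h1 h2
  have h7 : k * (v + 1) = k * v + k := by ring
  have h8 : k * u = k * v := by omega
  exact Nat.eq_of_mul_eq_mul_left hk h8

/-- real version of the boundary estimate -/
lemma ibd_boxNN_real {d k : ℕ} (hk : 0 < k) (a b : Fin d → ℕ) (hab : ∀ i, a i + k ≤ b i) :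
    ((ibdN (boxNN a b)).card : ℝ) ≤ 2 * d * ((boxNN a b).card : ℝ) / k := by
  rw [le_div_iff₀ (by exact_mod_cast hk : (0:ℝ) < k)]
  exact_mod_cast ibdN_boxNN_card_mul_le hk a b hab

/-- The key pointwise estimate. -/
lemma pointwise_bound {d : ℕ} {Ω : Type*} [MeasurableSpace Ω] {μ : Measure Ω}
    {τ : (Fin d → ℕ) → Ω → Ω} {F : Finset (Fin d → ℕ) → Ω → ℝ} {A : Ω → ℝ}
    (hF : AlmostSuperadditive μ τ F A)
    (hpos : ∀ B, IsBoxN B → ∀ ω, 0 ≤ F B ω)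
    {k m M N : ℕ} (hk : 1 ≤ k) (hm : k * k ≤ m) (hN : 1 ≤ N)
    (hNM : N + (m + 2 * k) = k * M)
    {α : ℝ} (hα : 0 < α) (ω : Ω) (X : Finset (Fin d → ℕ)) (hX : X ⊆ cubeN d N)
    (hwit : ∀ x ∈ X, ∃ n, k * k ≤ n ∧ n ≤ m ∧
      α * (n : ℝ) ^ d < F (boxNN x (fun i => x i + n)) ω) :
    α / ((3 : ℝ) ^ d * (1 + 2 / (k : ℝ)) ^ d) * X.card
      - A ω * ((4 * (d : ℝ) / k + ((1 + 2 / (k : ℝ)) ^ d - 1)) * ((k * M : ℕ) : ℝ) ^ d)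
      ≤ F (cubeN d (k * M)) ω := by
  classical
  have hk0 : 0 < k := hk
  have hkR : (0 : ℝ) < k := by exact_mod_cast hk0
  have hA := hF.Anonneg ω
  set β : ℝ := (1 + 2 / (k : ℝ)) ^ d with hβdef
  have hβ1 : 1 ≤ β := by
    have h : (0:ℝ) ≤ 2 / (k:ℝ) := by positivity
    exact one_le_pow₀ (by linarith)
  have hβ0 : 0 < β := lt_of_lt_of_le one_pos hβ1
  set N' : ℕ := k * M with hN'def
  have hN'1 : 1 ≤ N' := by omega
  have hdiv : ∀ y : ℕ, k * (y / k) ≤ y ∧ y < k * (y / k) + k := by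
    intro y
    have h1 := Nat.div_add_mod y k
    have h2 := Nat.mod_lt y hk0
    omega
  -- choose witnesses
  have hchoice : ∀ x : Fin d → ℕ, ∃ n, 1 ≤ n ∧ (x ∈ X → k * k ≤ n ∧ n ≤ m ∧
      α * (n : ℝ) ^ d < F (boxNN x (fun i => x i + n)) ω) := by
    intro x
    by_cases hx : x ∈ X
    · obtain ⟨n, h1, h2, h3⟩ := hwit x hx
      have hkk : 1 ≤ k * k := by simpa using Nat.mul_le_mul hk hk
      exact ⟨n, by omega, fun _ => ⟨h1, h2, h3⟩⟩
    · exact ⟨1, le_refl 1, fun h => absurd h hx⟩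
  choose nf hnf1 hnf2 using hchoice
  set sd : (Fin d → ℕ) → ℕ := fun x => k * (nf x / k) + 2 * k with hsddef
  set Qc : (Fin d → ℕ) → Finset (Fin d → ℕ) :=
    fun x => boxNN (fun i => k * (x i / k)) (fun i => k * (x i / k) + sd x) with hQcdef
  have hsdk : ∀ x, k ≤ sd x := fun x => by simp only [hsddef]; omega
  have hsd_pos : ∀ x, 0 < sd x := fun x => lt_of_lt_of_le hk0 (hsdk x)
  have hsd_lb : ∀ x, nf x + k < sd x := by
    intro x
    have := (hdiv (nf x)).2
    simp only [hsddef]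
    omega
  have hsd_ub : ∀ x, sd x ≤ nf x + 2 * k := by
    intro x
    have := (hdiv (nf x)).1
    simp only [hsddef]
    omega
  have hQcbox : ∀ x, IsBoxN (Qc x) :=
    fun x => boxNN_isBox (fun i => by have := hsd_pos x; omega)
  have hQcne : ∀ x, (Qc x).Nonempty :=
    fun x => boxNN_nonempty (fun i => by have := hsd_pos x; omega)
  have hQc_card : ∀ x, ((Qc x).card : ℝ) = ((sd x : ℝ)) ^ d := by
    intro x
    have h1 : (Qc x).card = ∏ i : Fin d, (k * (x i / k) + sd x - k * (x i / k)) :=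
      card_boxNN _ _
    have h2 : (Qc x).card = sd x ^ d := by
      rw [h1]
      have : ∀ i : Fin d, k * (x i / k) + sd x - k * (x i / k) = sd x := fun i => by omega
      rw [Finset.prod_congr rfl (fun i _ => this i), Finset.prod_const, Finset.card_univ,
        Fintype.card_fin]
    rw [h2]
    push_cast
    rfl
  have hmemQc : ∀ x, x ∈ Qc x := by
    intro x
    have h : ∀ i, k * (x i / k) ≤ x i ∧ x i < k * (x i / k) + sd x := by
      intro i
      have h1 := hdiv (x i)
      have h2 := hsdk x
      omega
    exact mem_boxNN.mpr h
  have hsd_le_beta : ∀ x ∈ X, ((sd x : ℝ)) ^ d ≤ β * ((nf x : ℝ)) ^ d := by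
    intro x hx
    obtain ⟨hn1, hn2, _⟩ := hnf2 x hx
    have h1 : (sd x : ℝ) ≤ (1 + 2 / (k : ℝ)) * (nf x : ℝ) := by
      have h2 : (sd x : ℝ) ≤ (nf x : ℝ) + 2 * k := by exact_mod_cast hsd_ub x
      have h3 : (2 : ℝ) * k ≤ 2 * (nf x) / k := by
        rw [le_div_iff₀ hkR]
        have : (k : ℝ) * k ≤ nf x := by exact_mod_cast hn1
        nlinarith
      calc (sd x : ℝ) ≤ (nf x : ℝ) + 2 * k := h2
        _ ≤ (nf x : ℝ) + 2 * (nf x) / k := by linarith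
        _ = (1 + 2 / (k : ℝ)) * (nf x : ℝ) := by field_simp
    calc ((sd x : ℝ)) ^ d ≤ ((1 + 2 / (k : ℝ)) * (nf x : ℝ)) ^ d :=
          pow_le_pow_left₀ (by positivity) h1 d
      _ = β * ((nf x : ℝ)) ^ d := by rw [hβdef, mul_pow]
  -- the per-cube estimate
  have key4 : ∀ x ∈ X,
      α * ((nf x : ℝ)) ^ d - A ω * ((2 * d / k + (β - 1)) * ((nf x : ℝ)) ^ d)
        ≤ F (Qc x) ω := by
    intro x hx
    obtain ⟨hn1, hn2, hn3⟩ := hnf2 x hx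
    have hknf : k ≤ nf x := le_trans (Nat.le_mul_of_pos_left k hk0) hn1
    have hax : ∀ i, k * (x i / k) ≤ x i := fun i => (hdiv (x i)).1
    have hxy : ∀ i, x i < x i + nf x := fun i => by have := hnf1 x; omega
    have hyb : ∀ i, x i + nf x ≤ k * (x i / k) + sd x := by
      intro i
      have h1 := (hdiv (x i)).2
      have h2 := hsd_lb x
      omega
    have hnest : F (boxNN x (fun i => x i + nf x)) ω -
        A ω * (((ibdN (boxNN x (fun i => x i + nf x))).card : ℝ) +
          (((Qc x).card : ℝ) - ((boxNN x (fun i => x i + nf x)).card : ℝ)))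
        ≤ F (Qc x) ω :=
      nested_lower hF hpos (fun i => k * (x i / k))
        (fun i => k * (x i / k) + sd x) x (fun i => x i + nf x) hax hxy hyb ω
    have hinner_card : ((boxNN x (fun i => x i + nf x)).card : ℝ) = ((nf x : ℝ)) ^ d := by
      have h1 : (boxNN x (fun i => x i + nf x)).card = nf x ^ d := by
        rw [card_boxNN]
        have : ∀ i : Fin d, x i + nf x - x i = nf x := fun i => by omega
        rw [Finset.prod_congr rfl (fun i _ => this i), Finset.prod_const, Finset.card_univ,
          Fintype.card_fin]
      rw [h1]; push_cast; rfl
    have hibd : ((ibdN (boxNN x (fun i => x i + nf x))).card : ℝ)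
        ≤ 2 * d / k * ((nf x : ℝ)) ^ d := by
      have h1 := ibd_boxNN_real hk0 x (fun i => x i + nf x) (fun i => by show x i + k ≤ x i + nf x; omega)
      rw [hinner_card] at h1
      calc ((ibdN (boxNN x (fun i => x i + nf x))).card : ℝ)
          ≤ 2 * d * ((nf x : ℝ)) ^ d / k := h1
        _ = 2 * d / k * ((nf x : ℝ)) ^ d := by ring
    have hdiff : ((Qc x).card : ℝ) - ((boxNN x (fun i => x i + nf x)).card : ℝ)
        ≤ (β - 1) * ((nf x : ℝ)) ^ d := by
      rw [hQc_card x, hinner_card]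
      have := hsd_le_beta x hx
      linarith
    have hFinner : α * ((nf x : ℝ)) ^ d ≤ F (boxNN x (fun i => x i + nf x)) ω :=
      le_of_lt hn3
    have hsum_le : ((ibdN (boxNN x (fun i => x i + nf x))).card : ℝ) +
        (((Qc x).card : ℝ) - ((boxNN x (fun i => x i + nf x)).card : ℝ))
        ≤ (2 * d / k + (β - 1)) * ((nf x : ℝ)) ^ d := by
      have h2 : (2 * (d:ℝ) / k + (β - 1)) * ((nf x : ℝ)) ^ d
          = 2 * d / k * ((nf x : ℝ)) ^ d + (β - 1) * ((nf x : ℝ)) ^ d := by ring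
      rw [h2]
      linarith
    have hmul : A ω * (((ibdN (boxNN x (fun i => x i + nf x))).card : ℝ) +
        (((Qc x).card : ℝ) - ((boxNN x (fun i => x i + nf x)).card : ℝ)))
        ≤ A ω * ((2 * d / k + (β - 1)) * ((nf x : ℝ)) ^ d) :=
      mul_le_mul_of_nonneg_left hsum_le hA
    linarith
  -- Vitali selection
  obtain ⟨T, hTX, hTdisj, hTcov⟩ := vitali_select Qc sd hQcne X
  -- counting
  have hcount : (X.card : ℝ) ≤ 3 ^ d * β * ∑ t ∈ T, ((nf t : ℝ)) ^ d := by
    have hsubT : X ⊆ T.biUnion (fun t => boxNN (fun i => k * (t i / k) - sd t)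
        (fun i => k * (t i / k) + 2 * sd t)) := by
      intro x hx
      obtain ⟨t, ht, hmeet, hst⟩ := hTcov x hx
      rw [Finset.mem_biUnion]
      exact ⟨t, ht, count_overlap (hmemQc x) hmeet hst⟩
    have h1 : X.card ≤ ∑ t ∈ T, (3 * sd t) ^ d := by
      calc X.card ≤ (T.biUnion (fun t => boxNN (fun i => k * (t i / k) - sd t)
            (fun i => k * (t i / k) + 2 * sd t))).card := Finset.card_le_card hsubT
        _ ≤ ∑ t ∈ T, (boxNN (fun i => k * (t i / k) - sd t)
            (fun i => k * (t i / k) + 2 * sd t)).card := Finset.card_biUnion_le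
        _ ≤ ∑ t ∈ T, (3 * sd t) ^ d :=
            Finset.sum_le_sum fun t _ => card_tripled (fun i => k * (t i / k)) (sd t)
    calc (X.card : ℝ) ≤ ((∑ t ∈ T, (3 * sd t) ^ d : ℕ) : ℝ) := by exact_mod_cast h1
      _ = ∑ t ∈ T, (3:ℝ) ^ d * ((sd t : ℝ)) ^ d := by
          push_cast
          exact Finset.sum_congr rfl fun t _ => by rw [mul_pow]
      _ ≤ ∑ t ∈ T, (3:ℝ) ^ d * (β * ((nf t : ℝ)) ^ d) := by
          refine Finset.sum_le_sum fun t ht => ?_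
          have h3 := hsd_le_beta t (hTX ht)
          have h4 : (0:ℝ) ≤ (3:ℝ)^d := by positivity
          nlinarith
      _ = 3 ^ d * β * ∑ t ∈ T, ((nf t : ℝ)) ^ d := by
          rw [Finset.mul_sum]
          exact Finset.sum_congr rfl fun t _ => by ring
  -- cells
  set cellB : (Fin d → ℕ) → Finset (Fin d → ℕ) :=
    fun c => boxNN (fun i => k * c i) (fun i => k * c i + k) with hcellBdef
  set C := (Fintype.piFinset fun _ : Fin d => Finset.range M).filter
    (fun c => ∀ t ∈ T, Disjoint (cellB c) (Qc t)) with hCdef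
  set Bs : ((Fin d → ℕ) ⊕ (Fin d → ℕ)) → Finset (Fin d → ℕ) := Sum.elim Qc cellB with hBsdef
  set s : Finset ((Fin d → ℕ) ⊕ (Fin d → ℕ)) := T.image Sum.inl ∪ C.image Sum.inr with hsdef
  have hmem_s : ∀ i ∈ s, (∃ t ∈ T, i = Sum.inl t) ∨ (∃ c ∈ C, i = Sum.inr c) := by
    intro i hi
    rcases Finset.mem_union.mp hi with h | h
    · obtain ⟨t, ht, rfl⟩ := Finset.mem_image.mp h
      exact Or.inl ⟨t, ht, rfl⟩
    · obtain ⟨c, hc, rfl⟩ := Finset.mem_image.mp h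
      exact Or.inr ⟨c, hc, rfl⟩
  have hQc_sub : ∀ x ∈ X, Qc x ⊆ cubeN d N' := by
    intro x hx z hz
    have hzm := mem_boxNN.mp hz
    rw [mem_cubeN]
    intro i
    have h1 := (hzm i).2
    have h3 := hsd_ub x
    have h4 : x i < N := mem_cubeN.mp (hX hx) i
    have h5 := (hnf2 x hx).2.1
    have h6 := (hdiv (x i)).1
    omega
  have hcell_sub : ∀ c ∈ C, cellB c ⊆ cubeN d N' := by
    intro c hc z hz
    have hzm := mem_boxNN.mp hz
    rw [mem_cubeN]
    intro i
    have h1 := (hzm i).2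
    have h2 : c i < M := by
      have h3 := (Finset.mem_filter.mp hc).1
      have h4 := Fintype.mem_piFinset.mp h3 i
      exact Finset.mem_range.mp h4
    have h5 : k * (c i + 1) ≤ k * M := Nat.mul_le_mul_left k (by omega)
    have h6 : k * (c i + 1) = k * c i + k := by ring
    omega
  have halign : ∀ c t, t ∈ T → ¬ Disjoint (cellB c) (Qc t) → cellB c ⊆ Qc t := by
    intro c t ht hmeet
    obtain ⟨z, hz1, hz2⟩ := Finset.not_disjoint_iff.mp hmeet
    have hz1' := mem_boxNN.mp hz1
    have hz2' := mem_boxNN.mp hz2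
    intro y hy
    have hy' := mem_boxNN.mp hy
    refine mem_boxNN.mpr fun i => ?_
    have h1 := hz1' i
    have h2 := hz2' i
    have h3 := hy' i
    have hq2 : k * (t i / k) + sd t = k * ((t i / k) + (nf t / k + 2)) := by
      simp only [hsddef]; ring
    have h2b : z i < k * ((t i / k) + (nf t / k + 2)) := by
      rw [← hq2]; exact h2.2
    have h4 := interval_align (k := k) (z := z i) (c := c i) (q := t i / k)
      (q2 := (t i / k) + (nf t / k + 2)) h2.1 h2b h1.1 h1.2
    have h5 := h4.2
    rw [← hq2] at h5
    constructor
    · have := h4.1; omega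
    · omega
  have hun : s.biUnion Bs = cubeN d N' := by
    ext y
    rw [Finset.mem_biUnion]
    constructor
    · rintro ⟨i, hi, hyi⟩
      rcases hmem_s i hi with ⟨t, ht, rfl⟩ | ⟨c, hc, rfl⟩
      · exact hQc_sub t (hTX ht) hyi
      · exact hcell_sub c hc hyi
    · intro hy
      have hym := mem_cubeN.mp hy
      have hyc : y ∈ cellB (fun i => y i / k) := by
        refine mem_boxNN.mpr fun i => ?_
        exact hdiv (y i)
      have hcmem : (fun i => y i / k) ∈ Fintype.piFinset fun _ : Fin d => Finset.range M := by
        rw [Fintype.mem_piFinset]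
        intro i
        rw [Finset.mem_range]
        have h1 : y i < k * M := by have := hym i; omega
        exact Nat.div_lt_of_lt_mul h1
      by_cases hcC : ∀ t ∈ T, Disjoint (cellB (fun i => y i / k)) (Qc t)
      · refine ⟨Sum.inr (fun i => y i / k), ?_, hyc⟩
        rw [hsdef, Finset.mem_union]
        exact Or.inr (Finset.mem_image_of_mem _ (Finset.mem_filter.mpr ⟨hcmem, hcC⟩))
      · push_neg at hcC
        obtain ⟨t, ht, hmeet⟩ := hcC
        refine ⟨Sum.inl t, ?_, halign _ t ht hmeet hyc⟩
        rw [hsdef, Finset.mem_union]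
        exact Or.inl (Finset.mem_image_of_mem _ ht)
  have hboxes : ∀ i ∈ s, IsBoxN (Bs i) := by
    intro i hi
    rcases hmem_s i hi with ⟨t, ht, rfl⟩ | ⟨c, hc, rfl⟩
    · exact hQcbox t
    · exact boxNN_isBox (fun i => by omega)
  have hdisj : ∀ i ∈ s, ∀ j ∈ s, i ≠ j → Disjoint (Bs i) (Bs j) := by
    intro i hi j hj hij
    rcases hmem_s i hi with ⟨t, ht, rfl⟩ | ⟨c, hc, rfl⟩ <;>
      rcases hmem_s j hj with ⟨t', ht', rfl⟩ | ⟨c', hc', rfl⟩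
    · exact hTdisj t ht t' ht' (fun h => hij (by rw [h]))
    · exact ((Finset.mem_filter.mp hc').2 t ht).symm
    · exact (Finset.mem_filter.mp hc).2 t' ht'
    · rw [Finset.disjoint_left]
      intro z hz hz'
      have hz1 := mem_boxNN.mp hz
      have hz2 := mem_boxNN.mp hz'
      apply hij
      have hcc : c = c' :=
        funext fun i => cell_coord_eq hk0 (hz1 i).1 (hz1 i).2 (hz2 i).1 (hz2 i).2
      rw [hcc]
  have hsup := superadd_finset hF s Bs hboxes hdisj (hun ▸ cubeN_isBox hN'1) ω
  rw [hun] at hsup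
  -- sum splitting
  have himg_disj : Disjoint (T.image Sum.inl) (C.image Sum.inr) := by
    rw [Finset.disjoint_left]
    rintro i hi hj
    obtain ⟨t, _, rfl⟩ := Finset.mem_image.mp hi
    obtain ⟨c, _, hc⟩ := Finset.mem_image.mp hj
    cases hc
  have hsplit : ∀ f : Finset (Fin d → ℕ) → ℝ,
      ∑ i ∈ s, f (Bs i) = ∑ t ∈ T, f (Qc t) + ∑ c ∈ C, f (cellB c) := by
    intro f
    rw [hsdef, Finset.sum_union himg_disj,
      Finset.sum_image (fun _ _ _ _ h => Sum.inl_injective h),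
      Finset.sum_image (fun _ _ _ _ h => Sum.inr_injective h)]
    rfl
  have hcards : ∑ i ∈ s, ((Bs i).card : ℝ) = ((N' : ℕ) : ℝ) ^ d := by
    have h1 : ∑ i ∈ s, (Bs i).card = (cubeN d N').card := by
      rw [← hun]
      exact (Finset.card_biUnion hdisj).symm
    calc ∑ i ∈ s, ((Bs i).card : ℝ) = ((∑ i ∈ s, (Bs i).card : ℕ) : ℝ) := by push_cast; rfl
      _ = ((cubeN d N').card : ℝ) := by rw [h1]
      _ = ((N' : ℕ) : ℝ) ^ d := by rw [card_cubeN]; push_cast; rfl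
  have hbd : ∑ i ∈ s, ((ibdN (Bs i)).card : ℝ) ≤ 2 * d / k * ((N' : ℕ) : ℝ) ^ d := by
    have h1 : ∀ i ∈ s, ((ibdN (Bs i)).card : ℝ) ≤ 2 * d * ((Bs i).card : ℝ) / k := by
      intro i hi
      rcases hmem_s i hi with ⟨t, ht, rfl⟩ | ⟨c, hc, rfl⟩
      · exact ibd_boxNN_real hk0 (fun i => k * (t i / k))
          (fun i => k * (t i / k) + sd t)
          (fun i => by show k * (t i / k) + k ≤ k * (t i / k) + sd t; have := hsdk t; omega)
      · exact ibd_boxNN_real hk0 (fun i => k * c i) (fun i => k * c i + k)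
          (fun i => le_refl _)
    calc ∑ i ∈ s, ((ibdN (Bs i)).card : ℝ) ≤ ∑ i ∈ s, 2 * d * ((Bs i).card : ℝ) / k :=
          Finset.sum_le_sum h1
      _ = 2 * d / k * ∑ i ∈ s, ((Bs i).card : ℝ) := by
          rw [Finset.mul_sum]
          exact Finset.sum_congr rfl fun i _ => by ring
      _ = 2 * d / k * ((N' : ℕ) : ℝ) ^ d := by rw [hcards]
  have hcellpos : (0:ℝ) ≤ ∑ c ∈ C, F (cellB c) ω :=
    Finset.sum_nonneg fun c _ => hpos (cellB c) (boxNN_isBox fun i => by omega) ω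
  have hsrn_le : ∑ t ∈ T, ((nf t : ℝ)) ^ d ≤ ((N' : ℕ) : ℝ) ^ d := by
    have h1 : ∀ t ∈ T, ((nf t : ℝ)) ^ d ≤ ((Qc t).card : ℝ) := by
      intro t ht
      rw [hQc_card t]
      refine pow_le_pow_left₀ (by positivity) ?_ d
      have := hsd_lb t
      exact_mod_cast (by omega : nf t ≤ sd t)
    have h2 : ∑ t ∈ T, ((Qc t).card : ℝ) ≤ ((N' : ℕ) : ℝ) ^ d := by
      have h3 : ∑ t ∈ T, (Qc t).card = (T.biUnion Qc).card :=
        (Finset.card_biUnion hTdisj).symm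
      have h4 : (T.biUnion Qc).card ≤ (cubeN d N').card := by
        refine Finset.card_le_card ?_
        intro z hz
        obtain ⟨t, ht, hz2⟩ := Finset.mem_biUnion.mp hz
        exact hQc_sub t (hTX ht) hz2
      calc ∑ t ∈ T, ((Qc t).card : ℝ) = ((∑ t ∈ T, (Qc t).card : ℕ) : ℝ) := by
            push_cast; rfl
        _ ≤ ((cubeN d N').card : ℝ) := by exact_mod_cast h3 ▸ h4
        _ = ((N' : ℕ) : ℝ) ^ d := by rw [card_cubeN]; push_cast; rfl
    exact le_trans (Finset.sum_le_sum h1) h2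
  -- bound on the sum over selected cubes
  have hcoef_nonneg : (0:ℝ) ≤ 2 * d / k + (β - 1) := by
    have : (0:ℝ) ≤ 2 * d / k := by positivity
    linarith
  have hTbound : α / (3 ^ d * β) * X.card
      - A ω * ((2 * d / k + (β - 1)) * ((N' : ℕ) : ℝ) ^ d) ≤ ∑ t ∈ T, F (Qc t) ω := by
    have h1 : ∑ t ∈ T, (α * ((nf t : ℝ)) ^ d
        - A ω * ((2 * d / k + (β - 1)) * ((nf t : ℝ)) ^ d)) ≤ ∑ t ∈ T, F (Qc t) ω :=
      Finset.sum_le_sum fun t ht => key4 t (hTX ht)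
    have h2 : ∑ t ∈ T, (α * ((nf t : ℝ)) ^ d
        - A ω * ((2 * d / k + (β - 1)) * ((nf t : ℝ)) ^ d))
        = α * (∑ t ∈ T, ((nf t : ℝ)) ^ d)
          - A ω * (2 * d / k + (β - 1)) * (∑ t ∈ T, ((nf t : ℝ)) ^ d) := by
      rw [Finset.sum_sub_distrib, ← Finset.mul_sum]
      congr 1
      rw [← Finset.mul_sum]
      rw [mul_assoc]
      congr 1
      rw [← Finset.mul_sum]
    have h3 : α / (3 ^ d * β) * X.card ≤ α * (∑ t ∈ T, ((nf t : ℝ)) ^ d) := by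
      rw [div_mul_eq_mul_div, div_le_iff₀ (by positivity)]
      have h4 : α * (X.card : ℝ) ≤ α * (3 ^ d * β * ∑ t ∈ T, ((nf t : ℝ)) ^ d) :=
        mul_le_mul_of_nonneg_left hcount hα.le
      calc α * (X.card : ℝ) ≤ α * (3 ^ d * β * ∑ t ∈ T, ((nf t : ℝ)) ^ d) := h4
        _ = α * (∑ t ∈ T, ((nf t : ℝ)) ^ d) * (3 ^ d * β) := by ring
    have h5 : A ω * (2 * d / k + (β - 1)) * (∑ t ∈ T, ((nf t : ℝ)) ^ d)
        ≤ A ω * ((2 * d / k + (β - 1)) * ((N' : ℕ) : ℝ) ^ d) := by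
      rw [mul_assoc]
      refine mul_le_mul_of_nonneg_left ?_ hA
      exact mul_le_mul_of_nonneg_left hsrn_le hcoef_nonneg
    linarith
  -- final assembly
  have hsumF := hsplit (fun B => F B ω)
  have hsum_ge : ∑ t ∈ T, F (Qc t) ω ≤ ∑ i ∈ s, F (Bs i) ω := by
    rw [hsumF]
    linarith
  have hAbd : A ω * (∑ i ∈ s, ((ibdN (Bs i)).card : ℝ))
      ≤ A ω * (2 * d / k * ((N' : ℕ) : ℝ) ^ d) :=
    mul_le_mul_of_nonneg_left hbd hA
  have hfinal : α / (3 ^ d * β) * X.card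
      - A ω * ((2 * d / k + (β - 1)) * ((N' : ℕ) : ℝ) ^ d)
      - A ω * (2 * d / k * ((N' : ℕ) : ℝ) ^ d) ≤ F (cubeN d N') ω := by
    linarith
  have hco : A ω * ((2 * d / k + (β - 1)) * ((N' : ℕ) : ℝ) ^ d)
      + A ω * (2 * d / k * ((N' : ℕ) : ℝ) ^ d)
      = A ω * ((4 * (d:ℝ) / k + (β - 1)) * ((N' : ℕ) : ℝ) ^ d) := by ring
  linarith


/-- The normalized expectations `n ↦ |S_n|⁻¹ E[F_{S_n}]`. -/
noncomputable def avgSeq {d : ℕ} {Ω : Type*} [MeasurableSpace Ω] (μ : Measure Ω)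
    (F : Finset (Fin d → ℕ) → Ω → ℝ) (n : ℕ) : ℝ :=
  (∫ ω, F (cubeN d n) ω ∂μ) / (n : ℝ) ^ d

/-- The time constant `γ̃(F) = limsup_n |S_n|⁻¹ E[F_{S_n}]`. -/
noncomputable def timeConst {d : ℕ} {Ω : Type*} [MeasurableSpace Ω] (μ : Measure Ω)
    (F : Finset (Fin d → ℕ) → Ω → ℝ) : ℝ :=
  limsup (avgSeq μ F) atTop

/-- **Maximal inequality** (Theorem 3.2 of Akcoglu–Krengel, almost superadditive version):
for a nonnegative almost superadditive process `F` and `α > 0`,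
`P(limsup_n |S_n|⁻¹ F_{S_n} > α) ≤ 3^d γ̃(F) / α`. -/
theorem maximal_inequality {d : ℕ} {Ω : Type*} [MeasurableSpace Ω] (μ : Measure Ω)
    [IsProbabilityMeasure μ]
    (τ : (Fin d → ℕ) → Ω → Ω) (F : Finset (Fin d → ℕ) → Ω → ℝ) (A : Ω → ℝ)
    (hF : AlmostSuperadditive μ τ F A)
    (hpos : ∀ B, IsBoxN B → ∀ ω, 0 ≤ F B ω)
    (hfin : IsBoundedUnder (· ≤ ·) atTop (avgSeq μ F))
    (α : ℝ) (hα : 0 < α) :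
    μ {ω | α < limsup (fun n => F (cubeN d n) ω / (n : ℝ) ^ d) atTop}
      ≤ ENNReal.ofReal ((3 : ℝ) ^ d * timeConst μ F / α) := by
  classical
  set γ : ℝ := timeConst μ F with hγdef
  set E : Set Ω := {ω | α < limsup (fun n => F (cubeN d n) ω / (n : ℝ) ^ d) atTop} with hEdef
  set p : ℝ := (μ E).toReal with hpdef
  have hAint := hF.Aint
  -- nonnegativity of the normalized process
  have hcube0 : ∀ (ω : Ω) (n : ℕ), 0 ≤ F (cubeN d n) ω / (n : ℝ) ^ d := by
    intro ω n
    rcases Nat.eq_zero_or_pos n with rfl | hn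
    · rcases Nat.eq_zero_or_pos d with rfl | hd
      · have hcc : cubeN 0 0 = cubeN 0 1 := by
          ext y
          simp [cubeN, Fintype.mem_piFinset]
        rw [hcc]
        exact div_nonneg (hpos _ (cubeN_isBox (le_refl 1)) ω) (by norm_num)
      · rw [Nat.cast_zero, zero_pow (by omega), div_zero]
    · exact div_nonneg (hpos _ (cubeN_isBox hn) ω) (by positivity)
  -- measurable versions
  have hint : ∀ n : ℕ, 1 ≤ n → Integrable (F (cubeN d n)) μ :=
    fun n hn => hF.int _ (cubeN_isBox hn)
  set g : ℕ → Ω → ℝ := fun n =>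
    if h : 1 ≤ n then (hint n h).aestronglyMeasurable.mk (F (cubeN d n)) else 0 with hgdef
  have hgmeas : ∀ n, StronglyMeasurable (g n) := by
    intro n
    rw [hgdef]
    by_cases h : 1 ≤ n
    · simp only [dif_pos h]
      exact (hint n h).aestronglyMeasurable.stronglyMeasurable_mk
    · simp only [dif_neg h]
      exact stronglyMeasurable_const
  have hgae : ∀ n, 1 ≤ n → g n =ᵐ[μ] F (cubeN d n) := by
    intro n h
    rw [hgdef]
    simp only [dif_pos h]
    exact ((hint n h).aestronglyMeasurable.ae_eq_mk).symm
  -- good events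
  set G : ℕ → ℕ → Set Ω :=
    fun k m => {ω | ∃ n, k * k ≤ n ∧ n ≤ m ∧ α * (n : ℝ) ^ d < g n ω} with hGdef
  have hGmeas : ∀ k m, MeasurableSet (G k m) := by
    intro k m
    have h1 : G k m = ⋃ (n : ℕ), ⋃ (_ : k * k ≤ n ∧ n ≤ m), {ω | α * (n : ℝ) ^ d < g n ω} := by
      ext ω
      simp only [hGdef, Set.mem_iUnion, Set.mem_setOf_eq]
      constructor
      · rintro ⟨n, h1, h2, h3⟩; exact ⟨n, ⟨h1, h2⟩, h3⟩
      · rintro ⟨n, ⟨h1, h2⟩, h3⟩; exact ⟨n, h1, h2, h3⟩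
    rw [h1]
    exact MeasurableSet.iUnion fun n => MeasurableSet.iUnion fun _ =>
      measurableSet_lt measurable_const (hgmeas n).measurable
  have hGmono : ∀ k, Monotone (fun m => G k m) := by
    intro k m m' hmm ω hω
    obtain ⟨n, h1, h2, h3⟩ := hω
    exact ⟨n, h1, le_trans h2 hmm, h3⟩
  -- a.e. identification of g with F along shifts
  have hae : ∀ᵐ ω ∂μ, ∀ x : Fin d → ℕ, ∀ n : ℕ, 1 ≤ n →
      g n (τ x ω) = F (cubeN d n) (τ x ω) := by
    rw [ae_all_iff]
    intro x
    rw [ae_all_iff]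
    intro n
    by_cases hn : 1 ≤ n
    · have h1 := (hF.meas x).quasiMeasurePreserving.ae_eq_comp (hgae n hn)
      filter_upwards [h1] with ω hω _ using hω
    · filter_upwards with ω hn' using absurd hn' hn
  -- KEY inequality for fixed (k, m)
  have key : ∀ k m : ℕ, 1 ≤ k → k * k ≤ m →
      α / ((3 : ℝ) ^ d * (1 + 2 / (k : ℝ)) ^ d) * (μ (G k m)).toReal
        - (4 * (d : ℝ) / k + ((1 + 2 / (k : ℝ)) ^ d - 1)) * (∫ ω, A ω ∂μ) ≤ γ := by
    intro k m hk hm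
    set c : ℝ := α / ((3 : ℝ) ^ d * (1 + 2 / (k : ℝ)) ^ d) with hcdef
    set e2 : ℝ := 4 * (d : ℝ) / k + ((1 + 2 / (k : ℝ)) ^ d - 1) with he2def
    set pG : ℝ := (μ (G k m)).toReal with hpGdef
    set IA : ℝ := ∫ ω, A ω ∂μ with hIAdef
    have hc0 : 0 ≤ c := by
      rw [hcdef]
      have h1 : (0:ℝ) < (1 + 2 / (k : ℝ)) ^ d := by positivity
      positivity
    have hpG0 : 0 ≤ pG := ENNReal.toReal_nonneg
    -- per-M inequality
    have perM : ∀ M : ℕ, m + 2 * k + 1 ≤ k * M →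
        c * (((((k * M - (m + 2 * k) : ℕ)) : ℝ)) ^ d / (((k * M : ℕ)) : ℝ) ^ d) * pG
          - e2 * IA ≤ avgSeq μ F (k * M) := by
      intro M hM
      set N : ℕ := k * M - (m + 2 * k) with hNdef
      have hN1 : 1 ≤ N := by omega
      have hNM : N + (m + 2 * k) = k * M := by omega
      have hKM1 : 1 ≤ k * M := by omega
      set GC : Ω → ℝ :=
        fun ω => ∑ x ∈ cubeN d N, Set.indicator (τ x ⁻¹' (G k m)) (fun _ => (1:ℝ)) ω
        with hGCdef
      have hpre : ∀ x : Fin d → ℕ, MeasurableSet (τ x ⁻¹' (G k m)) :=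
        fun x => (hF.meas x).measurable (hGmeas k m)
      have hpt : ∀ᵐ ω ∂μ,
          c * GC ω - A ω * (e2 * (((k * M : ℕ)) : ℝ) ^ d) ≤ F (cubeN d (k * M)) ω := by
        filter_upwards [hae] with ω hω
        set X : Finset (Fin d → ℕ) := (cubeN d N).filter (fun x => τ x ω ∈ G k m) with hXdef
        have hGCX : GC ω = (X.card : ℝ) := by
          have h1 : (X.card : ℝ) = ∑ x ∈ cubeN d N, if τ x ω ∈ G k m then (1:ℝ) else 0 := by
            rw [hXdef, Finset.card_filter]
            rw [Nat.cast_sum]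
            exact Finset.sum_congr rfl fun x _ => by split <;> simp
          rw [h1, hGCdef]
          exact Finset.sum_congr rfl fun x _ => by rw [Set.indicator_apply]; rfl
        have hwit : ∀ x ∈ X, ∃ n, k * k ≤ n ∧ n ≤ m ∧
            α * (n : ℝ) ^ d < F (boxNN x (fun i => x i + n)) ω := by
          intro x hx
          obtain ⟨hxc, hxG⟩ := Finset.mem_filter.mp hx
          obtain ⟨n, h1, h2, h3⟩ := hxG
          have hkk1 : 1 ≤ k * k := by simpa using Nat.mul_le_mul hk hk
          have hn1 : 1 ≤ n := by omega
          refine ⟨n, h1, h2, ?_⟩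
          have h4 : g n (τ x ω) = F (cubeN d n) (τ x ω) := hω x n hn1
          have h5 : F (cubeN d n) (τ x ω) = F (boxNN x (fun i => x i + n)) ω := by
            have h6 := congrFun (hF.shift x (cubeN d n) (cubeN_isBox hn1)) ω
            rw [image_add_cubeN] at h6
            exact h6.symm
          rw [← h5, ← h4]
          exact h3
        have h7 := pointwise_bound hF hpos hk hm hN1 hNM hα ω X
          (Finset.filter_subset _ _) hwit
        rw [hGCX]
        exact h7
      -- integrate
      have hGCint : Integrable GC μ :=
        integrable_finset_sum _ fun x _ => (integrable_const (1:ℝ)).indicator (hpre x)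
      have hLint : Integrable
          (fun ω => c * GC ω - A ω * (e2 * (((k * M : ℕ)) : ℝ) ^ d)) μ :=
        (hGCint.const_mul c).sub (hAint.mul_const _)
      have hRint : Integrable (F (cubeN d (k * M))) μ := hint _ hKM1
      have hInt := integral_mono_ae hLint hRint hpt
      have hGCval : ∫ ω, GC ω ∂μ = ((N : ℝ)) ^ d * pG := by
        rw [hGCdef]
        rw [integral_finset_sum _ fun x _ => (integrable_const (1:ℝ)).indicator (hpre x)]
        have h8 : ∀ x ∈ cubeN d N,
            ∫ ω, Set.indicator (τ x ⁻¹' (G k m)) (fun _ => (1:ℝ)) ω ∂μ = pG := by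
          intro x _
          rw [integral_indicator_const (1:ℝ) (hpre x)]
          rw [measureReal_def, (hF.meas x).measure_preimage (hGmeas k m).nullMeasurableSet]
          simp [hpGdef]
        rw [Finset.sum_congr rfl h8, Finset.sum_const, card_cubeN]
        simp only [nsmul_eq_mul]
        push_cast
        ring
      have h9 : c * ((N : ℝ)) ^ d * pG - IA * (e2 * (((k * M : ℕ)) : ℝ) ^ d)
          ≤ ∫ ω, F (cubeN d (k * M)) ω ∂μ := by
        rw [integral_sub (hGCint.const_mul c) (hAint.mul_const _)] at hInt
        rw [integral_const_mul, integral_mul_const, hGCval] at hInt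
        calc c * ((N : ℝ)) ^ d * pG - IA * (e2 * (((k * M : ℕ)) : ℝ) ^ d)
            = c * (((N : ℝ)) ^ d * pG) - (∫ ω, A ω ∂μ) * (e2 * (((k * M : ℕ)) : ℝ) ^ d) := by
              rw [← hIAdef]; ring
          _ ≤ ∫ ω, F (cubeN d (k * M)) ω ∂μ := hInt
      have hP0 : (0:ℝ) < (((k * M : ℕ)) : ℝ) ^ d := by
        have h10 : (0:ℝ) < (((k * M : ℕ)) : ℝ) := by exact_mod_cast hKM1
        positivity
      show c * (((((k * M - (m + 2 * k) : ℕ)) : ℝ)) ^ d / (((k * M : ℕ)) : ℝ) ^ d) * pG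
          - e2 * IA ≤ (∫ ω, F (cubeN d (k * M)) ω ∂μ) / (((k * M : ℕ)) : ℝ) ^ d
      rw [le_div_iff₀ hP0]
      rw [hNdef] at h9
      have h12 : ((((k * M - (m + 2 * k) : ℕ)) : ℝ)) ^ d / (((k * M : ℕ)) : ℝ) ^ d
          * (((k * M : ℕ)) : ℝ) ^ d = ((((k * M - (m + 2 * k) : ℕ)) : ℝ)) ^ d :=
        div_mul_cancel₀ _ (ne_of_gt hP0)
      calc (c * (((((k * M - (m + 2 * k) : ℕ)) : ℝ)) ^ d / (((k * M : ℕ)) : ℝ) ^ d) * pG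
          - e2 * IA) * (((k * M : ℕ)) : ℝ) ^ d
          = c * (((((k * M - (m + 2 * k) : ℕ)) : ℝ)) ^ d / (((k * M : ℕ)) : ℝ) ^ d
            * (((k * M : ℕ)) : ℝ) ^ d) * pG - IA * (e2 * (((k * M : ℕ)) : ℝ) ^ d) := by
            rw [hIAdef]; ring
        _ = c * ((((k * M - (m + 2 * k) : ℕ)) : ℝ)) ^ d * pG
            - IA * (e2 * (((k * M : ℕ)) : ℝ) ^ d) := by rw [h12]
        _ ≤ ∫ ω, F (cubeN d (k * M)) ω ∂μ := h9
    -- let M → ∞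
    have hφ : Tendsto (fun M : ℕ => k * M) atTop atTop :=
      tendsto_atTop_mono (fun M => Nat.le_mul_of_pos_left M hk) tendsto_id
    have hratio : Tendsto
        (fun M : ℕ => ((((k * M - (m + 2 * k) : ℕ)) : ℝ)) ^ d / (((k * M : ℕ)) : ℝ) ^ d)
        atTop (𝓝 1) := by
      have h2 : Tendsto (fun M : ℕ => ((m + 2 * k : ℕ) : ℝ) / (((k * M : ℕ)) : ℝ))
          atTop (𝓝 0) :=
        (tendsto_const_div_atTop_nhds_zero_nat ((m + 2 * k : ℕ) : ℝ)).comp hφ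
      have h3 : Tendsto
          (fun M : ℕ => (1 - ((m + 2 * k : ℕ) : ℝ) / (((k * M : ℕ)) : ℝ)) ^ d)
          atTop (𝓝 1) := by
        have h4 := (Filter.Tendsto.sub
          (tendsto_const_nhds : Tendsto (fun _ : ℕ => (1:ℝ)) atTop (𝓝 1)) h2).pow d
        simpa using h4
      refine h3.congr' ?_
      filter_upwards [hφ.eventually_ge_atTop (m + 2 * k + 1)] with M hM
      have hle : m + 2 * k ≤ k * M := by omega
      have hpos' : (0:ℝ) < (((k * M : ℕ)) : ℝ) := by
        have h5 : (1:ℕ) ≤ k * M := by omega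
        exact_mod_cast h5
      have h6 : (1 - ((m + 2 * k : ℕ) : ℝ) / (((k * M : ℕ)) : ℝ))
          = ((((k * M : ℕ)) : ℝ) - ((m + 2 * k : ℕ) : ℝ)) / (((k * M : ℕ)) : ℝ) := by
        rw [eq_div_iff (ne_of_gt hpos'), sub_mul, div_mul_cancel₀ _ (ne_of_gt hpos'), one_mul]
      rw [h6, Nat.cast_sub hle, ← div_pow]
    have hLlim : Tendsto (fun M : ℕ =>
        c * (((((k * M - (m + 2 * k) : ℕ)) : ℝ)) ^ d / (((k * M : ℕ)) : ℝ) ^ d) * pG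
          - e2 * IA) atTop (𝓝 (c * 1 * pG - e2 * IA)) :=
      ((hratio.const_mul c).mul_const pG).sub tendsto_const_nhds
    have h6 : ∀ ε : ℝ, 0 < ε → c * pG - e2 * IA - ε ≤ γ := by
      intro ε hε
      have h7 : ∀ᶠ M in atTop, c * pG - e2 * IA - ε <
          c * (((((k * M - (m + 2 * k) : ℕ)) : ℝ)) ^ d / (((k * M : ℕ)) : ℝ) ^ d) * pG
            - e2 * IA :=
        hLlim.eventually (eventually_gt_nhds
          (show c * pG - e2 * IA - ε < c * 1 * pG - e2 * IA by linarith))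
      have h8 : ∀ᶠ M in atTop, c * pG - e2 * IA - ε < avgSeq μ F (k * M) := by
        filter_upwards [h7, hφ.eventually_ge_atTop (m + 2 * k + 1)] with M h7M hM
        exact lt_of_lt_of_le h7M (perM M hM)
      have h9 : ∃ᶠ n in atTop, c * pG - e2 * IA - ε ≤ avgSeq μ F n :=
        hφ.frequently ((h8.frequently).mono fun M h => le_of_lt h)
      exact le_limsup_of_frequently_le h9 hfin
    by_contra hcon
    push_neg at hcon
    have h11 := half_pos (sub_pos.mpr hcon)
    have h10 := h6 _ h11
    have h12 : c * pG - e2 * IA - (c * pG - e2 * IA - γ) / 2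
        = γ + (c * pG - e2 * IA - γ) / 2 := by ring
    rw [h12] at h10
    have h13 : (c * pG - e2 * IA - γ) / 2 ≤ 0 := (add_le_iff_nonpos_right _).mp h10
    exact absurd h13 (not_le.mpr h11)
  -- now let m → ∞ for fixed k
  have key2 : ∀ k : ℕ, 1 ≤ k →
      α / ((3 : ℝ) ^ d * (1 + 2 / (k : ℝ)) ^ d) * p
        - (4 * (d : ℝ) / k + ((1 + 2 / (k : ℝ)) ^ d - 1)) * (∫ ω, A ω ∂μ) ≤ γ := by
    intro k hk
    set c : ℝ := α / ((3 : ℝ) ^ d * (1 + 2 / (k : ℝ)) ^ d) with hcdef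
    set e2 : ℝ := 4 * (d : ℝ) / k + ((1 + 2 / (k : ℝ)) ^ d - 1) with he2def
    set IA : ℝ := ∫ ω, A ω ∂μ with hIAdef
    have hc0 : 0 ≤ c := by
      rw [hcdef]
      have h1 : (0:ℝ) < (1 + 2 / (k : ℝ)) ^ d := by positivity
      positivity
    have hμlim : Tendsto (fun m => μ (G k m)) atTop (𝓝 (μ (⋃ m, G k m))) :=
      tendsto_measure_iUnion_atTop (hGmono k)
    have hμlimR : Tendsto (fun m => (μ (G k m)).toReal) atTop
        (𝓝 ((μ (⋃ m, G k m)).toReal)) :=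
      (ENNReal.tendsto_toReal (measure_ne_top μ _)).comp hμlim
    have hEU : μ E ≤ μ (⋃ m, G k m) := by
      apply measure_mono_ae
      have hae2 : ∀ᵐ ω ∂μ, ∀ n : ℕ, 1 ≤ n → g n ω = F (cubeN d n) ω := by
        rw [ae_all_iff]
        intro n
        by_cases hn : 1 ≤ n
        · filter_upwards [hgae n hn] with ω h _ using h
        · filter_upwards with ω h using absurd h hn
      filter_upwards [hae2] with ω hω hωE
      have hcob : IsCoboundedUnder (· ≤ ·) atTop
          (fun n => F (cubeN d n) ω / (n : ℝ) ^ d) :=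
        isCoboundedUnder_le_of_le atTop (fun n => hcube0 ω n)
      have hfreq := frequently_lt_of_lt_limsup hcob hωE
      rw [Filter.frequently_atTop] at hfreq
      obtain ⟨n, hn1, hn2⟩ := hfreq (k * k + 1)
      have hn0 : 1 ≤ n := by omega
      have hnpow : (0:ℝ) < ((n : ℕ) : ℝ) ^ d := by
        have h2 : (0:ℝ) < ((n : ℕ) : ℝ) := by exact_mod_cast hn0
        positivity
      refine Set.mem_iUnion.mpr ⟨n, ⟨n, by omega, le_refl n, ?_⟩⟩
      rw [hω n hn0]
      exact (lt_div_iff₀ hnpow).mp hn2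
    have h1 : ∀ᶠ m in atTop, c * (μ (G k m)).toReal - e2 * IA ≤ γ :=
      eventually_atTop.mpr ⟨k * k, fun m hm => key k m hk hm⟩
    have h2 : Tendsto (fun m => c * (μ (G k m)).toReal - e2 * IA) atTop
        (𝓝 (c * (μ (⋃ m, G k m)).toReal - e2 * IA)) :=
      ((hμlimR.const_mul c).sub tendsto_const_nhds)
    have h3 := le_of_tendsto h2 h1
    have h4 : p ≤ (μ (⋃ m, G k m)).toReal :=
      ENNReal.toReal_mono (measure_ne_top μ _) hEU
    have h5 := mul_le_mul_of_nonneg_left h4 hc0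
    linarith
  -- let k → ∞
  set IA : ℝ := ∫ ω, A ω ∂μ with hIAdef
  have h2k : Tendsto (fun k : ℕ => 2 / (k : ℝ)) atTop (𝓝 0) :=
    tendsto_const_div_atTop_nhds_zero_nat 2
  have hβk : Tendsto (fun k : ℕ => (1 + 2 / (k : ℝ)) ^ d) atTop (𝓝 1) := by
    have h3 := (Filter.Tendsto.add
      (tendsto_const_nhds : Tendsto (fun _ : ℕ => (1:ℝ)) atTop (𝓝 1)) h2k).pow d
    simpa using h3
  have h4dk : Tendsto (fun k : ℕ => 4 * (d : ℝ) / (k : ℝ)) atTop (𝓝 0) :=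
    tendsto_const_div_atTop_nhds_zero_nat (4 * (d:ℝ))
  have hden : Tendsto (fun k : ℕ => (3 : ℝ) ^ d * (1 + 2 / (k : ℝ)) ^ d) atTop
      (𝓝 ((3:ℝ) ^ d)) := by
    have h5 := hβk.const_mul ((3:ℝ) ^ d)
    simpa using h5
  have hcdiv : Tendsto (fun k : ℕ => α / ((3 : ℝ) ^ d * (1 + 2 / (k : ℝ)) ^ d)) atTop
      (𝓝 (α / (3:ℝ) ^ d)) :=
    tendsto_const_nhds.div hden (by positivity)
  have he2lim : Tendsto (fun k : ℕ => 4 * (d : ℝ) / k + ((1 + 2 / (k : ℝ)) ^ d - 1))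
      atTop (𝓝 0) := by
    have h6 := h4dk.add (hβk.sub_const 1)
    simpa using h6
  have hlim : Tendsto (fun k : ℕ => α / ((3 : ℝ) ^ d * (1 + 2 / (k : ℝ)) ^ d) * p
      - (4 * (d : ℝ) / k + ((1 + 2 / (k : ℝ)) ^ d - 1)) * IA) atTop
      (𝓝 (α / (3:ℝ) ^ d * p - 0 * IA)) :=
    (hcdiv.mul_const p).sub (he2lim.mul_const IA)
  have hfin2 : α / (3:ℝ) ^ d * p - 0 * IA ≤ γ :=
    le_of_tendsto hlim (eventually_atTop.mpr ⟨1, fun k hk => key2 k hk⟩)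
  have h3d : (0:ℝ) < (3:ℝ) ^ d := by positivity
  have hp3 : p ≤ (3:ℝ) ^ d * γ / α := by
    rw [le_div_iff₀ hα]
    have h7 : α / (3:ℝ) ^ d * p ≤ γ := by linarith
    have h8 := mul_le_mul_of_nonneg_left h7 h3d.le
    calc p * α = (3:ℝ) ^ d * (α / (3:ℝ) ^ d * p) := by field_simp
      _ ≤ (3:ℝ) ^ d * γ := h8
  calc μ E = ENNReal.ofReal p := (ENNReal.ofReal_toReal (measure_ne_top μ E)).symm
    _ ≤ ENNReal.ofReal ((3:ℝ) ^ d * γ / α) := ENNReal.ofReal_le_ofReal hp3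
end

section
/- Let F be an almost superadditive random process with finite time constant γ̃(F) = limsup_{n→∞} (1/|S_n|) E[F_{S_n}]. Then the limit lim_{n→∞} (1/|S_n|) E[F_{S_n}] exists and equals γ̃(F). -/
open MeasureTheory Filter

namespace ConvExp

variable {d : ℕ}

lemma isBoxN_cubeN (n : ℕ) (hn : 0 < n) : IsBoxN (cubeN d n) :=
  ⟨0, fun _ => n, fun _ => hn, by
    ext x; simp [cubeN, Finset.mem_Ico, Fintype.mem_piFinset]⟩

lemma piFinset_image_add (u : Fin d → ℕ) (s : Fin d → Finset ℕ) :
    (Fintype.piFinset fun i => (s i).image fun t => u i + t) =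
      (Fintype.piFinset s).image fun x => u + x := by
  ext y
  simp only [Fintype.mem_piFinset, Finset.mem_image]
  constructor
  · intro h
    refine ⟨fun i => (h i).choose, fun i => ((h i).choose_spec).1, funext fun i => ?_⟩
    exact ((h i).choose_spec).2
  · rintro ⟨x, hx, rfl⟩ i
    exact ⟨x i, hx i, rfl⟩

lemma adj_close {x y : Fin d → ℕ} (h : adjN x y) (i : Fin d) :
    y i ≤ x i + 1 ∧ x i ≤ y i + 1 := by
  have h1 : ((x i : ℤ) - y i).natAbs ≤ 1 := by
    rw [← h]
    exact Finset.single_le_sum (f := fun j => ((x j : ℤ) - y j).natAbs)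
      (fun j _ => Nat.zero_le _) (Finset.mem_univ i)
  omega

lemma ibdN_subset_sdiff (a b : Fin d → ℕ) :
    ibdN (Fintype.piFinset fun i => Finset.Ico (a i) (b i)) ⊆
      (Fintype.piFinset fun i => Finset.Ico (a i) (b i)) \
        (Fintype.piFinset fun i => Finset.Ico (a i + 1) (b i - 1)) := by
  classical
  intro x hx
  rw [ibdN, Finset.mem_filter] at hx
  obtain ⟨hxB, y, hyB, hadj⟩ := hx
  rw [Finset.mem_sdiff]
  refine ⟨hxB, fun hxI => hyB ?_⟩
  simp only [Fintype.mem_piFinset, Finset.mem_Ico] at hxI ⊢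
  intro i
  have h1 := adj_close hadj i
  have h2 := hxI i
  omega

lemma card_ibdN_le (a b : Fin d → ℕ) :
    (ibdN (Fintype.piFinset fun i => Finset.Ico (a i) (b i))).card
      ≤ (∏ i, (b i - a i)) - ∏ i, (b i - a i - 2) := by
  calc (ibdN (Fintype.piFinset fun i => Finset.Ico (a i) (b i))).card
      ≤ ((Fintype.piFinset fun i => Finset.Ico (a i) (b i)) \
          (Fintype.piFinset fun i => Finset.Ico (a i + 1) (b i - 1))).card :=
        Finset.card_le_card (ibdN_subset_sdiff a b)
    _ = (Fintype.piFinset fun i => Finset.Ico (a i) (b i)).card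
        - (Fintype.piFinset fun i => Finset.Ico (a i + 1) (b i - 1)).card := by
        rw [Finset.card_sdiff_of_subset]
        exact Fintype.piFinset_subset _ _ fun i => Finset.Ico_subset_Ico (by omega) (by omega)
    _ = (∏ i, (b i - a i)) - ∏ i, (b i - a i - 2) := by
        rw [Fintype.card_piFinset, Fintype.card_piFinset]
        congr 1
        · exact Finset.prod_congr rfl fun i _ => Nat.card_Ico _ _
        · refine Finset.prod_congr rfl fun i _ => ?_
          rw [Nat.card_Ico]; omega

lemma prod_le_prod_add {ι : Type*} [DecidableEq ι] (s : Finset ι) (u v : ι → ℕ) (c M : ℕ)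
    (hvu : ∀ i ∈ s, v i ≤ u i) (huv : ∀ i ∈ s, u i ≤ v i + c) (hu : ∀ i ∈ s, u i ≤ M) :
    ∏ i ∈ s, u i ≤ (∏ i ∈ s, v i) + s.card * c * M ^ (s.card - 1) := by
  induction s using Finset.induction_on with
  | empty => simp
  | @insert a s ha ih =>
    rw [Finset.prod_insert ha, Finset.prod_insert ha]
    have ih' := ih (fun i hi => hvu i (Finset.mem_insert_of_mem hi))
      (fun i hi => huv i (Finset.mem_insert_of_mem hi))
      (fun i hi => hu i (Finset.mem_insert_of_mem hi))
    have hva : v a ≤ u a := hvu a (Finset.mem_insert_self a s)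
    have hua : u a ≤ v a + c := huv a (Finset.mem_insert_self a s)
    have huM : u a ≤ M := hu a (Finset.mem_insert_self a s)
    have hpv : ∏ i ∈ s, v i ≤ M ^ s.card :=
      Finset.prod_le_pow_card s v M fun i hi => le_trans (hvu i (Finset.mem_insert_of_mem hi))
        (hu i (Finset.mem_insert_of_mem hi))
    have hcard : (insert a s).card = s.card + 1 := Finset.card_insert_of_notMem ha
    rw [hcard]
    have hstep : s.card * c * M ^ (s.card - 1) * M ≤ s.card * c * M ^ s.card := by
      rcases Nat.eq_zero_or_pos s.card with h | h
      · simp [h]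
      · have h2 : M ^ (s.card - 1) * M = M ^ s.card := by
          rw [← pow_succ]; congr 1; omega
        exact le_of_eq (by rw [mul_assoc, h2])
    calc u a * ∏ i ∈ s, u i ≤ u a * ((∏ i ∈ s, v i) + s.card * c * M ^ (s.card - 1)) :=
          Nat.mul_le_mul_left _ ih'
      _ = u a * ∏ i ∈ s, v i + u a * (s.card * c * M ^ (s.card - 1)) := by ring
      _ ≤ (v a + c) * ∏ i ∈ s, v i + M * (s.card * c * M ^ (s.card - 1)) := by
          exact Nat.add_le_add (Nat.mul_le_mul_right _ hua) (Nat.mul_le_mul_right _ huM)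
      _ = v a * ∏ i ∈ s, v i + c * ∏ i ∈ s, v i + s.card * c * M ^ (s.card - 1) * M := by ring
      _ ≤ v a * ∏ i ∈ s, v i + c * M ^ s.card + s.card * c * M ^ s.card := by
          exact Nat.add_le_add (Nat.add_le_add_left (Nat.mul_le_mul_left _ hpv) _) hstep
      _ = v a * ∏ i ∈ s, v i + (s.card + 1) * c * M ^ (s.card + 1 - 1) := by
          simp only [Nat.add_sub_cancel]; ring

section Meas

variable {Ω : Type*} [MeasurableSpace Ω]

/-- A uniform bound for expectations of shapes with sides in `[m, 2m)`. -/
noncomputable def Cbd (μ : Measure Ω) (F : Finset (Fin d → ℕ) → Ω → ℝ) (m : ℕ) : ℝ :=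
  ∑ l ∈ Fintype.piFinset (fun _ : Fin d => Finset.Ico m (2*m)),
    |∫ ω, F (Fintype.piFinset fun i => Finset.range (l i)) ω ∂μ|

lemma Cbd_nonneg (μ : Measure Ω) (F : Finset (Fin d → ℕ) → Ω → ℝ) (m : ℕ) :
    0 ≤ Cbd μ F m := Finset.sum_nonneg fun _ _ => abs_nonneg _

lemma neg_Cbd_le (μ : Measure Ω) (F : Finset (Fin d → ℕ) → Ω → ℝ) (m : ℕ)
    {l : Fin d → ℕ} (hl : ∀ i, m ≤ l i ∧ l i < 2*m) :
    -Cbd μ F m ≤ ∫ ω, F (Fintype.piFinset fun i => Finset.range (l i)) ω ∂μ := by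
  have h1 : |∫ ω, F (Fintype.piFinset fun i => Finset.range (l i)) ω ∂μ| ≤ Cbd μ F m :=
    Finset.single_le_sum (f := fun l : Fin d → ℕ =>
        |∫ ω, F (Fintype.piFinset fun i => Finset.range (l i)) ω ∂μ|)
      (fun _ _ => abs_nonneg _)
      (Fintype.mem_piFinset.2 fun i => Finset.mem_Ico.2 (hl i))
  linarith [neg_abs_le (∫ ω, F (Fintype.piFinset fun i => Finset.range (l i)) ω ∂μ)]

variable {μ : Measure Ω} {τ : (Fin d → ℕ) → Ω → Ω} {F : Finset (Fin d → ℕ) → Ω → ℝ} {A : Ω → ℝ}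

lemma integral_translate (hF : AlmostSuperadditive μ τ F A) (u : Fin d → ℕ)
    (B : Finset (Fin d → ℕ)) (hB : IsBoxN B) :
    ∫ ω, F (B.image fun x => u + x) ω ∂μ = ∫ ω, F B ω ∂μ := by
  rw [hF.shift u B hB]
  have hm := hF.meas u
  have h2 : AEStronglyMeasurable (F B) (Measure.map (τ u) μ) := by
    rw [hm.map_eq]; exact (hF.int B hB).aestronglyMeasurable
  calc ∫ ω, ((F B) ∘ (τ u)) ω ∂μ = ∫ y, F B y ∂(Measure.map (τ u) μ) :=
        (MeasureTheory.integral_map hm.measurable.aemeasurable h2).symm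
    _ = ∫ ω, F B ω ∂μ := by rw [hm.map_eq]

lemma key_estimate (hF : AlmostSuperadditive μ τ F A)
    {m n : ℕ} (hm : 2 ≤ m) (hmn : m ≤ n) :
    ((n / m - 1 : ℕ) : ℝ) ^ d * (∫ ω, F (cubeN d m) ω ∂μ)
      - (((n / m : ℕ) : ℝ) ^ d - ((n / m - 1 : ℕ) : ℝ) ^ d) * Cbd μ F m
      - (∫ ω, A ω ∂μ) * (((n / m : ℕ) : ℝ) ^ d * (2 * d * (2 * m) ^ (d - 1)))
      ≤ ∫ ω, F (cubeN d n) ω ∂μ := by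
  classical
  set q := n / m with hqdef
  have hm0 : 0 < m := by omega
  have hq1 : 1 ≤ q := (Nat.one_le_div_iff hm0).2 hmn
  have hmod : m * q + n % m = n := Nat.div_add_mod n m
  have hr : n % m < m := Nat.mod_lt _ hm0
  have hqm : m * q ≤ n := Nat.le.intro hmod
  have e1 : q * m = m * q := Nat.mul_comm q m
  have e2 : (q - 1) * m = q * m - m := by rw [Nat.sub_mul, one_mul]
  have e3 : m ≤ q * m := Nat.le_mul_of_pos_left m (by omega)
  have hq1m : (q - 1) * m ≤ n := by omega
  -- interval lengths
  set len : Fin q → ℕ := fun j => if (j : ℕ) = q - 1 then n - (q - 1) * m else m with hlen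
  have hlen_lb : ∀ j, m ≤ len j := by
    intro j; simp only [hlen]; split
    · omega
    · exact le_refl m
  have hlen_ub : ∀ j, len j < 2 * m := by
    intro j; simp only [hlen]; split
    · omega
    · omega
  have hIub : ∀ j : Fin q, (j : ℕ) * m + len j ≤ n := by
    intro j
    simp only [hlen]
    split
    · rename_i hj; rw [hj]; omega
    · rename_i hj
      have hjq : (j : ℕ) + 1 ≤ q := j.isLt
      have h4 : ((j : ℕ) + 1) * m ≤ q * m := Nat.mul_le_mul_right m hjq
      have h5 : ((j : ℕ) + 1) * m = (j : ℕ) * m + m := by rw [Nat.add_mul, one_mul]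
      omega
  -- intervals
  set I : Fin q → Finset ℕ := fun j => Finset.Ico ((j : ℕ) * m) ((j : ℕ) * m + len j) with hI
  have hIdisj : ∀ j k : Fin q, (j : ℕ) < (k : ℕ) → Disjoint (I j) (I k) := by
    intro j k hjk
    rw [Finset.disjoint_left]
    intro t htj htk
    simp only [hI, Finset.mem_Ico] at htj htk
    have hjne : (j : ℕ) ≠ q - 1 := by have := k.isLt; omega
    have hlenj : len j = m := by simp only [hlen, if_neg hjne]
    have h4 : ((j : ℕ) + 1) * m ≤ (k : ℕ) * m := Nat.mul_le_mul_right m (by omega)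
    have h5 : ((j : ℕ) + 1) * m = (j : ℕ) * m + m := by rw [Nat.add_mul, one_mul]
    omega
  -- blocks
  set Bv : (Fin d → Fin q) → Finset (Fin d → ℕ) :=
    fun v => Fintype.piFinset fun i => I (v i) with hBv
  set shp : (Fin d → Fin q) → Finset (Fin d → ℕ) :=
    fun v => Fintype.piFinset fun i => Finset.range (len (v i)) with hshp
  have hBox : ∀ v, IsBoxN (Bv v) := by
    intro v
    refine ⟨fun i => (v i : ℕ) * m, fun i => (v i : ℕ) * m + len (v i), fun i => ?_, rfl⟩
    show (v i : ℕ) * m < (v i : ℕ) * m + len (v i)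
    have := hlen_lb (v i); omega
  have hShpBox : ∀ v, IsBoxN (shp v) := by
    intro v
    refine ⟨0, fun i => len (v i), fun i => ?_, ?_⟩
    · show (0 : Fin d → ℕ) i < len (v i)
      simp only [Pi.zero_apply]
      have := hlen_lb (v i); omega
    · simp only [hshp]
      congr 1; funext i; rw [Finset.range_eq_Ico]; rfl
  have hTrans : ∀ v, Bv v = (shp v).image fun x => (fun i => (v i : ℕ) * m) + x := by
    intro v
    simp only [hshp, hBv]
    rw [← piFinset_image_add]
    congr 1; funext i
    rw [Finset.range_eq_Ico, Finset.image_add_left_Ico]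
    simp [hI]
  have hIntBv : ∀ v, ∫ ω, F (Bv v) ω ∂μ = ∫ ω, F (shp v) ω ∂μ := by
    intro v
    rw [hTrans v]
    exact integral_translate hF _ _ (hShpBox v)
  -- the partition
  set e : (Fin d → Fin q) ≃ Fin (q ^ d) := finFunctionFinEquiv with he
  set Bs : Fin (q ^ d) → Finset (Fin d → ℕ) := fun i => Bv (e.symm i) with hBs
  have hBoxes : ∀ i, IsBoxN (Bs i) := fun i => hBox _
  have hDisjV : ∀ v w : Fin d → Fin q, v ≠ w → Disjoint (Bv v) (Bv w) := by
    intro v w hvw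
    obtain ⟨i0, hi0⟩ := Function.ne_iff.1 hvw
    rw [Finset.disjoint_left]
    intro x hxv hxw
    simp only [hBv, Fintype.mem_piFinset] at hxv hxw
    rcases Nat.lt_or_ge (v i0 : ℕ) (w i0 : ℕ) with h | h
    · exact Finset.disjoint_left.1 (hIdisj _ _ h) (hxv i0) (hxw i0)
    · have h' : (w i0 : ℕ) < (v i0 : ℕ) := by
        rcases Nat.lt_or_ge (w i0 : ℕ) (v i0 : ℕ) with h2 | h2
        · exact h2
        · exact absurd (Fin.ext (le_antisymm h h2)) (Ne.symm hi0)
      exact Finset.disjoint_left.1 (hIdisj _ _ h') (hxw i0) (hxv i0)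
  have hDisj : ∀ i j : Fin (q ^ d), i ≠ j → Disjoint (Bs i) (Bs j) := by
    intro i j hij
    exact hDisjV _ _ (fun h => hij (by simpa using congrArg e h))
  have hUnion : Finset.univ.biUnion Bs = cubeN d n := by
    ext x
    rw [Finset.mem_biUnion]
    simp only [cubeN, Fintype.mem_piFinset, Finset.mem_range]
    constructor
    · rintro ⟨i, _, hx⟩
      simp only [hBs, hBv, Fintype.mem_piFinset, hI, Finset.mem_Ico] at hx
      intro i0
      have := hx i0
      have := hIub (e.symm i i0)
      omega
    · intro hx
      set w : Fin d → Fin q := fun i => ⟨min (x i / m) (q - 1), by omega⟩ with hw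
      refine ⟨e w, Finset.mem_univ _, ?_⟩
      have hesymm : e.symm (e w) = w := Equiv.symm_apply_apply e w
      simp only [hBs, hesymm, hBv, Fintype.mem_piFinset, hI, Finset.mem_Ico]
      intro i
      have hxin : x i < n := hx i
      have hdm : x i / m * m ≤ x i := Nat.div_mul_le_self _ _
      have hmod2 : m * (x i / m) + x i % m = x i := Nat.div_add_mod _ _
      have hr2 : x i % m < m := Nat.mod_lt _ hm0
      have hmm : min (x i / m) (q - 1) * m ≤ x i / m * m :=
        Nat.mul_le_mul_right m (Nat.min_le_left _ _)
      constructor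
      · show min (x i / m) (q - 1) * m ≤ x i
        omega
      · show x i < min (x i / m) (q - 1) * m + len (w i)
        have hlw : len (w i)
            = if min (x i / m) (q - 1) = q - 1 then n - (q - 1) * m else m := rfl
        rw [hlw]
        split_ifs with hj
        · rw [hj]; omega
        · have hmin : min (x i / m) (q - 1) = x i / m := by omega
          rw [hmin]
          have hcm : x i / m * m = m * (x i / m) := Nat.mul_comm _ _
          omega
  have hBUbox : IsBoxN (Finset.univ.biUnion Bs) := by
    rw [hUnion]; exact isBoxN_cubeN n (by omega)
  have hsuper := hF.superadd (q ^ d) Bs hBoxes hDisj hBUbox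
  set K : ℝ := ∑ i : Fin (q ^ d), ((ibdN (Bs i)).card : ℝ) with hK
  -- integrate
  have hGint : Integrable (fun ω => (∑ i, F (Bs i) ω) - A ω * K) μ :=
    (integrable_finset_sum Finset.univ fun i _ => hF.int _ (hBoxes i)).sub
      (hF.Aint.mul_const K)
  have hMono : ∫ ω, ((∑ i, F (Bs i) ω) - A ω * K) ∂μ ≤ ∫ ω, F (cubeN d n) ω ∂μ := by
    refine integral_mono hGint (hF.int _ (isBoxN_cubeN n (by omega))) ?_
    intro ω
    have := hsuper ω
    rwa [hUnion] at this
  rw [integral_sub (integrable_finset_sum Finset.univ fun i _ => hF.int _ (hBoxes i))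
      (hF.Aint.mul_const K), integral_finset_sum _ (fun i _ => hF.int _ (hBoxes i)),
      integral_mul_const] at hMono
  -- rewrite the sum of expectations
  have hsum : (∑ i : Fin (q ^ d), ∫ ω, F (Bs i) ω ∂μ)
      = ∑ v : Fin d → Fin q, ∫ ω, F (shp v) ω ∂μ := by
    rw [show (fun i : Fin (q ^ d) => ∫ ω, F (Bs i) ω ∂μ)
        = fun i => ∫ ω, F (shp (e.symm i)) ω ∂μ from funext fun i => hIntBv _]
    exact Equiv.sum_comp e.symm fun v => ∫ ω, F (shp v) ω ∂μ
  -- lower-bound the sum of expectations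
  set am : ℝ := ∫ ω, F (cubeN d m) ω ∂μ with ham
  set p : (Fin d → Fin q) → Prop := fun v => ∀ i, ((v i : ℕ) ≠ q - 1) with hp
  have hgoodshape : ∀ v, p v → shp v = cubeN d m := by
    intro v hv
    simp only [hshp, cubeN]
    congr 1; funext i
    congr 1
    simp only [hlen, if_neg (hv i)]
  have heach : ∀ v : Fin d → Fin q,
      (if p v then am else -Cbd μ F m) ≤ ∫ ω, F (shp v) ω ∂μ := by
    intro v
    split
    · rename_i hv; rw [hgoodshape v hv]
    · exact neg_Cbd_le μ F m fun i => ⟨hlen_lb (v i), hlen_ub (v i)⟩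
  have hScard : (Finset.univ.filter p).card = (q - 1) ^ d := by
    have h1 : Finset.univ.filter p
        = Fintype.piFinset (fun _ : Fin d =>
            Finset.univ.filter fun j : Fin q => (j : ℕ) ≠ q - 1) := by
      ext v
      simp [hp, Fintype.mem_piFinset]
    rw [h1, Fintype.card_piFinset]
    have h2 : (Finset.univ.filter fun j : Fin q => (j : ℕ) ≠ q - 1).card = q - 1 := by
      have h3 : (Finset.univ.filter fun j : Fin q => (j : ℕ) ≠ q - 1)
          = Finset.univ.erase ⟨q - 1, by omega⟩ := by
        ext j
        simp [Finset.mem_erase, Fin.ext_iff]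
      rw [h3, Finset.card_erase_of_mem (Finset.mem_univ _), Finset.card_univ, Fintype.card_fin]
    simp [h2]
  have hNcard : (Finset.univ.filter fun v => ¬ p v).card = q ^ d - (q - 1) ^ d := by
    have h1 := Finset.card_filter_add_card_filter_not (s := Finset.univ) (p := p)
    have h2 : (Finset.univ : Finset (Fin d → Fin q)).card = q ^ d := by
      rw [Finset.card_univ, Fintype.card_fun]
      simp
    omega
  have hple : ((q - 1) ^ d : ℕ) ≤ q ^ d := Nat.pow_le_pow_left (by omega) d
  have hS : (((q - 1) ^ d : ℕ) : ℝ) * am - ((q ^ d - (q - 1) ^ d : ℕ) : ℝ) * Cbd μ F m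
      ≤ ∑ v : Fin d → Fin q, ∫ ω, F (shp v) ω ∂μ := by
    have h1 : (∑ v : Fin d → Fin q, if p v then am else -Cbd μ F m)
        ≤ ∑ v : Fin d → Fin q, ∫ ω, F (shp v) ω ∂μ :=
      Finset.sum_le_sum fun v _ => heach v
    have h2 : (∑ v : Fin d → Fin q, if p v then am else -Cbd μ F m)
        = (((q - 1) ^ d : ℕ) : ℝ) * am
          - ((q ^ d - (q - 1) ^ d : ℕ) : ℝ) * Cbd μ F m := by
      rw [Finset.sum_ite, Finset.sum_const, Finset.sum_const, hScard, hNcard]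
      simp [nsmul_eq_mul, mul_comm]
      ring
    linarith
  -- bound the boundary sum
  have hibd : ∀ v, (ibdN (Bv v)).card ≤ d * 2 * (2 * m) ^ (d - 1) := by
    intro v
    simp only [hBv, hI]
    have h1 := card_ibdN_le (fun i => (v i : ℕ) * m) (fun i => (v i : ℕ) * m + len (v i))
    have h2 : ∀ i : Fin d, (v i : ℕ) * m + len (v i) - (v i : ℕ) * m = len (v i) :=
      fun i => by omega
    have h3 : (∏ i : Fin d, ((v i : ℕ) * m + len (v i) - (v i : ℕ) * m))
        = ∏ i : Fin d, len (v i) := Finset.prod_congr rfl fun i _ => h2 i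
    have h4 : (∏ i : Fin d, ((v i : ℕ) * m + len (v i) - (v i : ℕ) * m - 2))
        = ∏ i : Fin d, (len (v i) - 2) :=
      Finset.prod_congr rfl fun i _ => by rw [h2 i]
    rw [h3, h4] at h1
    have h5 := prod_le_prod_add (Finset.univ : Finset (Fin d)) (fun i => len (v i))
      (fun i => len (v i) - 2) 2 (2 * m)
      (fun i _ => by show len (v i) - 2 ≤ len (v i); omega)
      (fun i _ => by show len (v i) ≤ len (v i) - 2 + 2; have := hlen_lb (v i); omega)
      (fun i _ => by show len (v i) ≤ 2 * m; have := hlen_ub (v i); omega)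
    simp only [Finset.card_univ, Fintype.card_fin] at h5
    omega
  have hKbd : K ≤ ((q : ℝ)) ^ d * ((d : ℝ) * 2 * (2 * (m : ℝ)) ^ (d - 1)) := by
    rw [hK]
    calc ∑ i : Fin (q ^ d), ((ibdN (Bs i)).card : ℝ)
        ≤ ∑ _i : Fin (q ^ d), ((d * 2 * (2 * m) ^ (d - 1) : ℕ) : ℝ) :=
          Finset.sum_le_sum fun i _ => Nat.cast_le.2 (hibd _)
      _ = ((q ^ d : ℕ) : ℝ) * ((d * 2 * (2 * m) ^ (d - 1) : ℕ) : ℝ) := by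
          rw [Finset.sum_const, Finset.card_univ, Fintype.card_fin, nsmul_eq_mul]
      _ = ((q : ℝ)) ^ d * ((d : ℝ) * 2 * (2 * (m : ℝ)) ^ (d - 1)) := by push_cast; ring
  have hEA : 0 ≤ ∫ ω, A ω ∂μ := integral_nonneg hF.Anonneg
  have hAK : (∫ ω, A ω ∂μ) * K
      ≤ (∫ ω, A ω ∂μ) * (((q : ℝ)) ^ d * ((d : ℝ) * 2 * (2 * (m : ℝ)) ^ (d - 1))) :=
    mul_le_mul_of_nonneg_left hKbd hEA
  -- final assembly
  have hc1 : (((q - 1) ^ d : ℕ) : ℝ) = ((q - 1 : ℕ) : ℝ) ^ d := by push_cast; ring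
  have hc2 : ((q ^ d - (q - 1) ^ d : ℕ) : ℝ) = ((q : ℕ) : ℝ) ^ d - ((q - 1 : ℕ) : ℝ) ^ d := by
    rw [Nat.cast_sub hple]; push_cast; ring
  have hc3 : ((q : ℕ) : ℝ) ^ d * (2 * (d : ℝ) * (2 * (m : ℝ)) ^ (d - 1))
      = ((q : ℝ)) ^ d * ((d : ℝ) * 2 * (2 * (m : ℝ)) ^ (d - 1)) := by ring
  rw [hsum] at hMono
  calc ((q - 1 : ℕ) : ℝ) ^ d * am
      - (((q : ℕ) : ℝ) ^ d - ((q - 1 : ℕ) : ℝ) ^ d) * Cbd μ F m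
      - (∫ ω, A ω ∂μ) * (((q : ℕ) : ℝ) ^ d * (2 * (d : ℝ) * (2 * (m : ℝ)) ^ (d - 1)))
      ≤ (∑ v : Fin d → Fin q, ∫ ω, F (shp v) ω ∂μ) - (∫ ω, A ω ∂μ) * K := by
        have h6 := hS
        rw [hc1, hc2] at h6
        have h7 := hAK
        rw [← hc3] at h7
        linarith
    _ ≤ ∫ ω, F (cubeN d n) ω ∂μ := hMono

end Meas
end ConvExp

namespace ConvExp

lemma tendsto_div_nat {m : ℕ} (hm : 1 ≤ m) :
    Tendsto (fun n : ℕ => ((n / m : ℕ) : ℝ) / (n : ℝ)) atTop (nhds (1 / m)) := by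
  have hm0 : (0:ℝ) < (m:ℝ) := by exact_mod_cast hm
  apply tendsto_of_tendsto_of_tendsto_of_le_of_le'
    (g := fun n : ℕ => 1 / (m:ℝ) - 1 / (n:ℝ)) (h := fun _ : ℕ => 1 / (m:ℝ))
  · have h0 : Tendsto (fun n : ℕ => 1 / (m:ℝ) - 1 / (n:ℝ)) atTop (nhds (1 / m - 0)) :=
      tendsto_const_nhds.sub tendsto_one_div_atTop_nhds_zero_nat
    simpa using h0
  · exact tendsto_const_nhds
  · filter_upwards [eventually_ge_atTop 1] with n hn
    have hn0 : (0:ℝ) < (n:ℝ) := by exact_mod_cast hn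
    have h1 : n < m * (n / m) + m := by
      have := Nat.div_add_mod n m
      have := Nat.mod_lt n (show 0 < m by omega)
      omega
    have h2 : (n:ℝ) < (m:ℝ) * ((n / m : ℕ) : ℝ) + m := by exact_mod_cast h1
    rw [div_sub_div _ _ (ne_of_gt hm0) (ne_of_gt hn0), div_le_div_iff₀ (by positivity) hn0]
    nlinarith [mul_le_mul_of_nonneg_right
      (show (n:ℝ) - (m:ℝ) ≤ (m:ℝ) * ((n / m : ℕ) : ℝ) from by linarith) hn0.le]
  · filter_upwards [eventually_ge_atTop 1] with n hn
    have hn0 : (0:ℝ) < (n:ℝ) := by exact_mod_cast hn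
    have h3 : ((n / m : ℕ) : ℝ) * m ≤ (n:ℝ) := by exact_mod_cast Nat.div_mul_le_self n m
    rw [div_le_div_iff₀ hn0 hm0]
    linarith

lemma tendsto_gfun {d : ℕ} (m : ℕ) (hm : 2 ≤ m) (am C EA : ℝ) :
    Tendsto (fun n : ℕ =>
      (((n / m - 1 : ℕ) : ℝ) ^ d * am
        - (((n / m : ℕ) : ℝ) ^ d - ((n / m - 1 : ℕ) : ℝ) ^ d) * C
        - EA * (((n / m : ℕ) : ℝ) ^ d * (2 * d * (2 * m) ^ (d - 1)))) / (n : ℝ) ^ d)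
      atTop
      (nhds ((1 / (m:ℝ)) ^ d * am
        - EA * ((1 / (m:ℝ)) ^ d * (2 * d * (2 * m) ^ (d - 1))))) := by
  have hm1 : 1 ≤ m := by omega
  have hq := tendsto_div_nat hm1
  have hq1 : Tendsto (fun n : ℕ => ((n / m - 1 : ℕ) : ℝ) / (n : ℝ)) atTop (nhds (1 / m)) := by
    have h0 : Tendsto (fun n : ℕ => ((n / m : ℕ) : ℝ) / (n : ℝ) - 1 / (n:ℝ)) atTop
        (nhds (1 / m - 0)) := hq.sub tendsto_one_div_atTop_nhds_zero_nat
    rw [sub_zero] at h0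
    refine Tendsto.congr' ?_ h0
    filter_upwards [eventually_ge_atTop m] with n hn
    have hq1' : 1 ≤ n / m := (Nat.one_le_div_iff (by omega)).2 hn
    rw [Nat.cast_sub hq1']
    push_cast
    ring
  have hmain : Tendsto (fun n : ℕ =>
      ((((n / m - 1 : ℕ) : ℝ) / n) ^ d) * am
        - (((((n / m : ℕ) : ℝ) / n) ^ d) - ((((n / m - 1 : ℕ) : ℝ) / n) ^ d)) * C
        - EA * (((((n / m : ℕ) : ℝ) / n) ^ d) * (2 * d * (2 * m) ^ (d - 1)))) atTop
      (nhds ((1 / (m:ℝ)) ^ d * am - ((1 / (m:ℝ)) ^ d - (1 / (m:ℝ)) ^ d) * C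
        - EA * ((1 / (m:ℝ)) ^ d * (2 * d * (2 * m) ^ (d - 1))))) :=
    (((hq1.pow d).mul_const am).sub (((hq.pow d).sub (hq1.pow d)).mul_const C)).sub
      (((hq.pow d).mul_const _).const_mul EA)
  rw [show ((1 / (m:ℝ)) ^ d - (1 / (m:ℝ)) ^ d) = 0 from sub_self _, zero_mul, sub_zero] at hmain
  refine Tendsto.congr' ?_ hmain
  filter_upwards [eventually_ge_atTop 1] with n hn
  have hn0 : ((n:ℝ)) ≠ 0 := by
    have : (0:ℝ) < (n:ℝ) := by exact_mod_cast hn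
    exact ne_of_gt this
  rw [div_pow, div_pow]
  field_simp

lemma Lval_eq {d m : ℕ} (hm : 2 ≤ m) (am EA : ℝ) :
    (1 / (m:ℝ)) ^ d * am - EA * ((1 / (m:ℝ)) ^ d * (2 * (d:ℝ) * (2 * (m:ℝ)) ^ (d - 1)))
      = am / (m:ℝ) ^ d - EA * ((2 * (d:ℝ) * (2:ℝ) ^ (d - 1)) / (m:ℝ)) := by
  have hm0 : (m:ℝ) ≠ 0 := Nat.cast_ne_zero.2 (by omega)
  rcases Nat.eq_zero_or_pos d with hd | hd
  · subst hd; norm_num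
  · obtain ⟨k, rfl⟩ : ∃ k, d = k + 1 := ⟨d - 1, by omega⟩
    simp only [Nat.add_sub_cancel]
    push_cast
    rw [mul_pow]
    rw [div_pow, one_pow]; field_simp
    ring

end ConvExp

/-- **Convergence of expectations** (Lemma 3.4 of Akcoglu–Krengel, almost superadditive
version): for an almost superadditive process `F` with finite time constant
`γ̃(F) = limsup_n |S_n|⁻¹ E[F_{S_n}]`, the limit `lim_n |S_n|⁻¹ E[F_{S_n}]` exists and
equals `γ̃(F)`. -/
theorem convergence_of_expectations {d : ℕ} {Ω : Type*} [MeasurableSpace Ω] (μ : Measure Ω)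
    [IsProbabilityMeasure μ]
    (τ : (Fin d → ℕ) → Ω → Ω) (F : Finset (Fin d → ℕ) → Ω → ℝ) (A : Ω → ℝ)
    (hF : AlmostSuperadditive μ τ F A)
    (hfin : IsBoundedUnder (· ≤ ·) atTop (avgSeq μ F)) :
    Filter.Tendsto (avgSeq μ F) atTop (nhds (timeConst μ F)) := by
  classical
  have hEA : 0 ≤ ∫ ω, A ω ∂μ := integral_nonneg hF.Anonneg
  -- the quantitative lower bound for the averages
  have havg_ge : ∀ m : ℕ, 2 ≤ m → ∀ n : ℕ, m ≤ n →
      (((n / m - 1 : ℕ) : ℝ) ^ d * (∫ ω, F (cubeN d m) ω ∂μ)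
        - (((n / m : ℕ) : ℝ) ^ d - ((n / m - 1 : ℕ) : ℝ) ^ d) * ConvExp.Cbd μ F m
        - (∫ ω, A ω ∂μ) * (((n / m : ℕ) : ℝ) ^ d * (2 * d * (2 * m) ^ (d - 1)))) / (n : ℝ) ^ d
      ≤ avgSeq μ F n := by
    intro m hm n hmn
    have h := ConvExp.key_estimate hF hm hmn
    have hn0 : (0:ℝ) < (n:ℝ) ^ d := by
      have h1 : (0:ℝ) < (n:ℝ) := by exact_mod_cast (show 0 < n by omega)
      positivity
    rw [avgSeq]
    exact div_le_div_of_nonneg_right h hn0.le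
  -- lower boundedness and coboundedness
  have hbdd : Filter.IsBoundedUnder (· ≥ ·) atTop (avgSeq μ F) := by
    have ht := ConvExp.tendsto_gfun (d := d) 2 le_rfl (∫ ω, F (cubeN d 2) ω ∂μ)
      (ConvExp.Cbd μ F 2) (∫ ω, A ω ∂μ)
    set L2 := (1 / (2:ℝ)) ^ d * (∫ ω, F (cubeN d 2) ω ∂μ)
      - (∫ ω, A ω ∂μ) * ((1 / (2:ℝ)) ^ d * (2 * d * (2 * 2) ^ (d - 1))) with hL2
    refine ⟨L2 - 1, ?_⟩
    rw [Filter.eventually_map]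
    filter_upwards [ht.eventually (eventually_gt_nhds (show L2 - 1 < L2 by linarith)),
      eventually_ge_atTop 2] with n h1 h2
    have h3 := havg_ge 2 le_rfl n h2
    have : ((2:ℕ):ℝ) = (2:ℝ) := by norm_num
    rw [this] at h3
    exact le_trans (le_of_lt h1) h3
  have hcob : IsCoboundedUnder (· ≤ ·) atTop (avgSeq μ F) := hbdd.isCoboundedUnder_le
  have hts : timeConst μ F = limsup (avgSeq μ F) atTop := rfl
  refine tendsto_order.2 ⟨?_, ?_⟩
  · intro c hc
    set γ := timeConst μ F with hγ
    -- the vanishing correction term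
    have hlim0 : Tendsto (fun m : ℕ => (∫ ω, A ω ∂μ) * ((2 * (d:ℝ) * (2:ℝ) ^ (d - 1)) / (m:ℝ)))
        atTop (nhds 0) := by
      have h0 := tendsto_const_div_atTop_nhds_zero_nat
        ((∫ ω, A ω ∂μ) * (2 * (d:ℝ) * (2:ℝ) ^ (d - 1)))
      refine Tendsto.congr (fun n => ?_) h0
      rw [mul_div_assoc]
    have h1 : ∃ᶠ k : ℕ in atTop, (c + γ) / 2 < avgSeq μ F k := by
      apply frequently_lt_of_lt_limsup hcob
      linarith
    have h2 : ∀ᶠ k : ℕ in atTop, 2 ≤ k ∧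
        (∫ ω, A ω ∂μ) * ((2 * (d:ℝ) * (2:ℝ) ^ (d - 1)) / (k:ℝ)) < (γ - c) / 2 :=
      (eventually_ge_atTop 2).and (hlim0.eventually (eventually_lt_nhds (by linarith)))
    obtain ⟨k, hk1, hk2, hk3⟩ := (h1.and_eventually h2).exists
    have hL : c < (1 / (k:ℝ)) ^ d * (∫ ω, F (cubeN d k) ω ∂μ)
        - (∫ ω, A ω ∂μ) * ((1 / (k:ℝ)) ^ d * (2 * d * (2 * k) ^ (d - 1))) := by
      rw [ConvExp.Lval_eq hk2]
      have havgk : avgSeq μ F k = (∫ ω, F (cubeN d k) ω ∂μ) / (k:ℝ) ^ d := rfl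
      rw [havgk] at hk1
      linarith
    have ht := ConvExp.tendsto_gfun (d := d) k hk2 (∫ ω, F (cubeN d k) ω ∂μ) (ConvExp.Cbd μ F k)
      (∫ ω, A ω ∂μ)
    filter_upwards [ht.eventually (eventually_gt_nhds hL), eventually_ge_atTop k] with n hn1 hn2
    exact lt_of_lt_of_le hn1 (havg_ge k hk2 n hn2)
  · intro c hc
    rw [hts] at hc
    exact eventually_lt_of_limsup_lt hc hfin
end

section
/- Let F be an almost superadditive process and suppose F is nonnegative. Define f̄(ω) = limsup_n (1/|S_n|) F_{S_n}(ω). Then for any fixed integer m ≥ 1, f̄(ω) = limsup_{k→∞} (1/|S_{km}|) F_{S_{km}}(ω); similarly for the liminf. -/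
open MeasureTheory Filter

open Finset in
lemma adjN_exists {d : ℕ} {x y : Fin d → ℕ} (h : adjN x y) :
    ∃ i, ((x i : ℤ) - y i).natAbs = 1 ∧ ∀ j, j ≠ i → x j = y j := by
  unfold adjN at h
  have h0 : ∃ i ∈ Finset.univ, ((x i : ℤ) - y i).natAbs ≠ 0 :=
    Finset.exists_ne_zero_of_sum_ne_zero (by omega)
  obtain ⟨i, -, hi⟩ := h0
  rw [← Finset.add_sum_erase _ _ (Finset.mem_univ i)] at h
  have hrest : ∀ j ∈ Finset.univ.erase i, ((x j : ℤ) - y j).natAbs = 0 := by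
    rw [← Finset.sum_eq_zero_iff]
    omega
  refine ⟨i, by omega, fun j hj => ?_⟩
  have := hrest j (Finset.mem_erase.2 ⟨hj, Finset.mem_univ j⟩)
  omega

lemma mem_box_iff {d : ℕ} (a b : Fin d → ℕ) (x : Fin d → ℕ) :
    x ∈ (Fintype.piFinset fun i => Finset.Ico (a i) (b i)) ↔ ∀ i, a i ≤ x i ∧ x i < b i := by
  simp [Fintype.mem_piFinset, Finset.mem_Ico]

lemma slice_card_le {d N : ℕ} (a b : Fin d → ℕ) (hbN : ∀ i, b i ≤ N) (i : Fin d) (c : ℕ) :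
    ((Fintype.piFinset fun j => Finset.Ico (a j) (b j)).filter (fun x => x i = c)).card
      ≤ N ^ (d - 1) := by
  classical
  have hsub : ((Fintype.piFinset fun j => Finset.Ico (a j) (b j)).filter (fun x => x i = c))
      ⊆ Fintype.piFinset (fun j => if j = i then ({c} : Finset ℕ) else Finset.range N) := by
    intro x hx
    rw [Finset.mem_filter, mem_box_iff] at hx
    rw [Fintype.mem_piFinset]
    intro j
    by_cases hji : j = i
    · simp [hji, hx.2]
    · simp only [if_neg hji, Finset.mem_range]
      exact lt_of_lt_of_le (hx.1 j).2 (hbN j)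
  calc _ ≤ (Fintype.piFinset (fun j => if j = i then ({c} : Finset ℕ) else Finset.range N)).card :=
        Finset.card_le_card hsub
    _ = ∏ j, (if j = i then ({c} : Finset ℕ) else Finset.range N).card :=
        Fintype.card_piFinset _
    _ = ∏ j, (if j = i then 1 else N) := by
        apply Finset.prod_congr rfl; intro j _; split_ifs <;> simp
    _ ≤ N ^ (d - 1) := by
        rw [← Finset.prod_erase_mul _ _ (Finset.mem_univ i)]
        simp only [if_pos rfl, mul_one]
        rw [Finset.prod_ite_of_false]
        · rw [Finset.prod_const, Finset.card_erase_of_mem (Finset.mem_univ i)]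
          simp
        · intro j hj; exact Finset.ne_of_mem_erase hj

lemma ibd_mem_face {d : ℕ} {a b : Fin d → ℕ} {x : Fin d → ℕ}
    (hx : x ∈ ibdN (Fintype.piFinset fun i => Finset.Ico (a i) (b i))) :
    x ∈ (Fintype.piFinset fun i => Finset.Ico (a i) (b i)) ∧
      ∃ i, x i = a i ∨ x i = b i - 1 := by
  classical
  rw [ibdN, Finset.mem_filter] at hx
  obtain ⟨hxB, y, hyB, hadj⟩ := hx
  refine ⟨hxB, ?_⟩
  obtain ⟨i, hi1, hi2⟩ := adjN_exists hadj
  rw [mem_box_iff] at hxB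
  refine ⟨i, ?_⟩
  have hyi : ¬(a i ≤ y i ∧ y i < b i) := by
    intro hyi
    apply hyB
    rw [mem_box_iff]
    intro j
    by_cases hji : j = i
    · subst hji; exact hyi
    · rw [← hi2 j hji]; exact hxB j
  have := hxB i
  omega

open Finset in
lemma ibd_card_le {d N : ℕ} (a b : Fin d → ℕ) (hbN : ∀ i, b i ≤ N) :
    ((ibdN (Fintype.piFinset fun i => Finset.Ico (a i) (b i))).card : ℕ)
      ≤ 2 * d * N ^ (d - 1) := by
  classical
  set B := Fintype.piFinset fun i => Finset.Ico (a i) (b i) with hB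
  have hsub : ibdN B ⊆ (Finset.univ : Finset (Fin d)).biUnion
      (fun i => B.filter (fun x => x i = a i) ∪ B.filter (fun x => x i = b i - 1)) := by
    intro x hx
    obtain ⟨hxB, i, hi⟩ := ibd_mem_face hx
    rw [Finset.mem_biUnion]
    refine ⟨i, Finset.mem_univ i, ?_⟩
    rw [Finset.mem_union, Finset.mem_filter, Finset.mem_filter]
    rcases hi with h | h
    · exact Or.inl ⟨hxB, h⟩
    · exact Or.inr ⟨hxB, h⟩
  calc (ibdN B).card ≤ _ := Finset.card_le_card hsub
    _ ≤ ∑ i : Fin d, ((B.filter (fun x => x i = a i)).card +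
          (B.filter (fun x => x i = b i - 1)).card) := by
        refine le_trans (Finset.card_biUnion_le) (Finset.sum_le_sum fun i _ => ?_)
        exact Finset.card_union_le _ _
    _ ≤ ∑ _i : Fin d, (N ^ (d-1) + N ^ (d-1)) := by
        refine Finset.sum_le_sum fun i _ => ?_
        exact add_le_add (slice_card_le a b hbN i _) (slice_card_le a b hbN i _)
    _ = 2 * d * N ^ (d - 1) := by
        rw [Finset.sum_const, Finset.card_univ, Fintype.card_fin]
        ring

lemma cubeN_eq_box (d n : ℕ) :
    cubeN d n = Fintype.piFinset fun _ : Fin d => Finset.Ico 0 n := by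
  unfold cubeN
  congr 1
  funext i
  exact Finset.range_eq_Ico n

lemma cube_step {d : ℕ} {Ω : Type*} [MeasurableSpace Ω] {μ : MeasureTheory.Measure Ω}
    {τ : (Fin d → ℕ) → Ω → Ω} {F : Finset (Fin d → ℕ) → Ω → ℝ} {A : Ω → ℝ}
    (hF : AlmostSuperadditive μ τ F A)
    (hpos : ∀ B, IsBoxN B → ∀ ω, 0 ≤ F B ω) (ω : Ω)
    {n N : ℕ} (hn : 0 < n) (hnN : n < N) :
    F (cubeN d n) ω - A ω * ((2 * d * (d + 1) : ℕ) * (N : ℝ) ^ (d - 1)) ≤ F (cubeN d N) ω := by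
  classical
  rcases Nat.eq_zero_or_pos d with hd | hd
  · subst hd
    have : cubeN 0 n = cubeN 0 N := by
      ext x
      unfold cubeN
      rw [Fintype.mem_piFinset, Fintype.mem_piFinset]
      exact ⟨fun _ i => i.elim0, fun _ i => i.elim0⟩
    rw [this]
    have hA := hF.Anonneg ω
    have : (0:ℝ) ≤ A ω * ((2 * 0 * (0 + 1) : ℕ) * (N : ℝ) ^ (0 - 1)) := by positivity
    linarith
  -- the slabs
  set slab : Fin d → Finset (Fin d → ℕ) := fun i => Fintype.piFinset fun j =>
      if j < i then Finset.Ico 0 N else if j = i then Finset.Ico n N else Finset.Ico 0 n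
    with hslab
  set Bs : Fin (d + 1) → Finset (Fin d → ℕ) := Fin.cons (cubeN d n) slab with hBs
  -- expressing each piece as an explicit box
  have hslab_box : ∀ i : Fin d, slab i = Fintype.piFinset fun j =>
      Finset.Ico ((fun j => if j = i then n else 0) j)
        ((fun j => if j < i then N else if j = i then N else n) j) := by
    intro i
    show (Fintype.piFinset fun j =>
      if j < i then Finset.Ico 0 N else if j = i then Finset.Ico n N else Finset.Ico 0 n) = _
    congr 1
    funext j
    rcases lt_trichotomy j i with h | h | h
    · simp only [if_pos h, if_neg (ne_of_lt h)]
    · have hlt : ¬ j < i := by rw [h]; exact lt_irrefl i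
      simp only [if_pos h, if_neg hlt]
    · simp only [if_neg (ne_of_gt h), if_neg (not_lt_of_gt h)]
  have hslab_isbox : ∀ i, IsBoxN (slab i) := by
    intro i
    refine ⟨_, _, ?_, hslab_box i⟩
    intro j
    rcases lt_trichotomy j i with h | h | h
    · simp only [if_pos h, if_neg (ne_of_lt h)]; omega
    · have hlt : ¬ j < i := by rw [h]; exact lt_irrefl i
      simp only [if_pos h, if_neg hlt]; omega
    · simp only [if_neg (ne_of_gt h), if_neg (not_lt_of_gt h)]; omega
  have hbox : ∀ i, IsBoxN (Bs i) := by
    refine Fin.cases ?_ ?_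
    · exact ⟨0, fun _ => n, fun _ => hn, by simpa [hBs] using cubeN_eq_box d n⟩
    · intro i; simpa [hBs] using hslab_isbox i
  -- membership descriptions
  have hmem_slab : ∀ (i : Fin d) (x : Fin d → ℕ), x ∈ slab i ↔
      (∀ j, (j < i → x j < N) ∧ (j = i → n ≤ x j ∧ x j < N) ∧ (i < j → x j < n)) := by
    intro i x
    rw [hslab, Fintype.mem_piFinset]
    constructor
    · intro h j
      have := h j
      rcases lt_trichotomy j i with hj | hj | hj
      · rw [if_pos hj] at this
        simp only [Finset.mem_Ico] at this
        exact ⟨fun _ => this.2, fun h' => absurd h' (ne_of_lt hj), fun h' => absurd h' (not_lt_of_gt hj)⟩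
      · rw [if_neg (by simp [hj]), if_pos hj] at this
        simp only [Finset.mem_Ico] at this
        exact ⟨fun h' => absurd h' (by simp [hj]), fun _ => this, fun h' => absurd h' (by simp [hj])⟩
      · rw [if_neg (not_lt_of_gt hj), if_neg (ne_of_gt hj)] at this
        simp only [Finset.mem_Ico] at this
        exact ⟨fun h' => absurd (lt_trans h' hj) (lt_irrefl j),
          fun h' => absurd h' (ne_of_gt hj), fun _ => this.2⟩
    · intro h j
      have := h j
      rcases lt_trichotomy j i with hj | hj | hj
      · rw [if_pos hj]; simp only [Finset.mem_Ico]; exact ⟨Nat.zero_le _, this.1 hj⟩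
      · rw [if_neg (by simp [hj]), if_pos hj]
        simp only [Finset.mem_Ico]; exact this.2.1 hj
      · rw [if_neg (not_lt_of_gt hj), if_neg (ne_of_gt hj)]
        simp only [Finset.mem_Ico]; exact ⟨Nat.zero_le _, this.2.2 hj⟩
  have hmem_cube : ∀ (M : ℕ) (x : Fin d → ℕ), x ∈ cubeN d M ↔ ∀ j, x j < M := by
    intro M x; simp [cubeN, Fintype.mem_piFinset]
  -- disjointness
  have hdisj : ∀ i j : Fin (d+1), i ≠ j → Disjoint (Bs i) (Bs j) := by
    have key : ∀ i j : Fin (d+1), i < j → Disjoint (Bs i) (Bs j) := by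
      intro i j hij
      rw [Finset.disjoint_left]
      intro x hxi hxj
      rcases Fin.eq_zero_or_eq_succ i with rfl | ⟨i', rfl⟩
      · rcases Fin.eq_zero_or_eq_succ j with rfl | ⟨j', rfl⟩
        · exact absurd rfl (ne_of_lt hij)
        · simp only [hBs, Fin.cons_zero, Fin.cons_succ] at hxi hxj
          rw [hmem_cube] at hxi
          rw [hmem_slab] at hxj
          have h1 := hxi j'
          have h2 := ((hxj j').2.1 rfl).1
          omega
      · rcases Fin.eq_zero_or_eq_succ j with rfl | ⟨j', rfl⟩
        · exact absurd (Fin.succ_pos i') (not_lt_of_gt hij)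
        · simp only [hBs, Fin.cons_succ] at hxi hxj
          rw [hmem_slab] at hxi hxj
          have hij' : i' < j' := by
            rwa [Fin.succ_lt_succ_iff] at hij
          have h1 : x j' < n := (hxi j').2.2 hij'
          have h2 : n ≤ x j' := ((hxj j').2.1 rfl).1
          omega
    intro i j hij
    rcases lt_or_gt_of_ne hij with h | h
    · exact key i j h
    · exact (key j i h).symm
  -- the union
  have hunion : Finset.univ.biUnion Bs = cubeN d N := by
    ext x
    rw [Finset.mem_biUnion, hmem_cube]
    constructor
    · rintro ⟨i, -, hxi⟩
      rcases Fin.eq_zero_or_eq_succ i with rfl | ⟨i', rfl⟩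
      · simp only [hBs, Fin.cons_zero] at hxi
        rw [hmem_cube] at hxi
        exact fun j => lt_trans (hxi j) hnN
      · simp only [hBs, Fin.cons_succ] at hxi
        rw [hmem_slab] at hxi
        intro j
        have := hxi j
        rcases lt_trichotomy j i' with hj | hj | hj
        · exact this.1 hj
        · exact (this.2.1 hj).2
        · exact lt_trans (this.2.2 hj) hnN
    · intro hx
      by_cases hall : ∀ j, x j < n
      · exact ⟨0, Finset.mem_univ _, by simp only [hBs, Fin.cons_zero]; rw [hmem_cube]; exact hall⟩
      · push_neg at hall
        set s : Finset (Fin d) := Finset.univ.filter (fun j => n ≤ x j) with hs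
        have hsne : s.Nonempty := by
          obtain ⟨j, hj⟩ := hall
          exact ⟨j, by simp [hs, hj]⟩
        set i := s.max' hsne with hi
        have hiS : i ∈ s := s.max'_mem hsne
        have hin : n ≤ x i := by
          simpa [hs] using hiS
        refine ⟨i.succ, Finset.mem_univ _, ?_⟩
        simp only [hBs, Fin.cons_succ]
        rw [hmem_slab]
        intro j
        refine ⟨fun _ => hx j, fun hj => by rw [hj]; exact ⟨hin, hx i⟩, fun hj => ?_⟩
        by_contra hjn
        push_neg at hjn
        have hjs : j ∈ s := by simp [hs, hjn]
        exact absurd (s.le_max' j hjs) (not_le_of_gt hj)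
  -- apply superadditivity
  have hsup := hF.superadd (d+1) Bs hbox hdisj (hunion ▸ ⟨0, fun _ => N, fun _ => lt_of_le_of_lt (Nat.zero_le n) hnN, by simpa using cubeN_eq_box d N⟩) ω
  rw [hunion] at hsup
  -- lower bound the sum of F's
  have hsumF : F (cubeN d n) ω ≤ ∑ i, F (Bs i) ω := by
    rw [Fin.sum_univ_succ]
    simp only [hBs, Fin.cons_zero, Fin.cons_succ]
    have : (0:ℝ) ≤ ∑ i, F (slab i) ω :=
      Finset.sum_nonneg fun i _ => hpos _ (hslab_isbox i) ω
    linarith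
  -- upper bound the boundary sum
  have hibd : ∀ i, ((ibdN (Bs i)).card : ℝ) ≤ ((2 * d * N ^ (d-1) : ℕ) : ℝ) := by
    intro i
    rw [Nat.cast_le]
    rcases Fin.eq_zero_or_eq_succ i with rfl | ⟨i', rfl⟩
    · simp only [hBs, Fin.cons_zero]
      rw [cubeN_eq_box]
      exact ibd_card_le _ _ (fun _ => le_of_lt hnN)
    · simp only [hBs, Fin.cons_succ]
      rw [hslab_box i']
      refine ibd_card_le _ _ ?_
      intro j
      split_ifs <;> omega
  have hsumibd : (∑ i, ((ibdN (Bs i)).card : ℝ)) ≤ ((2 * d * (d+1) : ℕ) : ℝ) * (N:ℝ)^(d-1) := by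
    calc (∑ i, ((ibdN (Bs i)).card : ℝ)) ≤ ∑ _i : Fin (d+1), ((2 * d * N ^ (d-1) : ℕ) : ℝ) :=
          Finset.sum_le_sum fun i _ => hibd i
      _ = ((2 * d * (d+1) : ℕ) : ℝ) * (N:ℝ)^(d-1) := by
          rw [Finset.sum_const, Finset.card_univ, Fintype.card_fin]
          push_cast
          ring
  have hA := hF.Anonneg ω
  nlinarith [mul_le_mul_of_nonneg_left hsumibd hA]

lemma isBoxN_cubeN {d n : ℕ} (hn : 0 < n) : IsBoxN (cubeN d n) :=
  ⟨0, fun _ => n, fun _ => hn, by simpa using cubeN_eq_box d n⟩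

lemma tendsto_ratio (a b : ℝ) :
    Tendsto (fun n : ℕ => ((n:ℝ) + a) / ((n:ℝ) + b)) atTop (nhds 1) := by
  have hb : Tendsto (fun n : ℕ => (n:ℝ) + b) atTop atTop :=
    tendsto_atTop_add_const_right _ b tendsto_natCast_atTop_atTop
  have h1 : Tendsto (fun n : ℕ => (a - b) / ((n:ℝ) + b)) atTop (nhds 0) :=
    Tendsto.div_atTop tendsto_const_nhds hb
  have h2 : Tendsto (fun n : ℕ => 1 + (a - b) / ((n:ℝ) + b)) atTop (nhds 1) := by
    simpa using h1.const_add 1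
  refine h2.congr' ?_
  filter_upwards [hb.eventually_gt_atTop 0] with n hn
  field_simp
  ring

/-- **Alternate rates of convergence** (Step 2): for a nonnegative almost superadditive
process and fixed `m ≥ 1`, the pointwise `limsup` and `liminf` of `|S_n|⁻¹ F_{S_n}(ω)`
agree with those of the subsequence `|S_{km}|⁻¹ F_{S_{km}}(ω)` as `k → ∞`. -/
theorem alternate_rates {d : ℕ} {Ω : Type*} [MeasurableSpace Ω] (μ : Measure Ω)
    [IsProbabilityMeasure μ]
    (τ : (Fin d → ℕ) → Ω → Ω) (F : Finset (Fin d → ℕ) → Ω → ℝ) (A : Ω → ℝ)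
    (hF : AlmostSuperadditive μ τ F A)
    (hpos : ∀ B, IsBoxN B → ∀ ω, 0 ≤ F B ω)
    (m : ℕ) (hm : 1 ≤ m) (ω : Ω)
    (hbd : IsBoundedUnder (· ≤ ·) atTop (fun n => F (cubeN d n) ω / (n : ℝ) ^ d)) :
    limsup (fun k => F (cubeN d (k * m)) ω / ((k * m : ℕ) : ℝ) ^ d) atTop
      = limsup (fun n => F (cubeN d n) ω / (n : ℝ) ^ d) atTop ∧
    liminf (fun k => F (cubeN d (k * m)) ω / ((k * m : ℕ) : ℝ) ^ d) atTop
      = liminf (fun n => F (cubeN d n) ω / (n : ℝ) ^ d) atTop := by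
  classical
  -- trivial case `d = 0`
  rcases Nat.eq_zero_or_pos d with hd | hd
  · subst hd
    have hc : ∀ n : ℕ, cubeN 0 n = cubeN 0 0 := by
      intro n; ext x
      unfold cubeN
      rw [Fintype.mem_piFinset, Fintype.mem_piFinset]
      exact ⟨fun _ i => i.elim0, fun _ i => i.elim0⟩
    have h1 : ∀ n : ℕ, F (cubeN 0 n) ω / (n:ℝ)^(0:ℕ) = F (cubeN 0 0) ω := by
      intro n; rw [hc n, pow_zero, div_one]
    have e1 : (fun k : ℕ => F (cubeN 0 (k*m)) ω / ((k*m : ℕ):ℝ)^(0:ℕ))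
        = fun _ => F (cubeN 0 0) ω := funext fun k => h1 (k*m)
    have e2 : (fun n : ℕ => F (cubeN 0 n) ω / ((n:ℕ):ℝ)^(0:ℕ))
        = fun _ => F (cubeN 0 0) ω := funext fun n => h1 n
    rw [e1, e2]
    exact ⟨rfl, rfl⟩
  -- main case `1 ≤ d`
  set v : ℕ → ℝ := fun k => F (cubeN d (k*m)) ω / ((k*m : ℕ):ℝ)^d with hv
  set u : ℕ → ℝ := fun n => F (cubeN d n) ω / (n:ℝ)^d with hu
  have hA : 0 ≤ A ω := hF.Anonneg ω
  set C : ℝ := ((2*d*(d+1) : ℕ) : ℝ) with hC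
  have hC0 : 0 ≤ C := Nat.cast_nonneg _
  have key : ∀ {a b : ℕ}, 0 < a → a ≤ b →
      F (cubeN d a) ω ≤ F (cubeN d b) ω + A ω * (C * (b:ℝ)^(d-1)) := by
    intro a b ha hab
    rcases eq_or_lt_of_le hab with rfl | h
    · have : 0 ≤ A ω * (C * (a:ℝ)^(d-1)) := by positivity
      linarith
    · linarith [cube_step hF hpos ω ha h]
  have hu0 : ∀ n : ℕ, 1 ≤ n → 0 ≤ u n := fun n hn =>
    div_nonneg (hpos _ (isBoxN_cubeN hn) ω) (by positivity)
  have hv0 : ∀ k : ℕ, 1 ≤ k → 0 ≤ v k := fun k hk =>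
    hu0 (k*m) (Nat.mul_pos hk hm)
  have huF : ∀ n : ℕ, 0 < n → F (cubeN d n) ω = u n * (n:ℝ)^d := by
    intro n hn
    have hn0 : ((n:ℝ))^d ≠ 0 := by positivity
    simp only [hu]
    field_simp
  have hm0 : 0 < m := hm
  have hφ : Tendsto (fun k : ℕ => k * m) atTop atTop :=
    tendsto_atTop_mono (fun k => Nat.le_mul_of_pos_right k hm0) tendsto_id
  have hφ' : Tendsto (fun n : ℕ => n / m) atTop atTop := by
    refine tendsto_atTop.2 fun K => ?_
    filter_upwards [eventually_ge_atTop (K*m)] with n hn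
    exact (Nat.le_div_iff_mul_le hm0).2 hn
  have hbdu : IsBoundedUnder (· ≤ ·) atTop u := hbd
  have hblu : IsBoundedUnder (· ≥ ·) atTop u :=
    isBoundedUnder_of_eventually_ge (a := (0:ℝ))
      (by filter_upwards [eventually_ge_atTop 1] with n hn using hu0 n hn)
  have hbdv : IsBoundedUnder (· ≤ ·) atTop v := by
    obtain ⟨b, hb⟩ := hbdu
    rw [eventually_map] at hb
    exact isBoundedUnder_of_eventually_le (a := b)
      (by filter_upwards [hφ.eventually hb] with k hk using hk)
  have hblv : IsBoundedUnder (· ≥ ·) atTop v :=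
    isBoundedUnder_of_eventually_ge (a := (0:ℝ))
      (by filter_upwards [eventually_ge_atTop 1] with k hk using hv0 k hk)
  have hve : v = u ∘ (fun k : ℕ => k * m) := rfl
  -- easy directions
  have hsup_easy : limsup v atTop ≤ limsup u atTop := by
    rw [hve, Filter.limsup_comp]
    refine limsup_le_limsup_of_le hφ ?_ hbdu
    refine IsBoundedUnder.isCoboundedUnder_le ?_
    rw [IsBoundedUnder, map_map]
    exact hblv
  have hinf_easy : liminf u atTop ≤ liminf v atTop := by
    rw [hve, Filter.liminf_comp]
    refine liminf_le_liminf_of_le hφ hblu ?_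
    refine IsBoundedUnder.isCoboundedUnder_ge ?_
    rw [IsBoundedUnder, map_map]
    exact hbdv
  -- hard direction, limsup
  have hsup_hard : limsup u atTop ≤ limsup v atTop := by
    set L := limsup v atTop with hL
    have hL0 : (0:ℝ) ≤ L := by
      refine le_limsup_of_frequently_le ?_ hbdv
      exact ((eventually_ge_atTop 1).mono (fun k hk => hv0 k hk)).frequently
    refine le_of_forall_pos_le_add fun ε hε => ?_
    have hev : ∀ᶠ k in atTop, v k < L + ε/2 :=
      eventually_lt_of_limsup_lt (by linarith) hbdv
    obtain ⟨K, hK⟩ := eventually_atTop.1 hev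
    set w : ℕ → ℝ := fun n => (L + ε/2) * (((n:ℝ) + m)/(n:ℝ))^d
        + (A ω * C) * ((((n:ℝ) + m)/(n:ℝ))^(d-1) * (1/(n:ℝ))) with hw
    have hrt : Tendsto (fun n : ℕ => ((n:ℝ) + m)/(n:ℝ)) atTop (nhds 1) := by
      simpa using tendsto_ratio (m:ℝ) 0
    have hwt : Tendsto w atTop (nhds (L + ε/2)) := by
      have h1 : Tendsto (fun n : ℕ => (L + ε/2) * (((n:ℝ) + m)/(n:ℝ))^d) atTop
          (nhds (L + ε/2)) := by
        simpa using (hrt.pow d).const_mul (L + ε/2)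
      have h2 : Tendsto (fun n : ℕ => (A ω * C) * ((((n:ℝ) + m)/(n:ℝ))^(d-1) * (1/(n:ℝ))))
          atTop (nhds 0) := by
        have := (hrt.pow (d-1)).mul tendsto_one_div_atTop_nhds_zero_nat
        simpa using this.const_mul (A ω * C)
      simpa [hw] using h1.add h2
    have hptw : ∀ᶠ n in atTop, u n ≤ w n := by
      filter_upwards [eventually_ge_atTop (K * m + m + 1)] with n hn
      have hn1 : 1 ≤ n := by omega
      set k := n / m with hk
      have hmod : m * k + n % m = n := Nat.div_add_mod n m
      have hmlt : n % m < m := Nat.mod_lt n hm0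
      have hnN : n < (k+1) * m := by
        calc n = m * k + n % m := hmod.symm
          _ < m * k + m := by omega
          _ = (k+1) * m := by ring
      have hNle : (k+1)*m ≤ n + m := by
        have h := Nat.div_mul_le_self n m
        calc (k+1)*m = n/m*m + m := by rw [hk]; ring
          _ ≤ n + m := by omega
      have hkK : K ≤ k + 1 := by
        have : K ≤ k := (Nat.le_div_iff_mul_le hm0).2 (by omega)
        omega
      set N := (k+1)*m with hN
      have hNpos : 0 < N := Nat.mul_pos (Nat.succ_pos k) hm0
      have hkey := key (show 0 < n by omega) hnN.le
      have hn0R : (0:ℝ) < (n:ℝ) := by exact_mod_cast show 0 < n by omega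
      have hpowR : (0:ℝ) < (n:ℝ)^d := by positivity
      have hNR : ((N:ℕ):ℝ) ≤ (n:ℝ) + m := by exact_mod_cast hNle
      have hNR0 : (0:ℝ) ≤ ((N:ℕ):ℝ) := Nat.cast_nonneg N
      have hvle : v (k+1) ≤ L + ε/2 := (hK (k+1) hkK).le
      have hv0' : 0 ≤ v (k+1) := hv0 (k+1) (Nat.succ_le_succ (Nat.zero_le k))
      have hLε : 0 ≤ L + ε/2 := by linarith
      have hFN : F (cubeN d N) ω = v (k+1) * ((N:ℕ):ℝ)^d := by
        have hNd : (((N:ℕ):ℝ))^d ≠ 0 := by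
          have : (0:ℝ) < ((N:ℕ):ℝ) := by exact_mod_cast hNpos
          positivity
        simp only [hv, ← hN]
        field_simp
      have step1 : u n ≤ (F (cubeN d N) ω + A ω * (C * ((N:ℕ):ℝ)^(d-1)))/(n:ℝ)^d := by
        simp only [hu]
        exact div_le_div_of_nonneg_right hkey hpowR.le
      have step2 : (F (cubeN d N) ω + A ω * (C * ((N:ℕ):ℝ)^(d-1)))/(n:ℝ)^d
          ≤ ((L + ε/2) * ((n:ℝ)+m)^d + A ω * (C * ((n:ℝ)+m)^(d-1)))/(n:ℝ)^d := by
        apply div_le_div_of_nonneg_right ?_ hpowR.le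
        have e1 : F (cubeN d N) ω ≤ (L + ε/2) * ((n:ℝ)+m)^d := by
          rw [hFN]
          exact mul_le_mul hvle (pow_le_pow_left₀ hNR0 hNR d) (by positivity) hLε
        have e2 : A ω * (C * ((N:ℕ):ℝ)^(d-1)) ≤ A ω * (C * ((n:ℝ)+m)^(d-1)) :=
          mul_le_mul_of_nonneg_left
            (mul_le_mul_of_nonneg_left (pow_le_pow_left₀ hNR0 hNR _) hC0) hA
        linarith
      have step3 : ((L + ε/2) * ((n:ℝ)+m)^d + A ω * (C * ((n:ℝ)+m)^(d-1)))/(n:ℝ)^d = w n := by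
        obtain ⟨e, he⟩ : ∃ e, d = e + 1 := ⟨d - 1, (Nat.succ_pred_eq_of_pos hd).symm⟩
        simp only [hw, he, Nat.add_sub_cancel]
        rw [div_pow, div_pow]
        field_simp
        ring
      calc u n ≤ _ := step1
        _ ≤ _ := step2
        _ = w n := step3
    have hfin : limsup u atTop ≤ L + ε/2 := by
      have h := limsup_le_limsup hptw hblu.isCoboundedUnder_le hwt.isBoundedUnder_le
      rwa [hwt.limsup_eq] at h
    linarith
  -- hard direction, liminf
  have hinf_hard : liminf v atTop ≤ liminf u atTop := by
    set l := liminf u atTop with hl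
    have hl0 : (0:ℝ) ≤ l := by
      refine le_liminf_of_le hbdu.isCoboundedUnder_ge ?_
      filter_upwards [eventually_ge_atTop 1] with n hn using hu0 n hn
    refine le_of_forall_pos_le_add fun ε hε => ?_
    have hfreq : ∃ᶠ n in atTop, u n < l + ε/2 :=
      frequently_lt_of_liminf_lt hbdu.isCoboundedUnder_ge (by linarith)
    set W : ℕ → ℝ := fun n => (l + ε/2) * ((n:ℝ)/((n:ℝ) - m))^d
        + (A ω * C) * (((n:ℝ)/((n:ℝ) - m))^(d-1) * (1/((n:ℝ) - m))) with hW
    have hden : Tendsto (fun n : ℕ => (n:ℝ) - m) atTop atTop := by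
      simpa [sub_eq_add_neg] using
        tendsto_atTop_add_const_right atTop (-(m:ℝ)) tendsto_natCast_atTop_atTop
    have hrt2 : Tendsto (fun n : ℕ => (n:ℝ)/((n:ℝ) - m)) atTop (nhds 1) := by
      simpa [sub_eq_add_neg] using tendsto_ratio 0 (-(m:ℝ))
    have hWt : Tendsto W atTop (nhds (l + ε/2)) := by
      have h1 : Tendsto (fun n : ℕ => (l + ε/2) * ((n:ℝ)/((n:ℝ) - m))^d) atTop
          (nhds (l + ε/2)) := by
        simpa using (hrt2.pow d).const_mul (l + ε/2)
      have h2 : Tendsto (fun n : ℕ => (A ω * C) * (((n:ℝ)/((n:ℝ) - m))^(d-1) * (1/((n:ℝ) - m))))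
          atTop (nhds 0) := by
        have hz : Tendsto (fun n : ℕ => 1/((n:ℝ) - m)) atTop (nhds 0) :=
          Tendsto.div_atTop tendsto_const_nhds hden
        have := (hrt2.pow (d-1)).mul hz
        simpa using this.const_mul (A ω * C)
      simpa [hW] using h1.add h2
    have hWev : ∀ᶠ n in atTop, W n ≤ l + ε := hWt.eventually_le_const (by linarith)
    have hfreq2 : ∃ᶠ n in atTop, v (n/m) ≤ l + ε := by
      refine (hfreq.and_eventually (hWev.and (eventually_ge_atTop (2*m + 1)))).mono ?_
      rintro n ⟨hun, hWn, hn⟩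
      set k := n / m with hk
      have hmod : m * k + n % m = n := Nat.div_add_mod n m
      have hmlt : n % m < m := Nat.mod_lt n hm0
      have hk1 : 1 ≤ k := (Nat.le_div_iff_mul_le hm0).2 (by omega)
      have hkm_pos : 0 < k*m := Nat.mul_pos hk1 hm0
      have hkmn : k*m ≤ n := by
        have := Nat.div_mul_le_self n m
        rw [hk]; exact this
      have hnkm : n < k*m + m := by
        calc n = m * k + n % m := hmod.symm
          _ < m * k + m := by omega
          _ = k*m + m := by ring
      have hkey := key hkm_pos hkmn
      have hxn : (((k*m : ℕ)):ℝ) ≤ (n:ℝ) := by exact_mod_cast hkmn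
      have hxgt : (n:ℝ) - m < ((k*m : ℕ):ℝ) := by
        have : (n:ℝ) < ((k*m:ℕ):ℝ) + m := by exact_mod_cast hnkm
        linarith
      have hnm0 : (0:ℝ) < (n:ℝ) - m := by
        have : (2*m + 1 : ℕ) ≤ n := hn
        have h2 : ((2*m + 1 : ℕ):ℝ) ≤ (n:ℝ) := by exact_mod_cast this
        have hm1 : (1:ℝ) ≤ (m:ℝ) := by exact_mod_cast hm
        push_cast at h2
        linarith
      have hn0R : (0:ℝ) < (n:ℝ) := by
        have : 0 < n := by omega
        exact_mod_cast this
      have hxpos : (0:ℝ) < ((k*m:ℕ):ℝ) := by exact_mod_cast hkm_pos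
      have hnum0 : 0 ≤ F (cubeN d n) ω + A ω * (C * (n:ℝ)^(d-1)) := by
        have := hpos _ (isBoxN_cubeN (show 0 < n by omega)) ω
        positivity
      have hFn : F (cubeN d n) ω = u n * (n:ℝ)^d := huF n (by omega)
      have hunn : u n * (n:ℝ)^d ≤ (l + ε/2) * (n:ℝ)^d :=
        mul_le_mul_of_nonneg_right hun.le (by positivity)
      calc v k = F (cubeN d (k*m)) ω / ((k*m : ℕ):ℝ)^d := by simp only [hv]
        _ ≤ (F (cubeN d n) ω + A ω * (C * (n:ℝ)^(d-1))) / ((k*m : ℕ):ℝ)^d :=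
            div_le_div_of_nonneg_right hkey (by positivity)
        _ ≤ (F (cubeN d n) ω + A ω * (C * (n:ℝ)^(d-1))) / ((n:ℝ) - m)^d := by
            apply div_le_div_of_nonneg_left hnum0 (by positivity)
            exact pow_le_pow_left₀ hnm0.le hxgt.le d
        _ ≤ ((l + ε/2) * (n:ℝ)^d + A ω * (C * (n:ℝ)^(d-1))) / ((n:ℝ) - m)^d := by
            apply div_le_div_of_nonneg_right ?_ (by positivity)
            rw [hFn]; linarith
        _ = W n := by
            obtain ⟨e, he⟩ : ∃ e, d = e + 1 := ⟨d - 1, (Nat.succ_pred_eq_of_pos hd).symm⟩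
            simp only [hW, he, Nat.add_sub_cancel]
            rw [div_pow, div_pow]
            field_simp
            ring
        _ ≤ l + ε := hWn
    have hfreq3 : ∃ᶠ k in atTop, v k ≤ l + ε := hφ'.frequently hfreq2
    exact liminf_le_of_frequently_le hfreq3 hblv
  exact ⟨le_antisymm hsup_easy hsup_hard, le_antisymm hinf_hard hinf_easy⟩
end

section
/- Let F be a nonnegative almost superadditive process and suppose (τ_u) is ergodic. Then the almost-sure limit f(ω) = lim_n (1/|S_n|) F_{S_n}(ω) is shift-invariant: f ∘ τ_u = f almost surely for every u ∈ Z_+^d, and hence f is almost surely constant. -/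
open MeasureTheory Filter

lemma image_add_cube {d : ℕ} (u : Fin d → ℕ) (n : ℕ) :
    (Fintype.piFinset fun _ : Fin d => Finset.range n).image (fun x => u + x)
      = Fintype.piFinset fun i => Finset.Ico (u i) (u i + n) := by
  ext y
  simp only [Finset.mem_image, Fintype.mem_piFinset, Finset.mem_range, Finset.mem_Ico]
  constructor
  · rintro ⟨x, hx, rfl⟩ i
    have := hx i
    simp only [Pi.add_apply]
    omega
  · intro h
    refine ⟨fun i => y i - u i, fun i => ?_, ?_⟩
    · show y i - u i < n
      have := h i; omega
    · funext i
      have := h i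
      show u i + (y i - u i) = y i
      omega

lemma adjN_iff {d : ℕ} {x y : Fin d → ℕ} (h : adjN x y) :
    ∃ i, (x i = y i + 1 ∨ y i = x i + 1) ∧ ∀ j, j ≠ i → x j = y j := by
  unfold adjN at h
  by_cases hex : ∃ i, x i ≠ y i
  · obtain ⟨i, hi⟩ := hex
    have h1 : 1 ≤ ((x i : ℤ) - y i).natAbs := by omega
    have hsum : ∑ j, ((x j : ℤ) - (y j : ℤ)).natAbs
        = ((x i : ℤ) - y i).natAbs + ∑ j ∈ Finset.univ.erase i, ((x j : ℤ) - (y j : ℤ)).natAbs := by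
      exact (Finset.add_sum_erase _ (fun j => ((x j : ℤ) - (y j : ℤ)).natAbs) (Finset.mem_univ i)).symm
    refine ⟨i, ?_, ?_⟩
    · omega
    · intro j hj
      have hz : ∑ j ∈ Finset.univ.erase i, ((x j : ℤ) - (y j : ℤ)).natAbs = 0 := by omega
      have := Finset.sum_eq_zero_iff.mp hz j (Finset.mem_erase.mpr ⟨hj, Finset.mem_univ j⟩)
      omega
  · push_neg at hex
    exfalso
    have : ∑ j, ((x j : ℤ) - (y j : ℤ)).natAbs = 0 :=
      Finset.sum_eq_zero fun j _ => by rw [hex j]; simp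
    omega

lemma ibd_mem_box {d : ℕ} {a b : Fin d → ℕ} {x : Fin d → ℕ}
    (hx : x ∈ ibdN (Fintype.piFinset fun i => Finset.Ico (a i) (b i))) :
    ∃ i, x i = a i ∨ x i + 1 = b i := by
  classical
  obtain ⟨hxB, y, hy, hadj⟩ := Finset.mem_filter.mp hx
  obtain ⟨i, hi, hoth⟩ := adjN_iff hadj
  refine ⟨i, ?_⟩
  simp only [Fintype.mem_piFinset, Finset.mem_Ico] at hxB hy
  push_neg at hy
  obtain ⟨j, hj⟩ := hy
  by_cases hji : j = i
  · subst hji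
    have := hxB j
    rcases hi with h1 | h1 <;> [skip; skip] <;> omega
  · have := hoth j hji
    have := hxB j
    omega

lemma card_ibd_le_abstract {d N : ℕ} {a b : Fin d → ℕ} (B : Finset (Fin d → ℕ))
    (hsub : B ⊆ Fintype.piFinset fun _ : Fin d => Finset.range N)
    (hmem : ∀ x ∈ ibdN B, ∃ i, x i = a i ∨ x i + 1 = b i) :
    ((ibdN B).card : ℝ) ≤ 2 * d * (N : ℝ) ^ (d - 1) := by
  classical
  have key : ∀ (i : Fin d) (c : ℕ),
      ((B.filter fun x => x i = c)).card ≤ N ^ (d - 1) := by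
    intro i c
    have hsub2 : (B.filter fun x => x i = c) ⊆
        Fintype.piFinset fun j => if j = i then ({c} : Finset ℕ) else Finset.range N := by
      intro x hx
      obtain ⟨hxB, hxc⟩ := Finset.mem_filter.mp hx
      have := Fintype.mem_piFinset.mp (hsub hxB)
      refine Fintype.mem_piFinset.mpr fun j => ?_
      by_cases hj : j = i
      · subst hj; simp [hxc]
      · simp only [if_neg hj]; exact this j
    calc ((B.filter fun x => x i = c)).card
        ≤ (Fintype.piFinset fun j => if j = i then ({c} : Finset ℕ) else Finset.range N).card :=
          Finset.card_le_card hsub2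
      _ = ∏ j, (if j = i then ({c} : Finset ℕ) else Finset.range N).card :=
          Fintype.card_piFinset _
      _ = N ^ (d - 1) := by
          rw [← Finset.mul_prod_erase _ _ (Finset.mem_univ i)]
          simp only [if_pos rfl]
          rw [Finset.prod_congr rfl (fun j hj => by
            rw [if_neg (Finset.mem_erase.mp hj).1]), Finset.prod_const]
          simp [Finset.card_erase_of_mem, Finset.card_range]
  have hsubU : ibdN B ⊆ Finset.univ.biUnion (fun i : Fin d =>
      (B.filter fun x => x i = a i) ∪ (B.filter fun x => x i + 1 = b i)) := by
    intro x hx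
    obtain ⟨i, hi⟩ := hmem x hx
    have hxB : x ∈ B := Finset.mem_of_mem_filter _ hx
    refine Finset.mem_biUnion.mpr ⟨i, Finset.mem_univ i, ?_⟩
    rcases hi with h | h
    · exact Finset.mem_union_left _ (Finset.mem_filter.mpr ⟨hxB, h⟩)
    · exact Finset.mem_union_right _ (Finset.mem_filter.mpr ⟨hxB, h⟩)
  have piece : ∀ i : Fin d,
      ((B.filter fun x => x i = a i) ∪ (B.filter fun x => x i + 1 = b i)).card
        ≤ 2 * N ^ (d - 1) := by
    intro i
    have h3 : (B.filter fun x => x i + 1 = b i) ⊆ (B.filter fun x => x i = b i - 1) := by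
      intro x hx
      simp only [Finset.mem_filter] at hx ⊢
      exact ⟨hx.1, by omega⟩
    have h1 := key i (a i)
    have h2' := le_trans (Finset.card_le_card h3) (key i (b i - 1))
    have h4 := Finset.card_union_le (B.filter fun x => x i = a i)
      (B.filter fun x => x i + 1 = b i)
    refine le_trans h4 (le_trans (Nat.add_le_add h1 h2') ?_)
    rw [two_mul]
  have hcard : (ibdN B).card ≤ ∑ _i : Fin d, 2 * N ^ (d - 1) := by
    calc (ibdN B).card ≤ _ := Finset.card_le_card hsubU
      _ ≤ ∑ i : Fin d, ((B.filter fun x => x i = a i) ∪ (B.filter fun x => x i + 1 = b i)).card :=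
          Finset.card_biUnion_le
      _ ≤ ∑ _i : Fin d, 2 * N ^ (d - 1) := Finset.sum_le_sum fun i _ => piece i
  have : ((ibdN B).card : ℝ) ≤ ((∑ _i : Fin d, 2 * N ^ (d - 1) : ℕ) : ℝ) := by exact_mod_cast hcard
  refine this.trans (le_of_eq ?_)
  rw [Finset.sum_const]
  simp only [Finset.card_univ, Fintype.card_fin, smul_eq_mul]
  push_cast
  ring

lemma card_ibd_le {d N : ℕ} (a b : Fin d → ℕ)
    (hsub : (Fintype.piFinset fun i => Finset.Ico (a i) (b i)) ⊆
      Fintype.piFinset fun _ : Fin d => Finset.range N) :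
    ((ibdN (Fintype.piFinset fun i => Finset.Ico (a i) (b i))).card : ℝ)
      ≤ 2 * d * (N : ℝ) ^ (d - 1) :=
  card_ibd_le_abstract _ hsub (fun _ hx => ibd_mem_box hx)

def boxLo {d : ℕ} (u : Fin d → ℕ) (i : Fin d) (lo : ℕ) : Fin d → ℕ :=
  fun j => if j < i then u j else if j = i then lo else 0

def boxHi {d : ℕ} (u : Fin d → ℕ) (n N : ℕ) (i : Fin d) (hi : ℕ) : Fin d → ℕ :=
  fun j => if j < i then u j + n else if j = i then hi else N

def pieceN {d : ℕ} (u : Fin d → ℕ) (n N : ℕ) (i : Fin d) (lo hi : ℕ) : Finset (Fin d → ℕ) :=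
  Fintype.piFinset fun j => Finset.Ico (boxLo u i lo j) (boxHi u n N i hi j)

lemma mem_pieceN {d : ℕ} {u : Fin d → ℕ} {n N : ℕ} {i : Fin d} {lo hi : ℕ} {x : Fin d → ℕ} :
    x ∈ pieceN u n N i lo hi ↔
      (∀ j, j < i → u j ≤ x j ∧ x j < u j + n) ∧ (lo ≤ x i ∧ x i < hi)
        ∧ (∀ j, i < j → x j < N) := by
  simp only [pieceN, Fintype.mem_piFinset, Finset.mem_Ico]
  constructor
  · intro h
    refine ⟨fun j hj => ?_, ?_, fun j hj => ?_⟩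
    · have := h j
      simp only [boxLo, boxHi, if_pos hj] at this
      exact this
    · have := h i
      simp only [boxLo, boxHi, lt_irrefl, if_neg, if_pos rfl] at this
      simpa using this
    · have := h j
      have h1 : ¬ j < i := Fin.lt_asymm hj
      have h2 : ¬ j = i := Fin.ne_of_gt hj
      simp only [boxLo, boxHi, if_neg h1, if_neg h2] at this
      exact this.2
  · rintro ⟨h1, h2, h3⟩ j
    rcases lt_trichotomy j i with hj | hj | hj
    · simp only [boxLo, boxHi, if_pos hj]
      exact h1 j hj
    · subst hj
      simp only [boxLo, boxHi, lt_irrefl, if_neg, if_pos rfl]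
      simpa using h2
    · have hn1 : ¬ j < i := Fin.lt_asymm hj
      have hn2 : ¬ j = i := Fin.ne_of_gt hj
      simp only [boxLo, boxHi, if_neg hn1, if_neg hn2]
      have := h3 j hj
      omega

lemma pieceN_isBox {d : ℕ} {u : Fin d → ℕ} {n N : ℕ} {i : Fin d} {lo hi : ℕ}
    (hn : 1 ≤ n) (hlh : lo < hi) (hN : 1 ≤ N) : IsBoxN (pieceN u n N i lo hi) := by
  refine ⟨boxLo u i lo, boxHi u n N i hi, fun j => ?_, rfl⟩
  unfold boxLo boxHi
  split_ifs <;> omega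

lemma centralN_isBox {d : ℕ} {u : Fin d → ℕ} {n : ℕ} (hn : 1 ≤ n) :
    IsBoxN (Fintype.piFinset fun j => Finset.Ico (u j) (u j + n)) :=
  ⟨u, fun j => u j + n, fun j => by show u j < u j + n; omega, rfl⟩

/-- The decomposition family indexed by `(Fin d × Bool) ⊕ Unit`. -/
def famN {d : ℕ} (u : Fin d → ℕ) (n N : ℕ) : (Fin d × Bool) ⊕ Unit → Finset (Fin d → ℕ)
  | .inl (i, false) => pieceN u n N i 0 (u i)
  | .inl (i, true) => pieceN u n N i (u i + n) N
  | .inr _ => Fintype.piFinset fun j => Finset.Ico (u j) (u j + n)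

lemma piece_disj_central {d : ℕ} {u : Fin d → ℕ} {n N : ℕ} {i : Fin d} {lo hi : ℕ}
    (hside : hi ≤ u i ∨ u i + n ≤ lo) :
    Disjoint (pieceN u n N i lo hi) (Fintype.piFinset fun j => Finset.Ico (u j) (u j + n)) := by
  rw [Finset.disjoint_left]
  intro x hx hx'
  have h1 := (mem_pieceN.mp hx).2.1
  have h2 := Fintype.mem_piFinset.mp hx' i
  rw [Finset.mem_Ico] at h2
  omega

lemma piece_disj_lt {d : ℕ} {u : Fin d → ℕ} {n N : ℕ} {i j : Fin d} {lo hi lo' hi' : ℕ}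
    (hij : i < j) (hside : hi ≤ u i ∨ u i + n ≤ lo) :
    Disjoint (pieceN u n N i lo hi) (pieceN u n N j lo' hi') := by
  rw [Finset.disjoint_left]
  intro x hx hx'
  have h1 := (mem_pieceN.mp hx).2.1
  have h2 := (mem_pieceN.mp hx').1 i hij
  omega

lemma piece_disj_same {d : ℕ} {u : Fin d → ℕ} {n N : ℕ} {i : Fin d} :
    Disjoint (pieceN u n N i 0 (u i)) (pieceN u n N i (u i + n) N) := by
  rw [Finset.disjoint_left]
  intro x hx hx'
  have h1 := (mem_pieceN.mp hx).2.1
  have h2 := (mem_pieceN.mp hx').2.1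
  omega

lemma famN_disjoint {d : ℕ} (u : Fin d → ℕ) (n N : ℕ) :
    ∀ p q, p ≠ q → Disjoint (famN u n N p) (famN u n N q) := by
  have key : ∀ (i j : Fin d) (s t : Bool), i < j →
      Disjoint (famN u n N (.inl (i, s))) (famN u n N (.inl (j, t))) := by
    intro i j s t hij
    cases s <;> cases t <;> simp only [famN]
    · exact piece_disj_lt (u := u) (n := n) (N := N) hij (Or.inl le_rfl)
    · exact piece_disj_lt (u := u) (n := n) (N := N) hij (Or.inl le_rfl)
    · exact piece_disj_lt (u := u) (n := n) (N := N) hij (Or.inr le_rfl)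
    · exact piece_disj_lt (u := u) (n := n) (N := N) hij (Or.inr le_rfl)
  have keyc : ∀ (i : Fin d) (s : Bool),
      Disjoint (famN u n N (.inl (i, s))) (famN u n N (.inr ())) := by
    intro i s
    cases s <;> simp only [famN]
    · exact piece_disj_central (u := u) (n := n) (N := N) (Or.inl le_rfl)
    · exact piece_disj_central (u := u) (n := n) (N := N) (Or.inr le_rfl)
  rintro (⟨i, s⟩ | ⟨⟩) (⟨j, t⟩ | ⟨⟩) hne
  · rcases lt_trichotomy i j with hij | hij | hij
    · exact key i j s t hij
    · subst hij
      have hst : s ≠ t := fun h => hne (by rw [h])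
      cases s <;> cases t <;> simp only [famN]
      · exact absurd rfl hst
      · exact piece_disj_same (u := u) (n := n) (N := N)
      · exact (piece_disj_same (u := u) (n := n) (N := N)).symm
      · exact absurd rfl hst
    · exact (key j i t s hij).symm
  · exact keyc i s
  · exact (keyc j t).symm
  · exact absurd rfl hne

lemma cubeN_eq_Ico (d N : ℕ) :
    cubeN d N = Fintype.piFinset fun _ : Fin d => Finset.Ico 0 N := by
  unfold cubeN
  congr 1
  funext _
  rw [Finset.range_eq_Ico]

lemma cubeN_isBox_s6 {d : ℕ} {N : ℕ} (hN : 1 ≤ N) : IsBoxN (cubeN d N) :=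
  ⟨0, fun _ => N, fun _ => hN, by rw [cubeN_eq_Ico]; rfl⟩

lemma famN_union {d : ℕ} {u : Fin d → ℕ} {n N : ℕ}
    (hNbig : ∀ j, u j + n ≤ N) :
    Finset.univ.biUnion (famN u n N) = cubeN d N := by
  classical
  ext x
  simp only [Finset.mem_biUnion, Finset.mem_univ, true_and, cubeN, Fintype.mem_piFinset,
    Finset.mem_range]
  constructor
  · rintro ⟨p, hp⟩ j
    rcases p with ⟨i, s⟩ | ⟨⟩
    · cases s <;> simp only [famN] at hp <;> obtain ⟨h1, h2, h3⟩ := mem_pieceN.mp hp <;>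
        rcases lt_trichotomy j i with hj | hj | hj
      · have := h1 j hj; have := hNbig j; omega
      · subst hj; have := hNbig j; omega
      · exact h3 j hj
      · have := h1 j hj; have := hNbig j; omega
      · subst hj; omega
      · exact h3 j hj
    · simp only [famN, Fintype.mem_piFinset, Finset.mem_Ico] at hp
      have := hp j; have := hNbig j; omega
  · intro hx
    by_cases hall : ∀ j, u j ≤ x j ∧ x j < u j + n
    · refine ⟨.inr (), ?_⟩
      simp only [famN, Fintype.mem_piFinset, Finset.mem_Ico]
      exact hall
    · push_neg at hall
      set bad := Finset.univ.filter (fun j => ¬(u j ≤ x j ∧ x j < u j + n)) with hbad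
      have hbadne : bad.Nonempty := by
        obtain ⟨j, hj⟩ := hall
        refine ⟨j, Finset.mem_filter.mpr ⟨Finset.mem_univ j, ?_⟩⟩
        intro h
        have := hj h.1
        omega
      set i := bad.min' hbadne with hi
      have himem : i ∈ bad := Finset.min'_mem _ _
      have hibad : ¬(u i ≤ x i ∧ x i < u i + n) := (Finset.mem_filter.mp himem).2
      have hgood : ∀ j, j < i → u j ≤ x j ∧ x j < u j + n := by
        intro j hj
        by_contra hcon
        have : j ∈ bad := Finset.mem_filter.mpr ⟨Finset.mem_univ j, hcon⟩
        exact absurd (Finset.min'_le _ _ this) (not_le.mpr hj)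
      by_cases hlow : x i < u i
      · refine ⟨.inl (i, false), ?_⟩
        simp only [famN]
        exact mem_pieceN.mpr ⟨hgood, ⟨Nat.zero_le _, hlow⟩, fun j _ => hx j⟩
      · refine ⟨.inl (i, true), ?_⟩
        simp only [famN]
        refine mem_pieceN.mpr ⟨hgood, ⟨?_, hx i⟩, fun j _ => hx j⟩
        omega

lemma superadd_fintype {d : ℕ} {Ω : Type*} [MeasurableSpace Ω] {μ : Measure Ω}
    {τ : (Fin d → ℕ) → Ω → Ω} {F : Finset (Fin d → ℕ) → Ω → ℝ} {A : Ω → ℝ}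
    (hF : AlmostSuperadditive μ τ F A) {ι : Type*} [Fintype ι] [DecidableEq ι]
    (Bs : ι → Finset (Fin d → ℕ))
    (hbox : ∀ i, IsBoxN (Bs i))
    (hdisj : ∀ i j, i ≠ j → Disjoint (Bs i) (Bs j))
    (hU : IsBoxN (Finset.univ.biUnion Bs)) (ω : Ω) :
    (∑ i, F (Bs i) ω) - A ω * (∑ i, ((ibdN (Bs i)).card : ℝ))
      ≤ F (Finset.univ.biUnion Bs) ω := by
  classical
  let e := Fintype.equivFin ι
  have hUeq : Finset.univ.biUnion (fun k => Bs (e.symm k)) = Finset.univ.biUnion Bs := by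
    ext x
    simp only [Finset.mem_biUnion, Finset.mem_univ, true_and]
    constructor
    · rintro ⟨k, hk⟩; exact ⟨e.symm k, hk⟩
    · rintro ⟨i, hi⟩; exact ⟨e i, by simpa using hi⟩
  have h := hF.superadd (Fintype.card ι) (fun k => Bs (e.symm k))
    (fun k => hbox _) (fun k l hkl => hdisj _ _ (fun h => hkl (by simpa using congrArg e h)))
    (hUeq ▸ hU) ω
  rw [hUeq] at h
  have h1 : ∑ k, F (Bs (e.symm k)) ω = ∑ i, F (Bs i) ω :=
    Equiv.sum_comp e.symm (fun i => F (Bs i) ω)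
  have h2 : ∑ k, ((ibdN (Bs (e.symm k))).card : ℝ) = ∑ i, ((ibdN (Bs i)).card : ℝ) :=
    Equiv.sum_comp e.symm (fun i => ((ibdN (Bs i)).card : ℝ))
  rw [h1, h2] at h
  exact h

lemma key_ineq {d : ℕ} {Ω : Type*} [MeasurableSpace Ω] {μ : Measure Ω}
    {τ : (Fin d → ℕ) → Ω → Ω} {F : Finset (Fin d → ℕ) → Ω → ℝ} {A : Ω → ℝ}
    (hF : AlmostSuperadditive μ τ F A)
    (hpos : ∀ B, IsBoxN B → ∀ ω, 0 ≤ F B ω)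
    (u : Fin d → ℕ) (n N : ℕ) (hu : ∀ i, 1 ≤ u i) (hn : 1 ≤ n) (hN1 : 1 ≤ N)
    (hNbig : ∀ i, u i + n < N) (ω : Ω) :
    F (Fintype.piFinset fun i => Finset.Ico (u i) (u i + n)) ω
      ≤ F (cubeN d N) ω + A ω * ((2 * d + 1) * (2 * d * (N : ℝ) ^ (d - 1))) := by
  classical
  have hboxes : ∀ p, IsBoxN (famN u n N p) := by
    rintro (⟨i, s⟩ | ⟨⟩)
    · cases s
      · exact pieceN_isBox hn (hu i) hN1
      · exact pieceN_isBox hn (hNbig i) hN1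
    · exact centralN_isBox hn
  have hUnion : Finset.univ.biUnion (famN u n N) = cubeN d N :=
    famN_union (fun j => (hNbig j).le)
  have hsup := superadd_fintype hF (famN u n N) hboxes (famN_disjoint u n N)
    (by rw [hUnion]; exact cubeN_isBox_s6 hN1) ω
  rw [hUnion] at hsup
  have hsingle : F (Fintype.piFinset fun i => Finset.Ico (u i) (u i + n)) ω
      ≤ ∑ p, F (famN u n N p) ω := by
    have := Finset.single_le_sum (f := fun p => F (famN u n N p) ω)
      (fun p _ => hpos _ (hboxes p) ω) (Finset.mem_univ (Sum.inr () : (Fin d × Bool) ⊕ Unit))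
    simpa [famN] using this
  have hsubcube : ∀ p, famN u n N p ⊆ Fintype.piFinset fun _ : Fin d => Finset.range N := by
    intro p
    have : famN u n N p ⊆ Finset.univ.biUnion (famN u n N) :=
      Finset.subset_biUnion_of_mem _ (Finset.mem_univ p)
    rw [hUnion] at this
    exact this
  have hcard : ∀ p, ((ibdN (famN u n N p)).card : ℝ) ≤ 2 * d * (N : ℝ) ^ (d - 1) := by
    rintro (⟨i, s⟩ | ⟨⟩)
    · cases s
      · exact card_ibd_le _ _ (hsubcube (.inl (i, false)))
      · exact card_ibd_le _ _ (hsubcube (.inl (i, true)))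
    · exact card_ibd_le u (fun j => u j + n) (hsubcube (.inr ()))
  have hcardsum : ∑ p, ((ibdN (famN u n N p)).card : ℝ)
      ≤ (2 * d + 1) * (2 * d * (N : ℝ) ^ (d - 1)) := by
    calc ∑ p, ((ibdN (famN u n N p)).card : ℝ)
        ≤ ∑ _p : (Fin d × Bool) ⊕ Unit, 2 * d * (N : ℝ) ^ (d - 1) :=
          Finset.sum_le_sum fun p _ => hcard p
      _ = (2 * d + 1) * (2 * d * (N : ℝ) ^ (d - 1)) := by
          rw [Finset.sum_const]
          simp only [Finset.card_univ, Fintype.card_sum, Fintype.card_prod, Fintype.card_fin,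
            Fintype.card_bool, Fintype.card_unit, nsmul_eq_mul]
          push_cast
          ring
  have hA := hF.Anonneg ω
  have hAmul : A ω * (∑ p, ((ibdN (famN u n N p)).card : ℝ))
      ≤ A ω * ((2 * d + 1) * (2 * d * (N : ℝ) ^ (d - 1))) :=
    mul_le_mul_of_nonneg_left hcardsum hA
  linarith

lemma tendsto_ratio_pow (m d : ℕ) :
    Tendsto (fun n : ℕ => ((n : ℝ) + m) ^ d / (n : ℝ) ^ d) atTop (nhds 1) := by
  have h0 : Tendsto (fun n : ℕ => ((n : ℝ) + m) / (n : ℝ)) atTop (nhds 1) := by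
    have h1 : Tendsto (fun n : ℕ => 1 + (m : ℝ) / n) atTop (nhds 1) := by
      have := tendsto_const_div_atTop_nhds_zero_nat (m : ℝ)
      simpa using (tendsto_const_nhds (x := (1:ℝ)) (f := atTop)).add this
    refine h1.congr' ?_
    filter_upwards [eventually_ge_atTop 1] with n hn
    have hne : (n : ℝ) ≠ 0 := by positivity
    field_simp
  have := h0.pow d
  rw [one_pow] at this
  refine this.congr fun n => ?_
  rw [div_pow]

lemma tendsto_bd (d m : ℕ) :
    Tendsto (fun n : ℕ => ((2 * d + 1 : ℝ) * (2 * d * ((n : ℝ) + m) ^ (d - 1))) / (n : ℝ) ^ d)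
      atTop (nhds 0) := by
  rcases d with _ | d'
  · simpa using tendsto_const_nhds (x := (0:ℝ)) (f := atTop)
  · have h1 : Tendsto (fun n : ℕ =>
        ((2 * (d' + 1) + 1 : ℝ) * (2 * (d' + 1))) * (((n : ℝ) + m) ^ d' / (n : ℝ) ^ d')
          * ((1 : ℝ) / n)) atTop (nhds 0) := by
      have := ((tendsto_ratio_pow m d').const_mul ((2 * (d' + 1) + 1 : ℝ) * (2 * (d' + 1)))).mul
        tendsto_one_div_atTop_nhds_zero_nat
      simpa using this
    refine h1.congr' ?_
    filter_upwards [eventually_ge_atTop 1] with n hn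
    have hne : (n : ℝ) ≠ 0 := by positivity
    have : ((n : ℝ)) ^ (d' + 1) = (n : ℝ) ^ d' * n := by ring
    simp only [Nat.add_sub_cancel]
    rw [this]
    field_simp
    push_cast
    ring


lemma ae_shift_le {d : ℕ} {Ω : Type*} [MeasurableSpace Ω] {μ : Measure Ω}
    {τ : (Fin d → ℕ) → Ω → Ω} {F : Finset (Fin d → ℕ) → Ω → ℝ} {A : Ω → ℝ}
    (hF : AlmostSuperadditive μ τ F A)
    (hpos : ∀ B, IsBoxN B → ∀ ω, 0 ≤ F B ω)
    {f : Ω → ℝ}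
    (hf : ∀ᵐ ω ∂μ, Tendsto (fun n => F (cubeN d n) ω / (n : ℝ) ^ d) atTop (nhds (f ω)))
    (u : Fin d → ℕ) (hu : ∀ i, 1 ≤ u i) :
    ∀ᵐ ω ∂μ, f (τ u ω) ≤ f ω := by
  set m := (Finset.univ.sup u) + 1 with hm
  have hum : ∀ i, u i < m := fun i =>
    Nat.lt_succ_of_le (Finset.le_sup (Finset.mem_univ i))
  have h2 := (hF.meas u).quasiMeasurePreserving.ae hf
  filter_upwards [hf, h2] with ω h1 h2'
  -- the dominating sequence
  have hglim : Tendsto (fun n : ℕ =>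
      F (cubeN d (n + m)) ω / ((n + m : ℕ) : ℝ) ^ d * (((n : ℝ) + m) ^ d / (n : ℝ) ^ d)
        + A ω * (((2 * d + 1 : ℝ) * (2 * d * ((n : ℝ) + m) ^ (d - 1))) / (n : ℝ) ^ d))
      atTop (nhds (f ω)) := by
    have ha : Tendsto (fun n : ℕ => F (cubeN d (n + m)) ω / ((n + m : ℕ) : ℝ) ^ d) atTop
        (nhds (f ω)) := h1.comp (tendsto_add_atTop_nat m)
    have hb := ha.mul (tendsto_ratio_pow m d)
    have hc := (tendsto_bd d m).const_mul (A ω)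
    have := hb.add hc
    simpa using this
  have hev : ∀ᶠ n : ℕ in atTop, F (cubeN d n) (τ u ω) / (n : ℝ) ^ d ≤
      F (cubeN d (n + m)) ω / ((n + m : ℕ) : ℝ) ^ d * (((n : ℝ) + m) ^ d / (n : ℝ) ^ d)
        + A ω * (((2 * d + 1 : ℝ) * (2 * d * ((n : ℝ) + m) ^ (d - 1))) / (n : ℝ) ^ d) := by
    filter_upwards [eventually_ge_atTop 1] with n hn
    have hbox : IsBoxN (cubeN d n) := cubeN_isBox_s6 hn
    have hshift : F (cubeN d n) (τ u ω)
        = F (Fintype.piFinset fun i => Finset.Ico (u i) (u i + n)) ω := by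
      have := hF.shift u (cubeN d n) hbox
      have h3 : (cubeN d n).image (fun x => u + x)
          = Fintype.piFinset fun i => Finset.Ico (u i) (u i + n) := image_add_cube u n
      rw [h3] at this
      rw [this]
      rfl
    have hkey := key_ineq hF hpos u n (n + m) hu hn (by omega) (fun i => by have := hum i; omega) ω
    rw [hshift]
    have hNcast : ((n + m : ℕ) : ℝ) = (n : ℝ) + m := by push_cast; ring
    have hnpos : (0 : ℝ) < (n : ℝ) ^ d := by
      have : (0:ℝ) < (n:ℝ) := by exact_mod_cast hn
      positivity
    have hNpos : (0 : ℝ) < ((n + m : ℕ) : ℝ) ^ d := by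
      have : (0:ℝ) < ((n + m : ℕ):ℝ) := by
        have : 1 ≤ n + m := by omega
        exact_mod_cast Nat.lt_of_lt_of_le Nat.zero_lt_one this
      positivity
    rw [div_le_iff₀ hnpos]
    have expand : (F (cubeN d (n + m)) ω / ((n + m : ℕ) : ℝ) ^ d * (((n : ℝ) + m) ^ d / (n : ℝ) ^ d)
        + A ω * (((2 * d + 1 : ℝ) * (2 * d * ((n : ℝ) + m) ^ (d - 1))) / (n : ℝ) ^ d)) * (n:ℝ) ^ d
        = F (cubeN d (n + m)) ω + A ω * ((2 * d + 1 : ℝ) * (2 * d * ((n : ℝ) + m) ^ (d - 1))) := by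
      field_simp [hNcast]
      rw [hNcast]
      try ring
    rw [expand]
    calc F (Fintype.piFinset fun i => Finset.Ico (u i) (u i + n)) ω
        ≤ F (cubeN d (n + m)) ω + A ω * ((2 * d + 1 : ℝ) * (2 * d * (((n + m : ℕ)) : ℝ) ^ (d - 1))) := hkey
      _ = F (cubeN d (n + m)) ω + A ω * ((2 * d + 1 : ℝ) * (2 * d * ((n : ℝ) + m) ^ (d - 1))) := by
          rw [hNcast]
  exact le_of_tendsto_of_tendsto h2' hglim hev

lemma const_of_levels {Ω : Type*} [MeasurableSpace Ω] {μ : Measure Ω} [IsProbabilityMeasure μ]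
    {g : Ω → ℝ} (hgm : Measurable g)
    (hlev : ∀ t : ℝ, μ {ω | t < g ω} = 0 ∨ μ {ω | t < g ω} = 1) :
    ∃ c : ℝ, ∀ᵐ ω ∂μ, g ω = c := by
  classical
  set S := {t : ℝ | μ {ω | t < g ω} = 1} with hS
  have hmeas : ∀ t : ℝ, MeasurableSet {ω | t < g ω} := fun t =>
    measurableSet_lt measurable_const hgm
  have hSne : S.Nonempty := by
    by_contra hne
    have hzero : ∀ t : ℝ, μ {ω | t < g ω} = 0 := by
      intro t
      rcases hlev t with h | h
      · exact h
      · exfalso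
        exact hne ⟨t, h⟩
    have hU : (⋃ k : ℕ, {ω | -(k : ℝ) < g ω}) = Set.univ := by
      ext ω
      simp only [Set.mem_iUnion, Set.mem_setOf_eq, Set.mem_univ, iff_true]
      obtain ⟨k, hk⟩ := exists_nat_gt (-g ω)
      exact ⟨k, by linarith⟩
    have := measure_iUnion_null (μ := μ) fun k : ℕ => hzero (-(k : ℝ))
    rw [hU, measure_univ] at this
    exact one_ne_zero this
  have hSbdd : BddAbove S := by
    have hex : ∃ k : ℕ, μ {ω | (k : ℝ) < g ω} = 0 := by
      by_contra hne
      push_neg at hne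
      have hone : ∀ k : ℕ, μ {ω | (k : ℝ) < g ω} = 1 := fun k =>
        (hlev k).resolve_left (hne k)
      have hcompl : ∀ k : ℕ, μ ({ω | (k : ℝ) < g ω}ᶜ) = 0 := by
        intro k
        rw [measure_compl (hmeas _) (measure_ne_top μ _), hone k, measure_univ, tsub_self]
      have hU : (⋃ k : ℕ, ({ω | (k : ℝ) < g ω}ᶜ)) = Set.univ := by
        ext ω
        simp only [Set.mem_iUnion, Set.mem_compl_iff, Set.mem_setOf_eq, Set.mem_univ, iff_true,
          not_lt]
        obtain ⟨k, hk⟩ := exists_nat_ge (g ω)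
        exact ⟨k, hk⟩
      have := measure_iUnion_null (μ := μ) hcompl
      rw [hU, measure_univ] at this
      exact one_ne_zero this
    obtain ⟨k, hk⟩ := hex
    refine ⟨k, fun t ht => ?_⟩
    by_contra hlt
    push_neg at hlt
    have hsub : {ω | t < g ω} ⊆ {ω | (k : ℝ) < g ω} := fun ω hω => lt_trans hlt hω
    have : μ {ω | t < g ω} = 0 := measure_mono_null hsub hk
    rw [hS] at ht
    simp only [Set.mem_setOf_eq] at ht
    rw [ht] at this
    exact one_ne_zero this
  set c := sSup S with hc
  have hupper : μ {ω | c < g ω} = 0 := by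
    have hU : {ω | c < g ω} = ⋃ k : ℕ, {ω | c + 1 / (k + 1) < g ω} := by
      ext ω
      simp only [Set.mem_setOf_eq, Set.mem_iUnion]
      constructor
      · intro h
        obtain ⟨k, hk⟩ := exists_nat_one_div_lt (show (0:ℝ) < g ω - c by linarith)
        exact ⟨k, by push_cast at hk ⊢; linarith⟩
      · rintro ⟨k, hk⟩
        have : (0:ℝ) < 1 / ((k:ℝ) + 1) := by positivity
        linarith
    rw [hU]
    refine measure_iUnion_null fun k => ?_
    have hnot : (c + 1 / ((k:ℝ) + 1)) ∉ S := by
      intro hmem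
      have := le_csSup hSbdd hmem
      have hpos : (0:ℝ) < 1 / ((k:ℝ) + 1) := by positivity
      rw [← hc] at this
      linarith
    rcases hlev (c + 1 / ((k:ℝ) + 1)) with h | h
    · exact h
    · exact absurd h hnot
  have hlower : μ {ω | g ω < c} = 0 := by
    have hU : {ω | g ω < c} = ⋃ k : ℕ, {ω | g ω ≤ c - 1 / (k + 1)} := by
      ext ω
      simp only [Set.mem_setOf_eq, Set.mem_iUnion]
      constructor
      · intro h
        obtain ⟨k, hk⟩ := exists_nat_one_div_lt (show (0:ℝ) < c - g ω by linarith)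
        exact ⟨k, by push_cast at hk ⊢; linarith⟩
      · rintro ⟨k, hk⟩
        have : (0:ℝ) < 1 / ((k:ℝ) + 1) := by positivity
        linarith
    rw [hU]
    refine measure_iUnion_null fun k => ?_
    have hlt : c - 1 / ((k:ℝ) + 1) < c := by
      have : (0:ℝ) < 1 / ((k:ℝ) + 1) := by positivity
      linarith
    obtain ⟨t', ht'S, ht'⟩ := exists_lt_of_lt_csSup hSne (hc ▸ hlt)
    have h1 : μ {ω | t' < g ω} = 1 := ht'S
    have hsub : {ω | g ω ≤ c - 1 / ((k:ℝ) + 1)} ⊆ {ω | t' < g ω}ᶜ := by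
      intro ω hω
      simp only [Set.mem_compl_iff, Set.mem_setOf_eq, not_lt]
      simp only [Set.mem_setOf_eq] at hω
      linarith
    refine measure_mono_null hsub ?_
    rw [measure_compl (hmeas _) (measure_ne_top μ _), h1, measure_univ, tsub_self]
  refine ⟨c, ?_⟩
  have : μ ({ω | c < g ω} ∪ {ω | g ω < c}) = 0 :=
    measure_union_null hupper hlower
  rw [MeasureTheory.ae_iff]
  refine measure_mono_null (fun ω hω => ?_) this
  simp only [Set.mem_setOf_eq] at hω
  rcases lt_or_gt_of_ne hω with h | h
  · exact Or.inr h
  · exact Or.inl h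


lemma level_zero_one {d : ℕ} {Ω : Type*} [MeasurableSpace Ω] {μ : Measure Ω}
    [IsProbabilityMeasure μ]
    {τ : (Fin d → ℕ) → Ω → Ω} {F : Finset (Fin d → ℕ) → Ω → ℝ} {A : Ω → ℝ}
    (hF : AlmostSuperadditive μ τ F A)
    (herg : ∀ s : Set Ω, MeasurableSet s → (∀ u, (τ u) ⁻¹' s = s) → μ s = 0 ∨ μ s = 1)
    {g : Ω → ℝ} (hgm : Measurable g)
    (hdec : ∀ u : Fin d → ℕ, (∀ i, 1 ≤ u i) → ∀ᵐ ω ∂μ, g (τ u ω) ≤ g ω)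
    (t : ℝ) : μ {ω | t < g ω} = 0 ∨ μ {ω | t < g ω} = 1 := by
  classical
  set s := {ω | t < g ω} with hsdef
  have hs : MeasurableSet s := measurableSet_lt measurable_const hgm
  have h1 : ∀ u : Fin d → ℕ, (∀ i, 1 ≤ u i) → μ (τ u ⁻¹' s \ s) = 0 := by
    intro u hu
    have hae := hdec u hu
    rw [MeasureTheory.ae_iff] at hae
    refine measure_mono_null (fun ω hω => ?_) hae
    obtain ⟨hω1, hω2⟩ := hω
    simp only [Set.mem_preimage, hsdef, Set.mem_setOf_eq] at hω1 hω2 ⊢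
    push_neg
    simp only [not_lt] at hω2
    linarith
  have h2 : ∀ u : Fin d → ℕ, (∀ i, 1 ≤ u i) → μ (s \ τ u ⁻¹' s) = 0 := by
    intro u hu
    have hpre : μ (τ u ⁻¹' s) = μ s := (hF.meas u).measure_preimage hs.nullMeasurableSet
    have e1 : μ (τ u ⁻¹' s ∩ s) + μ (τ u ⁻¹' s \ s) = μ (τ u ⁻¹' s) :=
      measure_inter_add_diff _ hs
    have e2 : μ (s ∩ τ u ⁻¹' s) + μ (s \ τ u ⁻¹' s) = μ s :=
      measure_inter_add_diff _ (hs.preimage (hF.meas u).measurable)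
    rw [h1 u hu, add_zero] at e1
    rw [Set.inter_comm] at e2
    rw [e1, hpre] at e2
    have hne : μ s ≠ ⊤ := measure_ne_top μ s
    nth_rewrite 2 [← add_zero (μ s)] at e2
    exact (ENNReal.add_right_inj hne).mp e2
  have haeeq : ∀ u : Fin d → ℕ, (∀ i, 1 ≤ u i) → τ u ⁻¹' s =ᵐ[μ] s := by
    intro u hu
    rw [MeasureTheory.ae_eq_set]
    exact ⟨h1 u hu, h2 u hu⟩
  set Sinv := ⋂ n : ℕ, ⋃ v : Fin d → ℕ, ⋃ (_ : ∀ i, n + 1 ≤ v i), τ v ⁻¹' s with hSinvdef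
  have hSmeas : MeasurableSet Sinv :=
    MeasurableSet.iInter fun n => MeasurableSet.iUnion fun v => MeasurableSet.iUnion fun _ =>
      hs.preimage (hF.meas v).measurable
  have hSinv : ∀ u, τ u ⁻¹' Sinv = Sinv := by
    intro u
    ext ω
    simp only [hSinvdef, Set.mem_preimage, Set.mem_iInter, Set.mem_iUnion]
    constructor
    · intro h n
      obtain ⟨v, hv, hmem⟩ := h n
      refine ⟨v + u, fun i => le_trans (hv i) (by simp), ?_⟩
      rw [hF.semigroup v u]
      exact hmem
    · intro h n
      obtain ⟨w, hw, hmem⟩ := h (n + Finset.univ.sup u)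
      have hwu : ∀ i, u i ≤ w i := by
        intro i
        have h3 := hw i
        have h4 : u i ≤ Finset.univ.sup u := Finset.le_sup (Finset.mem_univ i)
        omega
      refine ⟨w - u, fun i => ?_, ?_⟩
      · have h3 := hw i
        have h4 : u i ≤ Finset.univ.sup u := Finset.le_sup (Finset.mem_univ i)
        have h5 : (w - u) i = w i - u i := rfl
        omega
      · have heq : (w - u) + u = w := by
          funext i
          have := hwu i
          show (w i - u i) + u i = w i
          omega
        show (τ (w - u) ∘ τ u) ω ∈ s
        rw [← hF.semigroup (w - u) u, heq]
        exact hmem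
  have hUae : ∀ n : ℕ, (⋃ v : Fin d → ℕ, ⋃ (_ : ∀ i, n + 1 ≤ v i), τ v ⁻¹' s) =ᵐ[μ] s := by
    intro n
    rw [MeasureTheory.ae_eq_set]
    constructor
    · refine measure_mono_null (t := ⋃ v : Fin d → ℕ, ⋃ (_ : ∀ i, n + 1 ≤ v i), (τ v ⁻¹' s \ s))
        (fun ω hω => ?_) ?_
      · obtain ⟨hω1, hω2⟩ := hω
        simp only [Set.mem_iUnion] at hω1 ⊢
        obtain ⟨v, hv, hmem⟩ := hω1
        exact ⟨v, hv, hmem, hω2⟩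
      · refine measure_iUnion_null fun v => ?_
        by_cases hv : ∀ i, n + 1 ≤ v i
        · refine measure_mono_null (Set.iUnion_subset fun _ => subset_rfl) ?_
          exact h1 v (fun i => by have := hv i; omega)
        · have hv' : ¬∀ i, n < v i := fun h => hv fun i => h i
          simp [hv']
    · have hsub : s \ (⋃ v : Fin d → ℕ, ⋃ (_ : ∀ i, n + 1 ≤ v i), τ v ⁻¹' s)
          ⊆ s \ τ (fun _ => n + 1) ⁻¹' s := by
        refine Set.diff_subset_diff_right ?_
        refine Set.subset_iUnion_of_subset (fun _ => n + 1) ?_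
        exact Set.subset_iUnion_of_subset (fun i => le_refl _) subset_rfl
      exact measure_mono_null hsub (h2 _ (fun i => by omega))
  have hSae : Sinv =ᵐ[μ] s := by
    rw [MeasureTheory.ae_eq_set]
    constructor
    · refine measure_mono_null (t := (⋃ v : Fin d → ℕ, ⋃ (_ : ∀ i, 0 + 1 ≤ v i), τ v ⁻¹' s) \ s)
        (fun ω hω => ?_) ?_
      · exact ⟨Set.mem_iInter.mp hω.1 0, hω.2⟩
      · exact (MeasureTheory.ae_eq_set.mp (hUae 0)).1
    · have : s \ Sinv ⊆ ⋃ n : ℕ,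
          (s \ (⋃ v : Fin d → ℕ, ⋃ (_ : ∀ i, n + 1 ≤ v i), τ v ⁻¹' s)) := by
        intro ω hω
        obtain ⟨hω1, hω2⟩ := hω
        simp only [hSinvdef, Set.mem_iInter, not_forall] at hω2
        obtain ⟨n, hn⟩ := hω2
        exact Set.mem_iUnion.mpr ⟨n, hω1, hn⟩
      exact measure_mono_null this
        (measure_iUnion_null fun n => (MeasureTheory.ae_eq_set.mp (hUae n)).2)
  have := herg Sinv hSmeas hSinv
  rwa [measure_congr hSae] at this

/-- **Shift invariance of the limit** (Step 4): for a nonnegative almost superadditive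
process with ergodic semigroup `(τ_u)`, the almost-sure limit
`f(ω) = lim_n |S_n|⁻¹ F_{S_n}(ω)` satisfies `f ∘ τ_u = f` a.s. for every `u`,
and hence `f` is almost surely constant. -/
theorem limit_shift_invariant {d : ℕ} {Ω : Type*} [MeasurableSpace Ω] (μ : Measure Ω)
    [IsProbabilityMeasure μ]
    (τ : (Fin d → ℕ) → Ω → Ω) (F : Finset (Fin d → ℕ) → Ω → ℝ) (A : Ω → ℝ)
    (hF : AlmostSuperadditive μ τ F A)
    (hpos : ∀ B, IsBoxN B → ∀ ω, 0 ≤ F B ω)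
    (herg : ∀ s : Set Ω, MeasurableSet s → (∀ u, (τ u) ⁻¹' s = s) → μ s = 0 ∨ μ s = 1)
    (f : Ω → ℝ) (hfm : AEMeasurable f μ)
    (hf : ∀ᵐ ω ∂μ, Filter.Tendsto (fun n => F (cubeN d n) ω / (n : ℝ) ^ d) atTop
      (nhds (f ω))) :
    (∀ u : Fin d → ℕ, ∀ᵐ ω ∂μ, f (τ u ω) = f ω) ∧ (∃ c : ℝ, ∀ᵐ ω ∂μ, f ω = c) := by
  classical
  set g := hfm.mk f with hgdef
  have hgm : Measurable g := hfm.measurable_mk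
  have hg : f =ᵐ[μ] g := hfm.ae_eq_mk
  have hdec : ∀ u : Fin d → ℕ, (∀ i, 1 ≤ u i) → ∀ᵐ ω ∂μ, g (τ u ω) ≤ g ω := by
    intro u hu
    have h1 := ae_shift_le hF hpos hf u hu
    have h2 : ∀ᵐ ω ∂μ, f (τ u ω) = g (τ u ω) :=
      (hF.meas u).quasiMeasurePreserving.ae hg
    filter_upwards [h1, h2, hg] with ω hω1 hω2 hω3
    rw [← hω2]
    have : f ω = g ω := hω3
    rw [← this]
    exact hω1
  have hlev := fun t => level_zero_one hF herg hgm hdec t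
  obtain ⟨c, hc⟩ := const_of_levels hgm hlev
  have hfc : ∀ᵐ ω ∂μ, f ω = c := by
    filter_upwards [hg, hc] with ω h1 h2
    rw [show f ω = g ω from h1, h2]
  refine ⟨?_, ⟨c, hfc⟩⟩
  intro u
  have h2 : ∀ᵐ ω ∂μ, f (τ u ω) = c := (hF.meas u).quasiMeasurePreserving.ae hfc
  filter_upwards [hfc, h2] with ω h3 h4
  rw [h4, h3]
end
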